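/- arXiv:1109.2386 — 10 statements merged into one kernel-verified Lean document; each statement's English description precedes it below -/
import Mathlib

section
/- For positive integers x, y, a, b with b ≤ a and x ≤ y, the sum over m from x to y of C(b,m)/C(a,m) equals [C(a+1-x, a+1-b) - C(a-y, a+1-b)] / C(a,b). -/
lemma tele (f : ℕ → ℚ) (x y : ℕ) (h : x ≤ y) :
    ∑ m ∈ Finset.Icc x y, (f m - f (m + 1)) = f x - f (y + 1) := by
  induction y, h using Nat.le_induction with
  | base => simp
  | succ n hn ih =>
    rw [Finset.sum_Icc_succ_top (by omega), ih]
    ring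

lemma key (a b m : ℕ) (hba : b ≤ a) :
    (Nat.choose b m : ℚ) / (Nat.choose a m : ℚ) =
      ((Nat.choose (a + 1 - m) (a + 1 - b) : ℚ) - (Nat.choose (a - m) (a + 1 - b) : ℚ)) /
        (Nat.choose a b : ℚ) := by
  have hab : (Nat.choose a b : ℚ) ≠ 0 := by
    exact_mod_cast (Nat.choose_pos hba).ne'
  rcases le_or_gt m b with hm | hm
  · have hma : m ≤ a := hm.trans hba
    have h1 : Nat.choose a b * Nat.choose b m = Nat.choose a m * Nat.choose (a - m) (b - m) :=
      Nat.choose_mul hm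
    have h2 : Nat.choose (a - m) (b - m) = Nat.choose (a - m) (a - b) := by
      have : a - b = (a - m) - (b - m) := by omega
      rw [this, Nat.choose_symm (by omega)]
    have h3 : Nat.choose (a + 1 - m) (a + 1 - b) =
        Nat.choose (a - m) (a - b) + Nat.choose (a - m) (a + 1 - b) := by
      have e1 : a + 1 - m = (a - m) + 1 := by omega
      have e2 : a + 1 - b = (a - b) + 1 := by omega
      rw [e1, e2, Nat.choose_succ_succ]
    have ham : (Nat.choose a m : ℚ) ≠ 0 := by
      exact_mod_cast (Nat.choose_pos hma).ne'
    have h1' : (Nat.choose a b : ℚ) * Nat.choose b m =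
        Nat.choose a m * Nat.choose (a - m) (b - m) := by exact_mod_cast h1
    rw [h3]
    push_cast
    rw [h2] at h1'
    field_simp
    push_cast at h1' ⊢
    linarith [h1']
  · have z1 : Nat.choose b m = 0 := Nat.choose_eq_zero_of_lt hm
    have z2 : Nat.choose (a + 1 - m) (a + 1 - b) = 0 :=
      Nat.choose_eq_zero_of_lt (by omega)
    have z3 : Nat.choose (a - m) (a + 1 - b) = 0 :=
      Nat.choose_eq_zero_of_lt (by omega)
    rw [z1, z2, z3]
    simp

theorem stmt0 (x y a b : ℕ) (hx : 0 < x) (hy : 0 < y) (ha : 0 < a) (hb : 0 < b)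
    (hba : b ≤ a) (hxy : x ≤ y) :
    ∑ m ∈ Finset.Icc x y, (Nat.choose b m : ℚ) / (Nat.choose a m : ℚ) =
      ((Nat.choose (a + 1 - x) (a + 1 - b) : ℚ) - (Nat.choose (a - y) (a + 1 - b) : ℚ)) /
        (Nat.choose a b : ℚ) := by
  have hcast : ∀ m ∈ Finset.Icc x y,
      (Nat.choose b m : ℚ) / (Nat.choose a m : ℚ) =
        (((Nat.choose (a + 1 - m) (a + 1 - b) : ℚ)) -
          ((Nat.choose (a + 1 - (m + 1)) (a + 1 - b) : ℚ))) / (Nat.choose a b : ℚ) := by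
    intro m _
    have : a + 1 - (m + 1) = a - m := by omega
    rw [this]
    exact key a b m hba
  rw [Finset.sum_congr rfl hcast, ← Finset.sum_div,
    tele (fun m => ((Nat.choose (a + 1 - m) (a + 1 - b) : ℚ))) x y hxy]
  have : a + 1 - (y + 1) = a - y := by omega
  rw [this]
end

section
/- For positive integers a and b, the sum over m from 1 to a of (1/m)·C(a-m, b) equals C(a,b)·(H_a - H_b), where H_k denotes the k-th harmonic number. -/
/-- The `k`-th harmonic number `1 + 1/2 + ⋯ + 1/k`, with `H 0 = 0`. -/
def H (k : ℕ) : ℚ := ∑ i ∈ Finset.range k, (1 : ℚ) / (i + 1)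

lemma H_Icc (n : ℕ) : ∑ m ∈ Finset.Icc 1 n, (1 / (m : ℚ)) = H n := by
  induction n with
  | zero => simp [H]
  | succ n ih =>
    rw [Finset.sum_Icc_succ_top (by omega), ih]
    simp [H, Finset.sum_range_succ]

lemma key_s1 : ∀ a b : ℕ, ∑ m ∈ Finset.Icc 1 a, (1 / (m : ℚ)) * (Nat.choose (a - m) b : ℚ) =
    (Nat.choose a b : ℚ) * (H a - H b) := by
  intro a
  induction a with
  | zero =>
    intro b
    cases b <;> simp [H]
  | succ a ih =>
    intro b
    cases b with
    | zero =>
      simp only [Nat.choose_zero_right, Nat.cast_one, mul_one, one_mul]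
      have h0 : H 0 = 0 := by simp [H]
      rw [h0, sub_zero, ← H_Icc]
    | succ b =>
      have hstep : ∑ m ∈ Finset.Icc 1 (a+1), (1 / (m : ℚ)) * (Nat.choose (a+1 - m) (b+1) : ℚ)
          = ∑ m ∈ Finset.Icc 1 a, (1 / (m : ℚ)) *
              ((Nat.choose (a - m) b : ℚ) + (Nat.choose (a - m) (b+1) : ℚ)) := by
        rw [Finset.sum_Icc_succ_top (by omega)]
        simp only [Nat.add_sub_cancel_left, Nat.sub_self, Nat.choose_zero_succ, Nat.cast_zero,
          mul_zero, add_zero]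
        apply Finset.sum_congr rfl
        intro m hm
        simp only [Finset.mem_Icc] at hm
        have h1 : a + 1 - m = (a - m) + 1 := by omega
        rw [h1, Nat.choose_succ_succ]
        push_cast
        ring
      rw [hstep]
      simp only [mul_add, Finset.sum_add_distrib, ih b, ih (b+1)]
      have hc : (Nat.choose (a+1) (b+1) : ℚ) = (Nat.choose a b : ℚ) + (Nat.choose a (b+1) : ℚ) := by
        rw [Nat.choose_succ_succ]; push_cast; ring
      have hH1 : H (a+1) = H a + 1 / ((a : ℚ) + 1) := by
        simp [H, Finset.sum_range_succ]
      have hH2 : H (b+1) = H b + 1 / ((b : ℚ) + 1) := by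
        simp [H, Finset.sum_range_succ]
      have hkey : ((a : ℚ) + 1) * (Nat.choose a b : ℚ)
          = (Nat.choose (a+1) (b+1) : ℚ) * ((b : ℚ) + 1) := by
        have := Nat.add_one_mul_choose_eq a b
        exact_mod_cast congrArg (Nat.cast : ℕ → ℚ) this
      rw [hc] at hkey
      have ha1 : ((a : ℚ) + 1) ≠ 0 := by positivity
      have hb1 : ((b : ℚ) + 1) ≠ 0 := by positivity
      have hdiv : ((Nat.choose a b : ℚ) + (Nat.choose a (b+1) : ℚ)) / ((a : ℚ) + 1)
          = (Nat.choose a b : ℚ) / ((b : ℚ) + 1) := by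
        rw [div_eq_div_iff ha1 hb1]
        linarith [hkey]
      rw [hH1, hH2, hc]
      linear_combination -hdiv

theorem stmt1 (a b : ℕ) (ha : 0 < a) (hb : 0 < b) :
    ∑ m ∈ Finset.Icc 1 a, (1 / (m : ℚ)) * (Nat.choose (a - m) b : ℚ) =
      (Nat.choose a b : ℚ) * (H a - H b) := by
  exact key_s1 a b
end

section
/- For positive integers a and b with b ≤ a, the sum over m from 1 to b of [C(b,m)/C(a,m)]·(1/(m+1)) equals ((a+1)/(b+1))·(H_{a+1} - H_{a-b}) - 1. -/
lemma L1 (a n : ℕ) (hn : n ≤ a) :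
    ∑ j ∈ Finset.range (n + 1), (n.choose j : ℚ) / (a.choose j : ℚ)
      = ((a : ℚ) + 1) / ((a : ℚ) + 1 - n) := by
  have hden : ((a : ℚ) + 1 - n) ≠ 0 := by
    have : (n : ℚ) ≤ a := by exact_mod_cast hn
    linarith
  set f : ℕ → ℚ := fun j => (((a : ℚ) + 1) / ((a : ℚ) + 1 - n)) *
      ((n.choose j : ℚ) / ((a + 1).choose j : ℚ)) with hf
  have key : ∀ j ∈ Finset.range (n + 1),
      (n.choose j : ℚ) / (a.choose j : ℚ) = f j - f (j + 1) := by
    intro j hj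
    have hjn : j ≤ n := Nat.lt_succ_iff.mp (Finset.mem_range.mp hj)
    have hja : j ≤ a := hjn.trans hn
    have hca : (a.choose j : ℚ) ≠ 0 := by
      exact_mod_cast (Nat.choose_pos hja).ne'
    have hcA : ((a + 1).choose j : ℚ) ≠ 0 := by
      exact_mod_cast (Nat.choose_pos (hja.trans (Nat.le_succ a))).ne'
    have hcA' : ((a + 1).choose (j + 1) : ℚ) ≠ 0 := by
      exact_mod_cast (Nat.choose_pos (Nat.succ_le_succ hja)).ne'
    have haj : ((a : ℚ) + 1 - j) ≠ 0 := by
      have : (j : ℚ) ≤ a := by exact_mod_cast hja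
      linarith
    -- e1 : C(n,j+1) = C(n,j) * (n - j) / (j+1)
    have e1 : (n.choose (j + 1) : ℚ) = (n.choose j : ℚ) * ((n : ℚ) - j) / ((j : ℚ) + 1) := by
      have h := Nat.choose_succ_right_eq n j
      have h' := congrArg (Nat.cast (R := ℚ)) h
      push_cast [Nat.cast_sub hjn] at h'
      field_simp
      linarith [h']
    have e2 : ((a + 1).choose (j + 1) : ℚ)
        = ((a + 1).choose j : ℚ) * ((a : ℚ) + 1 - j) / ((j : ℚ) + 1) := by
      have h := Nat.choose_succ_right_eq (a + 1) j
      have h' := congrArg (Nat.cast (R := ℚ)) h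
      push_cast [Nat.cast_sub (by omega : j ≤ a + 1)] at h'
      field_simp
      linarith [h']
    have e3 : (a.choose j : ℚ) = ((a + 1).choose j : ℚ) * ((a : ℚ) + 1 - j) / ((a : ℚ) + 1) := by
      have h := Nat.choose_mul_succ_eq a j
      have h' := congrArg (Nat.cast (R := ℚ)) h
      push_cast [Nat.cast_sub (by omega : j ≤ a + 1)] at h'
      field_simp
      linarith [h']
    rw [hf]
    simp only
    rw [e1, e2, e3]
    field_simp
    ring
  rw [Finset.sum_congr rfl key, Finset.sum_range_sub' f (n + 1)]
  simp [hf, Nat.choose_succ_self]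

lemma L2 (a : ℕ) : ∀ b, b ≤ a →
    ∑ m ∈ Finset.range (b + 1), ((b + 1).choose (m + 1) : ℚ) / (a.choose m : ℚ)
      = ((a : ℚ) + 1) * (H (a + 1) - H (a - b)) := by
  intro b
  induction b with
  | zero =>
    intro _
    have : a - 0 = a := rfl
    simp only [this, H, Finset.sum_range_succ]
    have h0 : ((a:ℚ)+1) ≠ 0 := by positivity
    field_simp
    ring
    simp
  | succ b ih =>
    intro hb1
    have hb : b ≤ a := by omega
    have hsplit : ∀ m, (((b + 2).choose (m + 1) : ℚ))
        = ((b + 1).choose m : ℚ) + ((b + 1).choose (m + 1) : ℚ) := by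
      intro m
      have := Nat.choose_succ_succ (b + 1) m
      exact_mod_cast congrArg (Nat.cast (R := ℚ)) this
    have step1 : ∑ m ∈ Finset.range (b + 2), ((b + 2).choose (m + 1) : ℚ) / (a.choose m : ℚ)
        = (∑ m ∈ Finset.range (b + 2), ((b + 1).choose m : ℚ) / (a.choose m : ℚ))
          + ∑ m ∈ Finset.range (b + 2), ((b + 1).choose (m + 1) : ℚ) / (a.choose m : ℚ) := by
      rw [← Finset.sum_add_distrib]
      refine Finset.sum_congr rfl fun m _ => ?_
      rw [hsplit m, add_div]
    have s1 : ∑ m ∈ Finset.range (b + 2), ((b + 1).choose m : ℚ) / (a.choose m : ℚ)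
        = ((a : ℚ) + 1) / ((a : ℚ) - b) := by
      have := L1 a (b + 1) hb1
      rw [this]
      push_cast
      ring_nf
    have s2 : ∑ m ∈ Finset.range (b + 2), ((b + 1).choose (m + 1) : ℚ) / (a.choose m : ℚ)
        = ((a : ℚ) + 1) * (H (a + 1) - H (a - b)) := by
      rw [Finset.sum_range_succ, ih hb]
      simp [Nat.choose_succ_self]
    have hH : H (a - b) = H (a - (b + 1)) + 1 / ((a : ℚ) - b) := by
      have h1 : a - b = (a - (b + 1)) + 1 := by omega
      rw [h1, H, Finset.sum_range_succ]
      have h2 : ((a - (b + 1) : ℕ) : ℚ) = (a : ℚ) - b - 1 := by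
        push_cast [Nat.cast_sub hb1]
        ring
      rw [h2, H]
      norm_num
    rw [step1, s1, s2, hH]
    have hab : ((a : ℚ) - b) ≠ 0 := by
      have : (b : ℚ) + 1 ≤ a := by exact_mod_cast hb1
      intro h; rw [sub_eq_zero] at h; rw [h] at this; linarith
    field_simp
    ring

theorem stmt2 (a b : ℕ) (ha : 0 < a) (hb : 0 < b) (hba : b ≤ a) :
    ∑ m ∈ Finset.Icc 1 b, ((Nat.choose b m : ℚ) / (Nat.choose a m : ℚ)) * (1 / ((m : ℚ) + 1)) =
      (((a : ℚ) + 1) / ((b : ℚ) + 1)) * (H (a + 1) - H (a - b)) - 1 := by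
  have hrange : Finset.range (b + 1) = insert 0 (Finset.Icc 1 b) := by
    ext x; simp [Finset.mem_range, Finset.mem_Icc]; omega
  have h0 : (0 : ℕ) ∉ Finset.Icc 1 b := by simp
  have hsum := L2 a b hba
  rw [hrange, Finset.sum_insert h0] at hsum
  have hg0 : ((b + 1).choose (0 + 1) : ℚ) / (a.choose 0 : ℚ) = (b : ℚ) + 1 := by
    simp
  rw [hg0] at hsum
  -- hsum : (b+1) + ∑_{Icc 1 b} C(b+1,m+1)/C(a,m) = (a+1)(H(a+1)-H(a-b))
  have hb1 : ((b : ℚ) + 1) ≠ 0 := by positivity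
  have key : ∀ m ∈ Finset.Icc 1 b,
      ((b.choose m : ℚ) / (a.choose m : ℚ)) * (1 / ((m : ℚ) + 1))
        = (((b + 1).choose (m + 1) : ℚ) / (a.choose m : ℚ)) / ((b : ℚ) + 1) := by
    intro m hm
    have hm' := Finset.mem_Icc.mp hm
    have hma : m ≤ a := hm'.2.trans hba
    have hca : (a.choose m : ℚ) ≠ 0 := by
      exact_mod_cast (Nat.choose_pos hma).ne'
    have h := Nat.add_one_mul_choose_eq b m
    have h' := congrArg (Nat.cast (R := ℚ)) h
    push_cast at h'
    have hm1 : ((m : ℚ) + 1) ≠ 0 := by positivity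
    field_simp
    linear_combination h'
  rw [Finset.sum_congr rfl key, ← Finset.sum_div]
  have : ∑ m ∈ Finset.Icc 1 b, (((b + 1).choose (m + 1) : ℚ) / (a.choose m : ℚ))
      = ((a : ℚ) + 1) * (H (a + 1) - H (a - b)) - ((b : ℚ) + 1) := by
    linarith [hsum]
  rw [this]
  field_simp
end

section
/- Let n_1, ..., n_L be nonnegative integers with sum n, and fix a sample size m and an index j. Then the sum over all tuples (m_1,...,m_L) with 0 < m_i ≤ n_i for all i and Σ m_i = m of [Π_i C(n_i, m_i) / C(n,m)] · m_j(m_j + 1) equals the sum over all subsets T of {1,...,L} not containing j of (-1)^{|T|} · [ (n_j)_2 (m)_2 / (n - n_T)_2 + 2 n_j m / (n - n_T) ] · C(n - n_T, m)/C(n, m), where n_T = Σ_{i ∈ T} n_i and (x)_2 = x(x-1). -/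
open Finset

-- zero values outside support
lemma piAntidiag_apply_zero {ι : Type*} [DecidableEq ι] {s : Finset ι} {M : ℕ}
    {f : ι → ℕ} (hf : f ∈ s.piAntidiag M) {i : ι} (hi : i ∉ s) : f i = 0 := by
  rw [Finset.mem_piAntidiag] at hf
  by_contra h
  exact hi (hf.2 i h)

lemma vand_range (a b M : ℕ) :
    ∑ k ∈ Finset.range (M+1), Nat.choose a k * Nat.choose b (M-k) = Nat.choose (a+b) M := by
  rw [Nat.add_choose_eq, Finset.Nat.sum_antidiagonal_eq_sum_range_succ_mk]

lemma mv_vandermonde {ι : Type*} [DecidableEq ι] (n : ι → ℕ) (s : Finset ι) :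
    ∀ M : ℕ, ∑ f ∈ s.piAntidiag M, ∏ i ∈ s, Nat.choose (n i) (f i)
      = Nat.choose (∑ i ∈ s, n i) M := by
  induction s using Finset.cons_induction with
  | empty =>
    intro M
    cases M with
    | zero => simp
    | succ M => simp [Finset.piAntidiag_empty_of_ne_zero]
  | cons i s hi ih =>
    intro M
    rw [Finset.piAntidiag_cons, Finset.sum_disjiUnion]
    have h1 : ∀ p ∈ Finset.HasAntidiagonal.antidiagonal M,
        ∑ f ∈ (s.piAntidiag p.2).map (addRightEmbedding fun t => if t = i then p.1 else 0),
          ∏ i' ∈ Finset.cons i s hi, Nat.choose (n i') (f i')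
        = Nat.choose (n i) p.1 * Nat.choose (∑ i' ∈ s, n i') p.2 := by
      intro p hp
      rw [Finset.sum_map, ← ih, Finset.mul_sum]
      refine Finset.sum_congr rfl fun f hf => ?_
      rw [Finset.prod_cons]
      have hfi : f i = 0 := piAntidiag_apply_zero hf hi
      simp only [addRightEmbedding_apply]
      congr 1
      · simp [hfi]
      · refine Finset.prod_congr rfl fun i' hi' => ?_
        have : i' ≠ i := fun h => hi (h ▸ hi')
        simp [this]
    rw [Finset.sum_congr rfl h1, Finset.sum_cons, Nat.add_choose_eq]

-- weighted peel of coordinate j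
lemma weighted_peel {ι : Type*} [DecidableEq ι] (n : ι → ℕ) (g : ℕ → ℚ)
    (j : ι) (t : Finset ι) (hj : j ∉ t) (M : ℕ) :
    ∑ f ∈ (Finset.cons j t hj).piAntidiag M,
        (∏ i ∈ Finset.cons j t hj, (Nat.choose (n i) (f i) : ℚ)) * g (f j)
      = ∑ p ∈ Finset.HasAntidiagonal.antidiagonal M,
          g p.1 * (Nat.choose (n j) p.1 : ℚ) * (Nat.choose (∑ i ∈ t, n i) p.2 : ℚ) := by
  rw [Finset.piAntidiag_cons, Finset.sum_disjiUnion]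
  refine Finset.sum_congr rfl fun p hp => ?_
  rw [Finset.sum_map]
  have key : ∀ f ∈ t.piAntidiag p.2,
      (∏ i ∈ Finset.cons j t hj,
        (Nat.choose (n i) ((addRightEmbedding fun t' => if t' = j then p.1 else 0) f i) : ℚ)) *
        g ((addRightEmbedding fun t' => if t' = j then p.1 else 0) f j)
      = g p.1 * (Nat.choose (n j) p.1 : ℚ) * ∏ i ∈ t, (Nat.choose (n i) (f i) : ℚ) := by
    intro f hf
    have hfj : f j = 0 := piAntidiag_apply_zero hf hj
    simp only [addRightEmbedding_apply, Pi.add_apply]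
    rw [Finset.prod_cons]
    have h2 : ∀ i ∈ t, (Nat.choose (n i) (f i + if i = j then p.1 else 0) : ℚ)
        = (Nat.choose (n i) (f i) : ℚ) := by
      intro i hi
      have : i ≠ j := fun h => hj (h ▸ hi)
      simp [this]
    rw [Finset.prod_congr rfl h2]
    simp only [hfj, zero_add, eq_self_iff_true, if_true]
    ring
  rw [Finset.sum_congr rfl key, ← Finset.mul_sum]
  have := mv_vandermonde n t p.2
  have cast := congrArg (fun x : ℕ => (x : ℚ)) this
  push_cast at cast
  rw [cast]

lemma V1 (a b M : ℕ) :
    ∑ p ∈ Finset.HasAntidiagonal.antidiagonal (M+1), p.1 * Nat.choose (a+1) p.1 * Nat.choose b p.2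
      = (a+1) * Nat.choose (a+b) M := by
  rw [Finset.Nat.sum_antidiagonal_eq_sum_range_succ_mk]
  rw [Finset.sum_range_succ']
  simp only [Nat.zero_eq, Nat.sub_zero, zero_mul, add_zero]
  have h : ∀ k ∈ Finset.range (M+1),
      (k+1) * Nat.choose (a+1) (k+1) * Nat.choose b (M+1-(k+1))
        = (a+1) * (Nat.choose a k * Nat.choose b (M-k)) := by
    intro k hk
    have := Nat.add_one_mul_choose_eq a k
    rw [Nat.succ_sub_succ]
    rw [mul_comm (k+1) (Nat.choose (a+1) (k+1)), ← Nat.add_one_mul_choose_eq a k]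
    ring
  rw [Finset.sum_congr rfl h, ← Finset.mul_sum, vand_range]

lemma V2 (a b M : ℕ) :
    ∑ p ∈ Finset.HasAntidiagonal.antidiagonal (M+2), p.1 * (p.1 - 1) * Nat.choose (a+2) p.1 * Nat.choose b p.2
      = (a+2) * (a+1) * Nat.choose (a+b) M := by
  rw [Finset.Nat.sum_antidiagonal_eq_sum_range_succ_mk]
  rw [Finset.sum_range_succ', Finset.sum_range_succ']
  simp only [Nat.zero_eq, zero_mul, mul_zero, add_zero, Nat.sub_self]
  have h : ∀ k ∈ Finset.range (M+1),
      (k+1+1) * (k+1+1-1) * Nat.choose (a+2) (k+1+1) * Nat.choose b (M+2-(k+1+1))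
        = ((a+2) * (a+1)) * (Nat.choose a k * Nat.choose b (M-k)) := by
    intro k hk
    have e1 : (k+1+1-1) = k+1 := rfl
    have e2 : M+2-(k+1+1) = M-k := by omega
    rw [e1, e2]
    have s1 : (a+1+1) * Nat.choose (a+1) (k+1) = Nat.choose (a+2) (k+2) * (k+2) :=
      Nat.add_one_mul_choose_eq (a+1) (k+1)
    have s2 : (a+1) * Nat.choose a k = Nat.choose (a+1) (k+1) * (k+1) :=
      Nat.add_one_mul_choose_eq a k
    calc (k+2) * (k+1) * Nat.choose (a+2) (k+2) * Nat.choose b (M-k)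
        = (Nat.choose (a+2) (k+2) * (k+2)) * (k+1) * Nat.choose b (M-k) := by ring
      _ = ((a+2) * Nat.choose (a+1) (k+1)) * (k+1) * Nat.choose b (M-k) := by rw [← s1]
      _ = (a+2) * (Nat.choose (a+1) (k+1) * (k+1)) * Nat.choose b (M-k) := by ring
      _ = (a+2) * ((a+1) * Nat.choose a k) * Nat.choose b (M-k) := by rw [← s2]
      _ = ((a+2) * (a+1)) * (Nat.choose a k * Nat.choose b (M-k)) := by ring
  rw [Finset.sum_congr rfl h, ← Finset.mul_sum, vand_range]

lemma Q1 (a b M : ℕ) :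
    ∑ p ∈ Finset.HasAntidiagonal.antidiagonal M, (p.1 : ℚ) * Nat.choose a p.1 * Nat.choose b p.2
      = (a : ℚ) * M / (a + b) * Nat.choose (a+b) M := by
  cases a with
  | zero =>
    rw [Finset.sum_eq_zero, Nat.cast_zero, zero_mul, zero_div, zero_mul]
    intro p hp
    cases hp1 : p.1 with
    | zero => simp [hp1]
    | succ k => simp [hp1, Nat.choose_zero_succ]
  | succ a =>
    cases M with
    | zero => simp
    | succ M =>
      have := V1 a b M
      have cast := congrArg (fun x : ℕ => (x : ℚ)) this
      push_cast at cast
      rw [cast]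
      have keyn := Nat.add_one_mul_choose_eq (a+b) M
      rw [show a+b+1 = a+1+b by omega] at keyn
      have key := congrArg (fun x : ℕ => (x : ℚ)) keyn
      push_cast at key
      have hN : ((a : ℚ) + 1 + (b : ℚ)) ≠ 0 := by positivity
      push_cast
      rw [div_mul_eq_mul_div, eq_div_iff hN]
      linear_combination ((a : ℚ) + 1) * key

lemma Q2 (a b M : ℕ) :
    ∑ p ∈ Finset.HasAntidiagonal.antidiagonal M, (p.1 : ℚ) * ((p.1 : ℚ) - 1) * Nat.choose a p.1 * Nat.choose b p.2
      = (Nat.descFactorial a 2 : ℚ) * (Nat.descFactorial M 2 : ℚ)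
          / (Nat.descFactorial (a+b) 2 : ℚ) * Nat.choose (a+b) M := by
  match a with
  | 0 =>
    rw [Finset.sum_eq_zero]
    · simp
    intro p hp
    match hp1 : p.1 with
    | 0 => simp [hp1]
    | k+1 => simp [hp1, Nat.choose_zero_succ]
  | 1 =>
    rw [Finset.sum_eq_zero]
    · simp
    intro p hp
    match hp1 : p.1 with
    | 0 => simp
    | 1 => norm_num
    | k+2 => simp [Nat.choose_one_right, Nat.choose_eq_zero_of_lt (by omega : 1 < k+2)]
  | a+2 =>
    match M with
    | 0 => simp
    | 1 =>
      rw [Finset.sum_eq_zero]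
      · simp [Nat.descFactorial]
      intro p hp
      rw [Finset.HasAntidiagonal.mem_antidiagonal] at hp
      match hp1 : p.1 with
      | 0 => simp
      | 1 => norm_num
      | k+2 => omega
    | M+2 =>
      have := V2 a b M
      have cast := congrArg (fun x : ℕ => (x : ℚ)) this
      push_cast at cast
      have hterm : ∀ p ∈ Finset.HasAntidiagonal.antidiagonal (M+2),
          (p.1 : ℚ) * ((p.1 : ℚ) - 1) * Nat.choose (a+2) p.1 * Nat.choose b p.2
            = ((p.1 * (p.1 - 1) : ℕ) : ℚ) * Nat.choose (a+2) p.1 * Nat.choose b p.2 := by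
        intro p hp
        match hp1 : p.1 with
        | 0 => simp
        | k+1 => push_cast [hp1]; ring
      rw [Finset.sum_congr rfl hterm]
      push_cast
      rw [cast]
      have s1n := Nat.add_one_mul_choose_eq (a+b) M
      have s2n := Nat.add_one_mul_choose_eq (a+b+1) (M+1)
      rw [show a+b+1+1 = a+2+b by omega, show M+1+1 = M+2 from rfl] at s2n
      have s1 := congrArg (fun x : ℕ => (x : ℚ)) s1n
      have s2 := congrArg (fun x : ℕ => (x : ℚ)) s2n
      push_cast at s1 s2
      rw [Nat.cast_descFactorial_two, Nat.cast_descFactorial_two, Nat.cast_descFactorial_two]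
      push_cast
      have hE : (((a:ℚ)+2+(b:ℚ)) * ((a:ℚ)+2+(b:ℚ)-1)) ≠ 0 := by
        have h0 : (0:ℚ) ≤ (a:ℚ) := Nat.cast_nonneg a
        have h0b : (0:ℚ) ≤ (b:ℚ) := Nat.cast_nonneg b
        have : (0:ℚ) < ((a:ℚ)+2+(b:ℚ)) * ((a:ℚ)+2+(b:ℚ)-1) := by nlinarith
        exact ne_of_gt this
      rw [div_mul_eq_mul_div, eq_div_iff hE]
      linear_combination ((a:ℚ)+2) * ((a:ℚ)+1) * ((a:ℚ)+2+(b:ℚ)) * s1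
        + ((a:ℚ)+2) * ((a:ℚ)+1) * ((M:ℚ)+1) * s2

lemma inclusion_exclusion (L m : ℕ) (w : (Fin L → ℕ) → ℚ) :
    ∑ T : Finset (Fin L), (-1:ℚ)^T.card *
        ∑ f ∈ (Finset.Nat.antidiagonalTuple L m).filter (fun f => ∀ i ∈ T, f i = 0), w f
      = ∑ f ∈ (Finset.Nat.antidiagonalTuple L m).filter (fun f => ∀ i, f i ≠ 0), w f := by
  have h1 : ∀ T : Finset (Fin L),
      (-1:ℚ)^T.card *
          ∑ f ∈ (Finset.Nat.antidiagonalTuple L m).filter (fun f => ∀ i ∈ T, f i = 0), w f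
        = ∑ f ∈ Finset.Nat.antidiagonalTuple L m,
            (if ∀ i ∈ T, f i = 0 then (-1:ℚ)^T.card * w f else 0) := by
    intro T
    rw [Finset.sum_filter, Finset.mul_sum]
    exact Finset.sum_congr rfl fun f _ => by split <;> simp
  rw [Finset.sum_congr rfl (fun T _ => h1 T), Finset.sum_comm, Finset.sum_filter]
  refine Finset.sum_congr rfl fun f _ => ?_
  have e1 : ∀ T : Finset (Fin L),
      (∀ i ∈ T, f i = 0) ↔ T ∈ (Finset.univ.filter (fun i => f i = 0)).powerset := by
    intro T
    simp [Finset.subset_iff]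
  calc ∑ T : Finset (Fin L), (if ∀ i ∈ T, f i = 0 then (-1:ℚ)^T.card * w f else 0)
      = ∑ T : Finset (Fin L),
          (if T ∈ (Finset.univ.filter (fun i => f i = 0)).powerset
            then (-1:ℚ)^T.card * w f else 0) := by
        exact Finset.sum_congr rfl fun T _ => by rw [if_congr (e1 T) rfl rfl]
    _ = ∑ T ∈ (Finset.univ.filter (fun i => f i = 0)).powerset, (-1:ℚ)^T.card * w f := by
        rw [Finset.sum_ite_mem, Finset.univ_inter]
    _ = (∑ T ∈ (Finset.univ.filter (fun i => f i = 0)).powerset, (-1:ℚ)^T.card) * w f := by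
        rw [Finset.sum_mul]
    _ = (if ∀ i, f i ≠ 0 then w f else 0) := by
        have hcast : (∑ T ∈ (Finset.univ.filter (fun i => f i = 0)).powerset, (-1:ℚ)^T.card)
            = (((∑ T ∈ (Finset.univ.filter (fun i => f i = 0)).powerset, (-1:ℤ)^T.card : ℤ)) : ℚ) := by
          push_cast
          rfl
        rw [hcast, Finset.sum_powerset_neg_one_pow_card]
        by_cases h : ∀ i, f i ≠ 0
        · rw [if_pos h, if_pos, Int.cast_one, one_mul]
          rw [Finset.filter_eq_empty_iff]
          intro i _
          exact h i
        · rw [if_neg h, if_neg, Int.cast_zero, zero_mul]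
          intro hemp
          rw [Finset.filter_eq_empty_iff] at hemp
          exact h fun i => hemp (Finset.mem_univ i)

lemma per_T (L : ℕ) (n : Fin L → ℕ) (m : ℕ) (j : Fin L) (T : Finset (Fin L)) (hj : j ∉ T) :
    ∑ f ∈ (Finset.Nat.antidiagonalTuple L m).filter (fun f => ∀ i ∈ T, f i = 0),
        (∏ i, (Nat.choose (n i) (f i) : ℚ)) * ((f j : ℚ) * ((f j : ℚ) + 1))
      = ((Nat.descFactorial (n j) 2 * Nat.descFactorial m 2 : ℚ)
            / ((Nat.descFactorial (∑ i ∈ Tᶜ, n i) 2 : ℕ) : ℚ)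
          + 2 * (n j : ℚ) * (m : ℚ) / ((∑ i ∈ Tᶜ, n i : ℕ) : ℚ))
        * (Nat.choose (∑ i ∈ Tᶜ, n i) m : ℚ) := by
  classical
  set s : Finset (Fin L) := Tᶜ with hs
  have hjs : j ∈ s := Finset.mem_compl.2 hj
  -- rewrite the filtered antidiagonal as piAntidiag
  have hset : (Finset.Nat.antidiagonalTuple L m).filter (fun f => ∀ i ∈ T, f i = 0)
      = s.piAntidiag m := by
    ext f
    rw [Finset.mem_filter, Finset.Nat.mem_antidiagonalTuple, Finset.mem_piAntidiag]
    constructor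
    · rintro ⟨hsum, hzero⟩
      have hsupp : ∀ i, f i ≠ 0 → i ∈ s := by
        intro i hi
        rw [hs, Finset.mem_compl]
        intro hiT
        exact hi (hzero i hiT)
      refine ⟨?_, hsupp⟩
      rw [← hsum]
      exact Finset.sum_subset (Finset.subset_univ s)
        (fun i _ hi => by_contra fun h => hi (hsupp i h))
    · rintro ⟨hsum, hsupp⟩
      have hzero : ∀ i ∈ T, f i = 0 := by
        intro i hiT
        by_contra h
        exact (Finset.mem_compl.1 (hsupp i h)) hiT
      refine ⟨?_, hzero⟩
      rw [← hsum]
      exact (Finset.sum_subset (Finset.subset_univ s)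
        (fun i _ hi => by_contra fun h => hi (hsupp i h))).symm
  rw [hset]
  -- restrict the product to s
  have hprod : ∀ f ∈ s.piAntidiag m,
      (∏ i, (Nat.choose (n i) (f i) : ℚ)) * ((f j : ℚ) * ((f j : ℚ) + 1))
        = (∏ i ∈ s, (Nat.choose (n i) (f i) : ℚ)) * ((f j : ℚ) * ((f j : ℚ) + 1)) := by
    intro f hf
    congr 1
    refine (Finset.prod_subset (Finset.subset_univ s) ?_).symm
    intro i _ hi
    rw [piAntidiag_apply_zero hf hi, Nat.choose_zero_right, Nat.cast_one]
  rw [Finset.sum_congr rfl hprod]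
  -- peel off coordinate j
  have sEq : Finset.cons j (s.erase j) (Finset.notMem_erase j s) = s := by
    rw [Finset.cons_eq_insert]
    exact Finset.insert_erase hjs
  rw [← sEq]
  rw [weighted_peel n (fun k => (k : ℚ) * ((k : ℚ) + 1)) j (s.erase j)
    (Finset.notMem_erase j s) m]
  -- evaluate the univariate sum
  have hab : n j + ∑ i ∈ s.erase j, n i = ∑ i ∈ Finset.cons j (s.erase j)
      (Finset.notMem_erase j s), n i := by
    rw [Finset.sum_cons]
  have split : ∀ p ∈ Finset.HasAntidiagonal.antidiagonal m,
      ((p.1 : ℚ) * ((p.1 : ℚ) + 1)) * (Nat.choose (n j) p.1 : ℚ)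
          * (Nat.choose (∑ i ∈ s.erase j, n i) p.2 : ℚ)
        = ((p.1 : ℚ) * ((p.1 : ℚ) - 1) * (Nat.choose (n j) p.1 : ℚ)
              * (Nat.choose (∑ i ∈ s.erase j, n i) p.2 : ℚ))
          + 2 * ((p.1 : ℚ) * (Nat.choose (n j) p.1 : ℚ)
              * (Nat.choose (∑ i ∈ s.erase j, n i) p.2 : ℚ)) := by
    intro p _
    ring
  rw [Finset.sum_congr rfl split, Finset.sum_add_distrib, ← Finset.mul_sum, Q1, Q2, ← hab]
  push_cast
  ring




theorem stmt4 (L : ℕ) (n : Fin L → ℕ) (m : ℕ) (j : Fin L) :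
    ∑ f ∈ (Finset.Nat.antidiagonalTuple L m).filter (fun f => ∀ i, 0 < f i ∧ f i ≤ n i),
      ((∏ i, (Nat.choose (n i) (f i) : ℚ)) / (Nat.choose (∑ i, n i) m : ℚ)) *
        ((f j : ℚ) * ((f j : ℚ) + 1)) =
    ∑ T ∈ (Finset.univ : Finset (Finset (Fin L))).filter (fun T => j ∉ T),
      (-1 : ℚ) ^ T.card *
        ((Nat.descFactorial (n j) 2 * Nat.descFactorial m 2 : ℚ) /
            ((Nat.descFactorial (∑ i, n i - ∑ i ∈ T, n i) 2 : ℕ) : ℚ) +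
          2 * (n j : ℚ) * (m : ℚ) / (((∑ i, n i - ∑ i ∈ T, n i : ℕ)) : ℚ)) *
        ((Nat.choose (∑ i, n i - ∑ i ∈ T, n i) m : ℚ) / (Nat.choose (∑ i, n i) m : ℚ)) := by
  classical
  have hcompl : ∀ T : Finset (Fin L), ∑ i ∈ Tᶜ, n i = ∑ i, n i - ∑ i ∈ T, n i := by
    intro T
    have := Finset.sum_compl_add_sum T n
    omega
  -- Step 1: rewrite LHS
  have step1 : ∑ f ∈ (Finset.Nat.antidiagonalTuple L m).filter
        (fun f => ∀ i, 0 < f i ∧ f i ≤ n i),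
      ((∏ i, (Nat.choose (n i) (f i) : ℚ)) / (Nat.choose (∑ i, n i) m : ℚ)) *
        ((f j : ℚ) * ((f j : ℚ) + 1))
      = (∑ f ∈ (Finset.Nat.antidiagonalTuple L m).filter (fun f => ∀ i, f i ≠ 0),
          (∏ i, (Nat.choose (n i) (f i) : ℚ)) * ((f j : ℚ) * ((f j : ℚ) + 1)))
        / (Nat.choose (∑ i, n i) m : ℚ) := by
    rw [Finset.sum_div, Finset.sum_filter, Finset.sum_filter]
    refine Finset.sum_congr rfl fun f _ => ?_
    by_cases h1 : ∀ i, 0 < f i ∧ f i ≤ n i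
    · rw [if_pos h1, if_pos fun i => (h1 i).1.ne']
      ring
    · rw [if_neg h1]
      by_cases h2 : ∀ i, f i ≠ 0
      · rw [if_pos h2]
        push_neg at h1
        obtain ⟨i, hi⟩ := h1
        have hgt : n i < f i := hi (Nat.pos_of_ne_zero (h2 i))
        have hz : (Nat.choose (n i) (f i) : ℚ) = 0 := by
          rw [Nat.choose_eq_zero_of_lt hgt, Nat.cast_zero]
        rw [Finset.prod_eq_zero (Finset.mem_univ i) hz, zero_mul, zero_div]
      · rw [if_neg h2]
  rw [step1]
  -- Step 2: rewrite RHS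
  have step2 : ∑ T ∈ (Finset.univ : Finset (Finset (Fin L))).filter (fun T => j ∉ T),
      (-1 : ℚ) ^ T.card *
        ((Nat.descFactorial (n j) 2 * Nat.descFactorial m 2 : ℚ) /
            ((Nat.descFactorial (∑ i, n i - ∑ i ∈ T, n i) 2 : ℕ) : ℚ) +
          2 * (n j : ℚ) * (m : ℚ) / (((∑ i, n i - ∑ i ∈ T, n i : ℕ)) : ℚ)) *
        ((Nat.choose (∑ i, n i - ∑ i ∈ T, n i) m : ℚ) / (Nat.choose (∑ i, n i) m : ℚ))
      = (∑ T ∈ (Finset.univ : Finset (Finset (Fin L))).filter (fun T => j ∉ T),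
          (-1 : ℚ) ^ T.card *
            (((Nat.descFactorial (n j) 2 * Nat.descFactorial m 2 : ℚ) /
                ((Nat.descFactorial (∑ i ∈ Tᶜ, n i) 2 : ℕ) : ℚ) +
              2 * (n j : ℚ) * (m : ℚ) / ((∑ i ∈ Tᶜ, n i : ℕ) : ℚ))
            * (Nat.choose (∑ i ∈ Tᶜ, n i) m : ℚ)))
        / (Nat.choose (∑ i, n i) m : ℚ) := by
    rw [Finset.sum_div]
    refine Finset.sum_congr rfl fun T _ => ?_
    rw [hcompl T]
    ring
  rw [step2]
  congr 1
  -- numerator identity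
  rw [← inclusion_exclusion L m
    (fun f => (∏ i, (Nat.choose (n i) (f i) : ℚ)) * ((f j : ℚ) * ((f j : ℚ) + 1)))]
  rw [← Finset.sum_filter_of_ne (p := fun T : Finset (Fin L) => j ∉ T) ?vanish]
  case vanish =>
    intro T _ hne
    by_contra hjT
    apply hne
    rw [Finset.sum_eq_zero, mul_zero]
    intro f hf
    rw [Finset.mem_filter] at hf
    have : f j = 0 := hf.2 j hjT
    rw [this]
    norm_num
  refine Finset.sum_congr rfl fun T hT => ?_
  rw [Finset.mem_filter] at hT
  rw [per_T L n m j T hT.2]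
end

section
/- Let n_1, ..., n_L be nonnegative integers with sum n, fix a sample size m and distinct indices j ≠ k. Then the sum over all tuples (m_1,...,m_L) with 0 < m_i ≤ n_i for all i and Σ m_i = m of [Π_i C(n_i, m_i) / C(n,m)] · m_j m_k equals the sum over all subsets T of {1,...,L} containing neither j nor k of (-1)^{|T|} · [n_j n_k (m)_2 / (n - n_T)_2] · C(n - n_T, m)/C(n,m), where n_T = Σ_{i ∈ T} n_i. -/
open Finset

private lemma sum_split {ι M : Type*} [DecidableEq ι] [AddCommMonoid M] {j k : ι} {s : Finset ι}
    (hj : j ∈ s) (hk : k ∈ s) (hjk : j ≠ k) (h : ι → M) :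
    ∑ t ∈ s, h t = h j + (h k + ∑ t ∈ (s.erase j).erase k, h t) := by
  rw [Finset.add_sum_erase _ h (Finset.mem_erase.mpr ⟨Ne.symm hjk, hk⟩),
      Finset.add_sum_erase _ h hj]

private lemma choose_succ_mul (a b : ℕ) : a.choose (b+1) * (b+1) = a * ((a-1).choose b) := by
  cases a with
  | zero => simp
  | succ a =>
    rw [Nat.succ_sub_one]
    exact (Nat.add_one_mul_choose_eq a b).symm

private lemma desc_choose (D m' : ℕ) :
    D.descFactorial 2 * (D-2).choose m' = (m'+2).descFactorial 2 * D.choose (m'+2) := by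
  match D with
  | 0 => simp [Nat.choose_eq_zero_of_lt]
  | 1 => simp [Nat.choose_eq_zero_of_lt]
  | (D+2) =>
    have h1 : (D+1) * D.choose m' = (D+1).choose (m'+1) * (m'+1) := Nat.add_one_mul_choose_eq D m'
    have h2 : (D+2) * (D+1).choose (m'+1) = (D+2).choose (m'+2) * (m'+2) := Nat.add_one_mul_choose_eq (D+1) (m'+1)
    have e1 : (D+2) - 1 = D+1 := rfl
    have e2 : (D+2) - 2 = D := rfl
    have e3 : (m'+2) - 1 = m'+1 := rfl
    simp only [Nat.descFactorial, e1, e2, e3, Nat.sub_zero, mul_one]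
    nlinarith [h1, h2]

private lemma vand {ι : Type*} [DecidableEq ι] (s : Finset ι) (n : ι → ℕ) (m : ℕ) :
    ∑ f ∈ s.piAntidiag m, ∏ i ∈ s, (n i).choose (f i) = (∑ i ∈ s, n i).choose m := by
  induction s using Finset.cons_induction generalizing m with
  | empty =>
    cases m with
    | zero => simp
    | succ m => simp
  | cons i s hi ih =>
    rw [Finset.piAntidiag_cons hi, Finset.sum_disjiUnion, Finset.sum_cons,
      Nat.add_choose_eq]
    refine Finset.sum_congr rfl fun p hp => ?_
    rw [Finset.sum_map]
    rw [← ih p.2, Finset.mul_sum]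
    refine Finset.sum_congr rfl fun g hg => ?_
    simp only [Finset.mem_piAntidiag] at hg
    have hgi : g i = 0 := by
      by_contra h
      exact hi (hg.2 i h)
    rw [Finset.prod_cons]
    simp only [addRightEmbedding_apply]
    congr 1
    · simp [hgi]
    · refine Finset.prod_congr rfl fun t ht => ?_
      have : t ≠ i := fun h => hi (h ▸ ht)
      simp [this]

private lemma sumJK {ι : Type*} [Fintype ι] [DecidableEq ι] (n : ι → ℕ) (m : ℕ) {j k : ι}
    (hjk : j ≠ k) :
    ∑ f ∈ Finset.univ.piAntidiag (m+2), (∏ i, (n i).choose (f i)) * (f j * f k)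
      = n j * n k * (∑ i, n i - 2).choose m := by
  classical
  -- kill nj = 0 / nk = 0 cases
  by_cases hnj : n j = 0
  · rw [hnj]
    simp only [zero_mul]
    refine Finset.sum_eq_zero fun f hf => ?_
    rcases Nat.eq_zero_or_pos (f j) with h | h
    · simp [h]
    · have : (n j).choose (f j) = 0 := by rw [hnj]; exact Nat.choose_eq_zero_of_lt h
      rw [Finset.prod_eq_zero (Finset.mem_univ j) this, zero_mul]
  by_cases hnk : n k = 0
  · rw [hnk]
    simp only [mul_zero, zero_mul]
    refine Finset.sum_eq_zero fun f hf => ?_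
    rcases Nat.eq_zero_or_pos (f k) with h | h
    · simp [h]
    · have : (n k).choose (f k) = 0 := by rw [hnk]; exact Nat.choose_eq_zero_of_lt h
      rw [Finset.prod_eq_zero (Finset.mem_univ k) this, zero_mul]
  -- new parameters
  set n' : ι → ℕ := fun t => if t = j then n j - 1 else if t = k then n k - 1 else n t with hn'
  have hsum' : ∑ i, n i - 2 = ∑ i, n' i := by
    have h1 := sum_split (Finset.mem_univ j) (Finset.mem_univ k) hjk n
    have h2 := sum_split (Finset.mem_univ j) (Finset.mem_univ k) hjk n'
    have h3 : ∑ t ∈ (Finset.univ.erase j).erase k, n' t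
        = ∑ t ∈ (Finset.univ.erase j).erase k, n t := by
      refine Finset.sum_congr rfl fun t ht => ?_
      simp only [Finset.mem_erase] at ht
      simp [hn', ht.1, ht.2.1]
    have hj' : n' j = n j - 1 := by simp [hn']
    have hk' : n' k = n k - 1 := by simp [hn', hjk.symm, Ne.symm hjk]
    omega
  rw [hsum', ← vand Finset.univ n' m, Finset.mul_sum]
  -- drop zero terms
  rw [← Finset.sum_filter_of_ne (p := fun f => 0 < f j ∧ 0 < f k)
    (fun f _ h => by
      constructor <;> by_contra hz <;> push_neg at hz <;>
        simp [Nat.le_zero.mp hz] at h)]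
  refine Finset.sum_bij'
    (i := fun f _ => fun t => f t - (if t = j then 1 else 0) - (if t = k then 1 else 0))
    (j := fun g _ => fun t => g t + (if t = j then 1 else 0) + (if t = k then 1 else 0))
    ?_ ?_ ?_ ?_ ?_
  · intro f hf
    simp only [Finset.mem_filter, Finset.mem_piAntidiag] at hf ⊢
    obtain ⟨⟨hfs, -⟩, hfj, hfk⟩ := hf
    refine ⟨?_, fun t _ => Finset.mem_univ t⟩
    have hd : ∀ t, (if t = j then 1 else 0) + (if t = k then 1 else 0) ≤ f t := by
      intro t
      by_cases h1 : t = j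
      · subst h1; simp [if_neg hjk]; omega
      · by_cases h2 : t = k
        · subst h2; simp [h1]; omega
        · simp [h1, h2]
    have e1 : ∀ t, f t - (if t = j then 1 else 0) - (if t = k then 1 else 0)
        = f t - ((if t = j then 1 else 0) + (if t = k then 1 else 0)) := fun t => by omega
    simp only [e1]
    rw [Finset.sum_tsub_distrib _ (fun t _ => hd t), Finset.sum_add_distrib]
    simp only [Finset.sum_ite_eq' Finset.univ, Finset.mem_univ, if_true]
    have hfs2 : ∑ t, f t = m + 2 := hfs
    omega
  · intro g hg
    simp only [Finset.mem_filter, Finset.mem_piAntidiag] at hg ⊢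
    obtain ⟨hgs, -⟩ := hg
    have hgs2 : ∑ t, g t = m := hgs
    refine ⟨⟨?_, fun t _ => Finset.mem_univ t⟩, ?_, ?_⟩
    · rw [Finset.sum_add_distrib, Finset.sum_add_distrib]
      simp only [Finset.sum_ite_eq' Finset.univ, Finset.mem_univ, if_true]
      omega
    · simp [if_neg hjk]
    · simp
  · intro f hf
    simp only [Finset.mem_filter] at hf
    obtain ⟨-, hfj, hfk⟩ := hf
    funext t
    by_cases htj : t = j
    · subst htj; simp [if_neg hjk]; omega
    · by_cases htk : t = k
      · subst htk; simp [if_neg (Ne.symm hjk), htj]; omega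
      · simp [htj, htk]
  · intro g hg
    funext t
    by_cases htj : t = j
    · subst htj; simp [if_neg hjk]
    · by_cases htk : t = k
      · subst htk; simp [htj]
      · simp [htj, htk]
  · intro f hf
    simp only [Finset.mem_filter, Finset.mem_piAntidiag] at hf
    obtain ⟨⟨hfs, -⟩, hfj, hfk⟩ := hf
    obtain ⟨a, ha⟩ := Nat.exists_eq_add_of_lt hfj
    obtain ⟨b, hb⟩ := Nat.exists_eq_add_of_lt hfk
    -- split products at j and k
    have hk' : k ∈ Finset.univ.erase j := Finset.mem_erase.mpr ⟨Ne.symm hjk, Finset.mem_univ k⟩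
    have hP1 := Finset.mul_prod_erase Finset.univ (fun i => (n i).choose (f i)) (Finset.mem_univ j)
    have hP2 := Finset.mul_prod_erase (Finset.univ.erase j) (fun i => (n i).choose (f i)) hk'
    set ψf : ι → ℕ := fun t => f t - (if t = j then 1 else 0) - (if t = k then 1 else 0) with hψ
    have hQ1 := Finset.mul_prod_erase Finset.univ (fun i => (n' i).choose (ψf i)) (Finset.mem_univ j)
    have hQ2 := Finset.mul_prod_erase (Finset.univ.erase j) (fun i => (n' i).choose (ψf i)) hk'
    have hrest : ∏ t ∈ (Finset.univ.erase j).erase k, (n' t).choose (ψf t)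
        = ∏ t ∈ (Finset.univ.erase j).erase k, (n t).choose (f t) := by
      refine Finset.prod_congr rfl fun t ht => ?_
      simp only [Finset.mem_erase] at ht
      simp [hn', hψ, ht.1, ht.2.1]
    have hψj : ψf j = f j - 1 := by simp [hψ, if_neg hjk]
    have hψk : ψf k = f k - 1 := by simp [hψ, if_neg (Ne.symm hjk)]
    have hn'j : n' j = n j - 1 := by simp [hn']
    have hn'k : n' k = n k - 1 := by simp [hn', hjk.symm, Ne.symm hjk]
    rw [← hP1, ← hP2, ← hQ1, ← hQ2, hrest]
    beta_reduce
    rw [hψj, hψk, hn'j, hn'k]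
    have hcj : (n j).choose (f j) * f j = n j * (n j - 1).choose (f j - 1) := by
      rw [ha]; simpa using choose_succ_mul (n j) a
    have hck : (n k).choose (f k) * f k = n k * (n k - 1).choose (f k - 1) := by
      rw [hb]; simpa using choose_succ_mul (n k) b
    set R := ∏ t ∈ (Finset.univ.erase j).erase k, (n t).choose (f t)
    calc (n j).choose (f j) * ((n k).choose (f k) * R) * (f j * f k)
        = ((n j).choose (f j) * f j) * ((n k).choose (f k) * f k) * R := by ring
      _ = (n j * (n j - 1).choose (f j - 1)) * (n k * (n k - 1).choose (f k - 1)) * R := by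
          rw [hcj, hck]
      _ = n j * n k * ((n j - 1).choose (f j - 1) * ((n k - 1).choose (f k - 1) * R)) := by ring

private lemma key_s5 (L : ℕ) (n : Fin L → ℕ) (m' : ℕ) {j k : Fin L}
    (hjk : j ≠ k) :
    ∑ f ∈ (Finset.univ.piAntidiag (m'+2)).filter (fun f => ∀ i, 0 < f i),
        (∏ i, ((n i).choose (f i) : ℚ)) * ((f j : ℚ) * (f k : ℚ))
    = ∑ T ∈ Finset.univ.filter (fun T : Finset (Fin L) => j ∉ T ∧ k ∉ T),
        (-1:ℚ)^T.card * ((n j * n k * ((∑ i ∈ Finset.univ \ T, n i - 2).choose m') : ℕ) : ℚ) := by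
  classical
  rw [Finset.sum_filter]
  have step1 : ∀ f : Fin L → ℕ, (if (∀ i, 0 < f i) then (∏ i, ((n i).choose (f i) : ℚ)) * ((f j : ℚ) * (f k : ℚ)) else 0)
      = ∑ T ∈ Finset.univ.filter (fun T : Finset (Fin L) => ∀ i ∈ T, f i = 0),
          (-1:ℚ)^T.card * ((∏ i, ((n i).choose (f i) : ℚ)) * ((f j : ℚ) * (f k : ℚ))) := by
    intro f
    have hps : Finset.univ.filter (fun T : Finset (Fin L) => ∀ i ∈ T, f i = 0)
        = (Finset.univ.filter (fun i => f i = 0)).powerset := by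
      ext T
      simp [Finset.subset_iff]
    rw [hps, ← Finset.sum_mul]
    have hz := Finset.sum_powerset_neg_one_pow_card (x := Finset.univ.filter (fun i => f i = 0))
    have hq : (∑ T ∈ (Finset.univ.filter (fun i => f i = 0)).powerset, (-1:ℚ)^T.card)
        = if Finset.univ.filter (fun i => f i = 0) = ∅ then 1 else 0 := by
      exact_mod_cast hz
    rw [hq]
    have hcond : (Finset.univ.filter (fun i => f i = 0) = ∅) ↔ ∀ i, 0 < f i := by
      simp [Finset.filter_eq_empty_iff, Nat.pos_iff_ne_zero]
    by_cases hc : ∀ i, 0 < f i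
    · rw [if_pos hc, if_pos (hcond.mpr hc), one_mul]
    · rw [if_neg hc, if_neg (fun h => hc (hcond.mp h)), zero_mul]
  simp only [step1]
  -- turn inner filtered sum into sum over all T with ite, then swap
  have step2 : ∀ f : Fin L → ℕ,
      (∑ T ∈ Finset.univ.filter (fun T : Finset (Fin L) => ∀ i ∈ T, f i = 0),
          (-1:ℚ)^T.card * ((∏ i, ((n i).choose (f i) : ℚ)) * ((f j : ℚ) * (f k : ℚ))))
      = ∑ T : Finset (Fin L), (if ∀ i ∈ T, f i = 0 then
          (-1:ℚ)^T.card * ((∏ i, ((n i).choose (f i) : ℚ)) * ((f j : ℚ) * (f k : ℚ))) else 0) :=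
    fun f => Finset.sum_filter _ _
  simp only [step2]
  rw [Finset.sum_comm]
  -- now per T
  have step3 : ∀ T : Finset (Fin L),
      (∑ f ∈ Finset.univ.piAntidiag (m'+2), if ∀ i ∈ T, f i = 0 then
          (-1:ℚ)^T.card * ((∏ i, ((n i).choose (f i) : ℚ)) * ((f j : ℚ) * (f k : ℚ))) else 0)
      = (-1:ℚ)^T.card * (((if j ∈ T then 0 else n j) * (if k ∈ T then 0 else n k) *
          ((∑ i, (if i ∈ T then 0 else n i)) - 2).choose m' : ℕ) : ℚ) := by
    intro T
    have inner : ∀ f ∈ Finset.univ.piAntidiag (m'+2),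
        (if ∀ i ∈ T, f i = 0 then
          (-1:ℚ)^T.card * ((∏ i, ((n i).choose (f i) : ℚ)) * ((f j : ℚ) * (f k : ℚ))) else 0)
        = (-1:ℚ)^T.card * ((∏ i, (((if i ∈ T then 0 else n i)).choose (f i) : ℚ)) * ((f j : ℚ) * (f k : ℚ))) := by
      intro f _
      by_cases hc : ∀ i ∈ T, f i = 0
      · rw [if_pos hc]
        congr 2
        refine Finset.prod_congr rfl fun i _ => ?_
        by_cases hiT : i ∈ T
        · rw [hc i hiT, if_pos hiT]; simp
        · rw [if_neg hiT]
      · rw [if_neg hc]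
        push_neg at hc
        obtain ⟨i0, hi0T, hi0⟩ := hc
        have : ((if i0 ∈ T then 0 else n i0).choose (f i0) : ℚ) = 0 := by
          rw [if_pos hi0T]
          rw [Nat.choose_eq_zero_of_lt (Nat.pos_of_ne_zero hi0)]
          simp
        rw [Finset.prod_eq_zero (Finset.mem_univ i0) this]
        ring
    rw [Finset.sum_congr rfl inner, ← Finset.mul_sum]
    congr 1
    have h := sumJK (fun i => if i ∈ T then 0 else n i) m' hjk
    rw [← h]
    push_cast
    rfl
  simp only [step3]
  -- restrict to T avoiding j and k
  rw [← Finset.sum_filter_of_ne (p := fun T : Finset (Fin L) => j ∉ T ∧ k ∉ T)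
    (fun T _ h => by
      constructor <;> intro hmem <;> apply h <;> simp [hmem])]
  refine Finset.sum_congr rfl fun T hT => ?_
  simp only [Finset.mem_filter] at hT
  obtain ⟨-, hjT, hkT⟩ := hT
  rw [if_neg hjT, if_neg hkT]
  have hsum : ∑ i, (if i ∈ T then 0 else n i) = ∑ i ∈ Finset.univ \ T, n i := by
    rw [← Finset.sum_filter_of_ne (p := fun i => i ∈ Finset.univ \ T)
      (fun i _ h => by
        simp only [Finset.mem_sdiff, Finset.mem_univ, true_and]
        intro hiT; rw [if_pos hiT] at h; exact h rfl)]
    refine Finset.sum_congr ?_ fun i hi => ?_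
    · ext i; simp
    · simp only [Finset.mem_sdiff] at hi
      rw [if_neg hi.2]
  rw [hsum]

theorem stmt5 (L : ℕ) (n : Fin L → ℕ) (m : ℕ) (j k : Fin L) (hjk : j ≠ k) :
    ∑ f ∈ (Finset.Nat.antidiagonalTuple L m).filter (fun f => ∀ i, 0 < f i ∧ f i ≤ n i),
      ((∏ i, (Nat.choose (n i) (f i) : ℚ)) / (Nat.choose (∑ i, n i) m : ℚ)) *
        ((f j : ℚ) * (f k : ℚ)) =
    ∑ T ∈ (Finset.univ : Finset (Finset (Fin L))).filter (fun T => j ∉ T ∧ k ∉ T),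
      (-1 : ℚ) ^ T.card *
        ((n j : ℚ) * (n k : ℚ) * (Nat.descFactorial m 2 : ℚ) /
            ((Nat.descFactorial (∑ i, n i - ∑ i ∈ T, n i) 2 : ℕ) : ℚ)) *
        ((Nat.choose (∑ i, n i - ∑ i ∈ T, n i) m : ℚ) / (Nat.choose (∑ i, n i) m : ℚ)) := by
  classical
  rcases lt_or_ge m 2 with hm | hm
  · -- degenerate case: m < 2
    have h1 : (Finset.Nat.antidiagonalTuple L m).filter (fun f => ∀ i, 0 < f i ∧ f i ≤ n i) = ∅ := by
      rw [Finset.eq_empty_iff_forall_notMem]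
      intro f hf
      simp only [Finset.mem_filter, Finset.Nat.mem_antidiagonalTuple] at hf
      obtain ⟨hsum, hpos⟩ := hf
      have hj' := (hpos j).1
      have hk' := (hpos k).1
      have hs := sum_split (Finset.mem_univ j) (Finset.mem_univ k) hjk f
      omega
    have hdf : m.descFactorial 2 = 0 := by interval_cases m <;> rfl
    rw [h1, Finset.sum_empty]
    symm
    refine Finset.sum_eq_zero fun T hT => ?_
    rw [hdf]
    push_cast
    ring
  · obtain ⟨m', rfl⟩ : ∃ m', m = m' + 2 := ⟨m - 2, by omega⟩
    rw [← Finset.piAntidiag_univ_fin_eq_antidiagonalTuple (m'+2) L]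
    -- factor out the common denominator on the left
    have lhs1 : ∀ f : Fin L → ℕ,
        ((∏ i, ((n i).choose (f i) : ℚ)) / ((∑ i, n i).choose (m'+2) : ℚ)) * ((f j : ℚ) * (f k : ℚ))
        = ((∏ i, ((n i).choose (f i) : ℚ)) * ((f j : ℚ) * (f k : ℚ))) *
            (((∑ i, n i).choose (m'+2) : ℚ))⁻¹ := by
      intro f; ring
    simp only [lhs1]
    rw [← Finset.sum_mul]
    -- enlarge the filter: drop the `f i ≤ n i` condition
    have hsub : (Finset.univ.piAntidiag (m'+2)).filter (fun f => ∀ i, 0 < f i ∧ f i ≤ n i)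
        ⊆ (Finset.univ.piAntidiag (m'+2)).filter (fun f => ∀ i, 0 < f i) := by
      intro f hf
      simp only [Finset.mem_filter] at hf ⊢
      exact ⟨hf.1, fun i => (hf.2 i).1⟩
    rw [Finset.sum_subset hsub (fun f hf hnf => ?_)]
    swap
    · -- vanishing of terms with f i > n i for some i
      simp only [Finset.mem_filter] at hf hnf
      have : ∃ i, n i < f i := by
        by_contra hcon
        push_neg at hcon
        exact hnf ⟨hf.1, fun i => ⟨hf.2 i, hcon i⟩⟩
      obtain ⟨i0, hi0⟩ := this
      have : ((n i0).choose (f i0) : ℚ) = 0 := by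
        rw [Nat.choose_eq_zero_of_lt hi0]; simp
      rw [Finset.prod_eq_zero (Finset.mem_univ i0) this, zero_mul]
    rw [key_s5 L n m' hjk, Finset.sum_mul]
    refine Finset.sum_congr rfl fun T hT => ?_
    simp only [Finset.mem_filter] at hT
    obtain ⟨-, hjT, hkT⟩ := hT
    -- identify the two expressions for the partial sum
    have hD : ∑ i, n i - ∑ i ∈ T, n i = ∑ i ∈ Finset.univ \ T, n i := by
      have := Finset.sum_sdiff (f := n) (Finset.subset_univ T)
      omega
    set D := ∑ i ∈ Finset.univ \ T, n i with hDdef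
    rw [hD]
    have main : ((n j * n k * ((D - 2).choose m') : ℕ) : ℚ)
        = (n j : ℚ) * (n k : ℚ) * ((m'+2).descFactorial 2 : ℚ) / ((D.descFactorial 2 : ℕ) : ℚ)
            * ((D.choose (m'+2) : ℕ) : ℚ) := by
      by_cases hz : n j = 0 ∨ n k = 0
      · rcases hz with hz | hz <;> rw [hz] <;> push_cast <;> ring
      · push_neg at hz
        have hD2 : 2 ≤ D := by
          have hjm : j ∈ Finset.univ \ T := by simp [hjT]
          have hkm : k ∈ Finset.univ \ T := by simp [hkT]
          have := sum_split hjm hkm hjk n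
          omega
        have hdf0 : ((D.descFactorial 2 : ℕ) : ℚ) ≠ 0 := by
          have h : D.descFactorial 2 ≠ 0 := fun hc =>
            absurd (Nat.descFactorial_eq_zero_iff_lt.mp hc) (by omega)
          exact_mod_cast h
        have hq : ((D.descFactorial 2 : ℕ):ℚ) * (((D-2).choose m' : ℕ) : ℚ)
            = (((m'+2).descFactorial 2 : ℕ) : ℚ) * ((D.choose (m'+2) : ℕ) : ℚ) := by
          exact_mod_cast congrArg (Nat.cast (R := ℚ)) (desc_choose D m')
        rw [div_mul_eq_mul_div, eq_div_iff hdf0, Nat.cast_mul, Nat.cast_mul]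
        linear_combination (n j : ℚ) * (n k : ℚ) * hq
    rw [main]
    ring
end

section
/- In the urn process started with two observed colors a and b (n_a and n_b balls respectively, n = n_a + n_b), the probability that color b is killed before color a (so that a is the root of the generated tree) equals n_a/n. -/
/-- In the two-color urn process, `g x y` is the probability that color `b` (with `y` balls)
is killed before color `a` (with `x` balls), so that `a` is the root of the generated tree.
It satisfies the one-step recursion of the urn process; the theorem asserts that the
probability that `a` survives, started from `(n_a, n_b)`, is `n_a / (n_a + n_b)`. -/
theorem stmt7 (g : ℕ → ℕ → ℚ)
    (hb1 : ∀ x, 0 < x → g x 0 = 1)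
    (hb2 : ∀ y, 0 < y → g 0 y = 0)
    (hrec : ∀ x y, 0 < x → 0 < y →
      g x y = ((x : ℚ) / ((x : ℚ) + y)) * g (x - 1) y +
        ((y : ℚ) / ((x : ℚ) + y)) * g x (y - 1))
    (na nb : ℕ) (hna : 0 < na) (hnb : 0 < nb) :
    g na nb = (na : ℚ) / ((na : ℚ) + nb) := by
  have key : ∀ n x y, x + y = n → 0 < x → 0 < y →
      g x y = (x : ℚ) / ((x : ℚ) + y) := by
    intro n
    induction n using Nat.strong_induction_on with
    | _ n ih =>
      intro x y hn hx hy
      obtain ⟨m, rfl⟩ : ∃ m, x = m + 1 := ⟨x - 1, by omega⟩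
      obtain ⟨k, rfl⟩ : ∃ k, y = k + 1 := ⟨y - 1, by omega⟩
      rw [hrec _ _ hx hy]
      simp only [zero_add, Nat.add_sub_cancel]
      have h1 : g m (k + 1) = (m : ℚ) / ((m : ℚ) + (k + 1)) := by
        rcases Nat.eq_zero_or_pos m with hm | hm
        · subst hm; simp [hb2 _ hy]
        · have := ih (m + (k + 1)) (by omega) m (k + 1) rfl hm hy
          push_cast at this ⊢
          exact this
      have h2 : g (m + 1) k = ((m : ℚ) + 1) / (((m : ℚ) + 1) + k) := by
        rcases Nat.eq_zero_or_pos k with hk | hk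
        · subst hk
          rw [hb1 _ hx, Nat.cast_zero, add_zero, div_self (by positivity)]
        · have := ih ((m + 1) + k) (by omega) (m + 1) k rfl hx hk
          push_cast at this ⊢
          linarith [this]
      rw [h1, h2]
      push_cast
      have hmk : ((m : ℚ) + 1) + ((k : ℚ) + 1) ≠ 0 := by positivity
      have hmk1 : (m : ℚ) + ((k : ℚ) + 1) ≠ 0 := by positivity
      have hmk2 : ((m : ℚ) + 1) + (k : ℚ) ≠ 0 := by positivity
      field_simp
      ring
  exact key (na + nb) na nb rfl hna hnb
end

section
/- In the urn process with three colors a, b, c, the probability that color a becomes the interior vertex of the (undirected) tree generated by the process — i.e., that a is chosen as the parent of the first color killed — equals n_a/n, where n = n_a + n_b + n_c. -/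
/-- In the three-color urn process, `h x y z` is the probability that color `a` is chosen
as the parent of the first color killed (i.e., `a` becomes the interior vertex of the
undirected tree generated by the process), started from `x, y, z` balls of colors
`a, b, c` respectively.  It satisfies the one-step recursion of the urn process:
if a color with a single ball loses that ball, it is killed and the parent is a
uniformly random remaining ball.  The theorem asserts `h n_a n_b n_c = n_a / n`. -/
theorem stmt8 (h : ℕ → ℕ → ℕ → ℚ)
    (hrec : ∀ x y z : ℕ, 0 < x → 0 < y → 0 < z →
      h x y z = ((x : ℚ) / ((x : ℚ) + y + z)) * (if 2 ≤ x then h (x - 1) y z else 0) +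
        ((y : ℚ) / ((x : ℚ) + y + z)) *
          (if 2 ≤ y then h x (y - 1) z else (x : ℚ) / ((x : ℚ) + y + z - 1)) +
        ((z : ℚ) / ((x : ℚ) + y + z)) *
          (if 2 ≤ z then h x y (z - 1) else (x : ℚ) / ((x : ℚ) + y + z - 1)))
    (na nb nc : ℕ) (ha : 0 < na) (hb : 0 < nb) (hc : 0 < nc) :
    h na nb nc = (na : ℚ) / ((na : ℚ) + nb + nc) := by
  have key : ∀ n x y z : ℕ, x + y + z = n → 0 < x → 0 < y → 0 < z →
      h x y z = (x : ℚ) / ((x : ℚ) + y + z) := by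
    intro n
    induction n using Nat.strong_induction_on with
    | _ n ih =>
      intro x y z hn hx hy hz
      have hx1 : (1 : ℚ) ≤ (x : ℚ) := by exact_mod_cast hx
      have hy1 : (1 : ℚ) ≤ (y : ℚ) := by exact_mod_cast hy
      have hz1 : (1 : ℚ) ≤ (z : ℚ) := by exact_mod_cast hz
      have hS : ((x : ℚ) + y + z) ≠ 0 := by positivity
      have hS1 : ((x : ℚ) + y + z - 1) ≠ 0 := by nlinarith
      rw [hrec x y z hx hy hz]
      have ta : (if 2 ≤ x then h (x - 1) y z else 0)
          = ((x : ℚ) - 1) / ((x : ℚ) + y + z - 1) := by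
        split_ifs with h2
        · have hlt : (x - 1) + y + z < n := by omega
          rw [ih _ hlt (x - 1) y z rfl (by omega) hy hz]
          have : ((x - 1 : ℕ) : ℚ) = (x : ℚ) - 1 := by
            push_cast [Nat.cast_sub (by omega : 1 ≤ x)]; ring
          rw [this]; ring_nf
        · have : x = 1 := by omega
          subst this; norm_num
      have tb : (if 2 ≤ y then h x (y - 1) z else (x : ℚ) / ((x : ℚ) + y + z - 1))
          = (x : ℚ) / ((x : ℚ) + y + z - 1) := by
        split_ifs with h2
        · have hlt : x + (y - 1) + z < n := by omega
          rw [ih _ hlt x (y - 1) z rfl hx (by omega) hz]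
          have : ((y - 1 : ℕ) : ℚ) = (y : ℚ) - 1 := by
            push_cast [Nat.cast_sub (by omega : 1 ≤ y)]; ring
          rw [this]; ring_nf
        · rfl
      have tc : (if 2 ≤ z then h x y (z - 1) else (x : ℚ) / ((x : ℚ) + y + z - 1))
          = (x : ℚ) / ((x : ℚ) + y + z - 1) := by
        split_ifs with h2
        · have hlt : x + y + (z - 1) < n := by omega
          rw [ih _ hlt x y (z - 1) rfl hx hy (by omega)]
          have : ((z - 1 : ℕ) : ℚ) = (z : ℚ) - 1 := by
            push_cast [Nat.cast_sub (by omega : 1 ≤ z)]; ring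
          rw [this]; ring_nf
        · rfl
      rw [ta, tb, tc]
      field_simp
      ring
  exact key (na + nb + nc) na nb nc rfl ha hb hc
end

section
/- Define R(n) on configurations n (over K colors) by R(n) = π_a when n is supported on a single color a, and for configurations with more than one observed color by the recursion R(n) = Σ_{i ≠ j in O_n} P_{ji} Σ_{m: 0 < m ≤ n, m_i = 1} [Π_k C(n_k,m_k)/C(n,|m|)] · m_j R(m - e_i + e_j) / (|m|(|m|-1)). Then R(n) = E_n[f_P(T)], where T is the random rooted tree on the observed colors O_n generated by the urn process and f_P(T) = π_{ρ(T)} Π_{(j→i) ∈ E(T)} P_{ji}. -/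
open scoped Classical

/-- The support (set of observed colors) of a configuration. -/
def supp {K : ℕ} (n : Fin K → ℕ) : Finset (Fin K) :=
  Finset.univ.filter fun i => 0 < n i

/-- `n - e_i`: remove one ball of color `i`. -/
def rm {K : ℕ} (n : Fin K → ℕ) (i : Fin K) : Fin K → ℕ :=
  fun k => n k - if k = i then 1 else 0

/-- `n - e_i + e_j`: replace a ball of color `i` by one of color `j`. -/
def mv {K : ℕ} (n : Fin K → ℕ) (i j : Fin K) : Fin K → ℕ :=
  fun k => n k - (if k = i then 1 else 0) + if k = j then 1 else 0

/-- A rooted tree on a subset of colors: a root together with a parent function. -/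
abbrev RTree (K : ℕ) := Fin K × (Fin K → Fin K)

/-- `T` is a rooted tree on the vertex set `S`. -/
def IsTreeOn {K : ℕ} (S : Finset (Fin K)) (T : RTree K) : Prop :=
  T.1 ∈ S ∧ T.2 T.1 = T.1 ∧ (∀ i, i ∉ S → T.2 i = i) ∧ (∀ i ∈ S, T.2 i ∈ S) ∧
    ∀ i ∈ S, ∃ k ∈ Finset.range (K + 1), T.2^[k] i = T.1

/-- Remove the leaf `i` from the tree `T`. -/
def rmLeaf {K : ℕ} (T : RTree K) (i : Fin K) : RTree K :=
  (T.1, fun k => if k = i then i else T.2 k)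

/-- `f_P(T) = π_{ρ(T)} ∏_{(j → i) ∈ E(T)} P_{ji}` for a tree `T` on vertex set `S`. -/
def fP {K : ℕ} (P : Fin K → Fin K → ℚ) (pI : Fin K → ℚ) (S : Finset (Fin K))
    (T : RTree K) : ℚ :=
  pI T.1 * ∏ i ∈ S.erase T.1, P (T.2 i) i

-- ### basic supp lemmas

lemma mem_supp {K : ℕ} {n : Fin K → ℕ} {i : Fin K} : i ∈ supp n ↔ 0 < n i := by
  simp [supp]

lemma supp_rm {K : ℕ} (n : Fin K → ℕ) (i : Fin K) (h : 2 ≤ n i) :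
    supp (rm n i) = supp n := by
  ext k
  simp only [mem_supp, rm]
  rcases eq_or_ne k i with hk | hk
  · subst hk; rw [if_pos rfl]; omega
  · rw [if_neg hk]; omega

lemma supp_mv {K : ℕ} (n : Fin K → ℕ) (i j : Fin K) (hi : n i = 1) (hj : 0 < n j)
    (hij : j ≠ i) : supp (mv n i j) = (supp n).erase i := by
  ext k
  simp only [mem_supp, Finset.mem_erase, mv]
  rcases eq_or_ne k i with hk | hk
  · subst hk
    rw [if_pos rfl, if_neg (fun h => hij h.symm)]
    simp [hi]
  · rw [if_neg hk]
    rcases eq_or_ne k j with rfl | hkj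
    · rw [if_pos rfl]; simp [hk, hj]
    · rw [if_neg hkj]; simp [hk]

lemma rm_add {K : ℕ} (n : Fin K → ℕ) (i : Fin K) (h : 0 < n i) (k : Fin K) :
    n k = rm n i k + (if k = i then 1 else 0) := by
  rcases eq_or_ne k i with hk | hk
  · subst hk; simp [rm]; omega
  · simp [rm, hk]

lemma sum_rm {K : ℕ} (n : Fin K → ℕ) (i : Fin K) (h : 0 < n i) :
    ∑ k, rm n i k = (∑ k, n k) - 1 := by
  have h2 : ∑ k, n k = (∑ k, rm n i k) + 1 := by
    conv_lhs => rw [show n = fun k => rm n i k + (if k = i then 1 else 0) from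
      funext (rm_add n i h)]
    rw [Finset.sum_add_distrib]
    simp
  omega

lemma sum_mv {K : ℕ} (n : Fin K → ℕ) (i j : Fin K) (h : 0 < n i) (hij : j ≠ i) :
    ∑ k, mv n i j k = ∑ k, n k := by
  have h0 : ∀ k, mv n i j k = rm n i k + (if k = j then 1 else 0) := fun k => rfl
  simp only [h0, Finset.sum_add_distrib, sum_rm n i h]
  have : 1 ≤ ∑ k, n k :=
    le_trans h (Finset.single_le_sum (fun _ _ => Nat.zero_le _) (Finset.mem_univ i))
  simp
  omega

lemma supp_single {K : ℕ} {n : Fin K → ℕ} {a : Fin K} (h : supp n = {a}) :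
    n = fun k => if k = a then n a else 0 := by
  funext k
  rcases eq_or_ne k a with rfl | hk
  · simp
  · simp only [if_neg hk]
    by_contra hnk
    have : k ∈ supp n := mem_supp.2 (Nat.pos_of_ne_zero hnk)
    rw [h, Finset.mem_singleton] at this
    exact hk this

-- ### iterate lemmas

lemma iterate_fix {α : Type*} {f : α → α} {r : α} (hr : f r = r) {x : α} {k K' : ℕ}
    (hk : f^[k] x = r) (hkK : k ≤ K') : f^[K'] x = r := by
  rw [← Nat.sub_add_cancel hkK, Function.iterate_add_apply, hk, Function.iterate_fixed hr]

lemma iterate_card {K : ℕ} {f : Fin K → Fin K} {r : Fin K} (hr : f r = r)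
    {S' : Finset (Fin K)} (hS : ∀ x ∈ S', f x ∈ S') {x : Fin K} (hx : x ∈ S') {k : ℕ}
    (hk : f^[k] x = r) : f^[S'.card] x = r := by
  set c := S'.card with hc
  have hit : ∀ t, f^[t] x ∈ S' := by
    intro t
    induction t with
    | zero => exact hx
    | succ t ih => rw [Function.iterate_succ_apply']; exact hS _ ih
  have hcard : S'.card < (Finset.range (c + 1)).card := by
    rw [Finset.card_range]; omega
  obtain ⟨a, _, b, _, hab, he⟩ :=
    Finset.exists_ne_map_eq_of_card_lt_of_maps_to hcard (fun t _ => hit t)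
  wlog hlt : a < b generalizing a b
  · exact this b ‹_› a ‹_› hab.symm he.symm (by omega)
  have hbc : b ≤ c := by
    have := Finset.mem_range.1 ‹b ∈ Finset.range (c + 1)›; omega
  set p := b - a with hp
  have hp1 : 1 ≤ p := by omega
  have hper : ∀ s, a ≤ s → f^[s + p] x = f^[s] x := by
    intro s hs
    have e1 : f^[s + p] x = f^[s - a] (f^[a + p] x) := by
      rw [← Function.iterate_add_apply]; congr 1; omega
    have e2 : a + p = b := by omega
    rw [e1, e2, ← he, ← Function.iterate_add_apply]
    congr 1; omega
  have hper2 : ∀ t, f^[c + t * p] x = f^[c] x := by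
    intro t
    induction t with
    | zero => simp
    | succ t ih =>
      have : c + (t + 1) * p = (c + t * p) + p := by ring
      rw [this, hper _ (by omega), ih]
  have h1 : f^[c] x = f^[c + k * p] x := (hper2 k).symm
  rw [h1]
  exact iterate_fix hr hk (by nlinarith)

lemma treeOn_singleton {K : ℕ} (a : Fin K) : IsTreeOn {a} ((a, fun k => k) : RTree K) := by
  refine ⟨Finset.mem_singleton_self a, rfl, fun i _ => rfl, fun i hi => hi, fun i hi => ?_⟩
  exact ⟨0, by simp, by rw [Finset.mem_singleton] at hi; simpa using hi⟩

lemma card_le_K {K : ℕ} (S : Finset (Fin K)) : S.card ≤ K := by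
  simpa using Finset.card_le_univ S

lemma tree_iterate {K : ℕ} {S : Finset (Fin K)} {T : RTree K} (h : IsTreeOn S T)
    {x : Fin K} (hx : x ∈ S) : T.2^[S.card] x = T.1 := by
  obtain ⟨k, _, he⟩ := h.2.2.2.2 x hx
  exact iterate_card h.2.1 h.2.2.2.1 hx he

lemma rmLeaf_agree {K : ℕ} (T : RTree K) {i k : Fin K} (h : k ≠ i) :
    (rmLeaf T i).2 k = T.2 k := if_neg h

lemma tree_of_rmLeaf {K : ℕ} {S : Finset (Fin K)} {T : RTree K} {i j : Fin K}
    (hi : i ∈ S) (hj : j ∈ S.erase i) (hij : T.2 i = j)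
    (h : IsTreeOn (S.erase i) (rmLeaf T i)) : IsTreeOn S T := by
  obtain ⟨hr1, hr2, hr3, hr4, hr5⟩ := h
  have hji : j ≠ i := (Finset.mem_erase.1 hj).1
  have hri : T.1 ≠ i := (Finset.mem_erase.1 hr1).1
  have hag : ∀ x ∈ S.erase i, ∀ t,
      (rmLeaf T i).2^[t] x = T.2^[t] x ∧ T.2^[t] x ∈ S.erase i := by
    intro x hx t
    induction t with
    | zero => exact ⟨rfl, hx⟩
    | succ t ih =>
      obtain ⟨e, m⟩ := ih
      constructor
      · rw [Function.iterate_succ_apply', Function.iterate_succ_apply', e,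
          rmLeaf_agree T (Finset.mem_erase.1 m).1]
      · rw [Function.iterate_succ_apply', ← rmLeaf_agree T (Finset.mem_erase.1 m).1]
        exact hr4 _ m
  have hroot : T.2 T.1 = T.1 := by
    rw [← rmLeaf_agree T hri]; exact hr2
  have hinto : ∀ k ∈ S, T.2 k ∈ S := by
    intro k hk
    rcases eq_or_ne k i with hk' | hk'
    · rw [hk', hij]; exact Finset.mem_of_mem_erase hj
    · rw [← rmLeaf_agree T hk']
      exact Finset.mem_of_mem_erase (hr4 k (Finset.mem_erase.2 ⟨hk', hk⟩))
  refine ⟨Finset.mem_of_mem_erase hr1, hroot, ?_, hinto, ?_⟩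
  · intro k hk
    have hk' : k ≠ i := fun h' => hk (h' ▸ hi)
    rw [← rmLeaf_agree T hk']
    exact hr3 k (fun h' => hk (Finset.mem_of_mem_erase h'))
  · intro k hk
    rcases eq_or_ne k i with hk' | hk'
    · subst hk'
      obtain ⟨t, _, ht⟩ := hr5 j hj
      have hjt : T.2^[t] j = T.1 := by rw [← (hag j hj t).1]; exact ht
      have : T.2^[t + 1] k = T.1 := by
        rw [Function.iterate_add_apply, Function.iterate_one, hij]; exact hjt
      exact ⟨S.card, Finset.mem_range.2 (Nat.lt_succ_of_le (card_le_K S)),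
        iterate_card hroot hinto hk this⟩
    · obtain ⟨t, htr, ht⟩ := hr5 k (Finset.mem_erase.2 ⟨hk', hk⟩)
      exact ⟨t, htr, by rw [← (hag k (Finset.mem_erase.2 ⟨hk', hk⟩) t).1]; exact ht⟩

-- ### Pn vanishes on non-trees

lemma Pn_vanish {K : ℕ} (Pn : (Fin K → ℕ) → RTree K → ℚ)
    (hbase : ∀ (n : Fin K → ℕ) (a : Fin K), supp n = {a} →
      ∀ T : RTree K, Pn n T = if T = (a, fun k => k) then 1 else 0)
    (hstep : ∀ n : Fin K → ℕ, 2 ≤ (supp n).card → ∀ T : RTree K,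
      Pn n T = ∑ i ∈ supp n, ((n i : ℚ) / ((∑ k, n k : ℕ) : ℚ)) *
        (if 2 ≤ n i then Pn (rm n i) T
         else ∑ j ∈ (supp n).erase i, ((n j : ℚ) / (((∑ k, n k : ℕ) : ℚ) - 1)) *
           (if T.2 i = j then Pn (mv n i j) (rmLeaf T i) else 0))) :
    ∀ (n : Fin K → ℕ), (supp n).Nonempty → ∀ T : RTree K,
      ¬ IsTreeOn (supp n) T → Pn n T = 0 := by
  have main : ∀ c N (n : Fin K → ℕ), (supp n).card ≤ c → (∑ k, n k) ≤ N →
      (supp n).Nonempty → ∀ T : RTree K, ¬ IsTreeOn (supp n) T → Pn n T = 0 := by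
    intro c
    induction c with
    | zero =>
      intro N n hc _ hne
      exact absurd (Finset.card_pos.2 hne) (by omega)
    | succ c ihc =>
      intro N
      induction N with
      | zero =>
        intro n _ hN hne
        obtain ⟨a, ha⟩ := hne
        have : 0 < n a := mem_supp.1 ha
        have : n a ≤ ∑ k, n k :=
          Finset.single_le_sum (fun _ _ => Nat.zero_le _) (Finset.mem_univ a)
        omega
      | succ N ihN =>
        intro n hc hN hne T hT
        by_cases h1 : (supp n).card ≤ 1
        · have hcard : (supp n).card = 1 := le_antisymm h1 (Finset.card_pos.2 hne)
          obtain ⟨a, ha⟩ := Finset.card_eq_one.1 hcard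
          rw [hbase n a ha T, if_neg]
          rintro rfl
          exact hT (by rw [ha]; exact treeOn_singleton a)
        · have h2 : 2 ≤ (supp n).card := by omega
          rw [hstep n h2 T]
          apply Finset.sum_eq_zero
          intro i hi
          have hi' : 0 < n i := mem_supp.1 hi
          apply mul_eq_zero_of_right
          rcases le_or_gt 2 (n i) with hni | hni
          · rw [if_pos hni]
            have hs := supp_rm n i hni
            exact ihN (rm n i) (by rw [hs]; exact hc)
              (by rw [sum_rm n i hi']; omega) (by rw [hs]; exact hne) T (by rw [hs]; exact hT)
          · rw [if_neg (by omega)]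
            apply Finset.sum_eq_zero
            intro j hj
            apply mul_eq_zero_of_right
            have hni1 : n i = 1 := by omega
            have hj' : 0 < n j := mem_supp.1 (Finset.mem_of_mem_erase hj)
            have hji : j ≠ i := (Finset.mem_erase.1 hj).1
            split_ifs with hTij
            · have hsm : supp (mv n i j) = (supp n).erase i := supp_mv n i j hni1 hj' hji
              have hcm : (supp (mv n i j)).card ≤ c := by
                rw [hsm, Finset.card_erase_of_mem hi]; omega
              have hnem : (supp (mv n i j)).Nonempty := by
                rw [hsm]
                apply Finset.card_pos.1
                rw [Finset.card_erase_of_mem hi]; omega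
              refine ihc (∑ k, mv n i j k) (mv n i j) hcm le_rfl hnem (rmLeaf T i) ?_
              rw [hsm]
              intro htree
              exact hT (tree_of_rmLeaf hi hj hTij htree)
            · rfl
  intro n hne T hT
  exact main (supp n).card (∑ k, n k) n le_rfl le_rfl hne T hT

-- ### leaf addition/removal

def addLeaf {K : ℕ} (T : RTree K) (i j : Fin K) : RTree K :=
  (T.1, fun k => if k = i then j else T.2 k)

lemma addLeaf_agree {K : ℕ} (T : RTree K) {i k : Fin K} (j : Fin K) (h : k ≠ i) :
    (addLeaf T i j).2 k = T.2 k := if_neg h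

lemma rmLeaf_addLeaf {K : ℕ} (T : RTree K) (i j : Fin K) (h : T.2 i = i) :
    rmLeaf (addLeaf T i j) i = T := by
  refine Prod.ext rfl ?_
  funext k
  rcases eq_or_ne k i with hk | hk
  · subst hk; simp [rmLeaf, h]
  · simp [rmLeaf, addLeaf, hk]

lemma addLeaf_rmLeaf {K : ℕ} (T : RTree K) (i j : Fin K) (h : T.2 i = j) :
    addLeaf (rmLeaf T i) i j = T := by
  refine Prod.ext rfl ?_
  funext k
  rcases eq_or_ne k i with hk | hk
  · subst hk; simp [addLeaf, h]
  · simp [rmLeaf, addLeaf, hk]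

lemma iterate_agree {K : ℕ} {f g : Fin K → Fin K} {S' : Finset (Fin K)}
    (hfg : ∀ x ∈ S', f x = g x) (hcl : ∀ x ∈ S', f x ∈ S') {x : Fin K} (hx : x ∈ S')
    (t : ℕ) : f^[t] x = g^[t] x ∧ f^[t] x ∈ S' := by
  induction t with
  | zero => exact ⟨rfl, hx⟩
  | succ t ih =>
    obtain ⟨e, m⟩ := ih
    refine ⟨?_, ?_⟩
    · rw [Function.iterate_succ_apply', Function.iterate_succ_apply', ← e, hfg _ m]
    · rw [Function.iterate_succ_apply']; exact hcl _ m

lemma root_ne {K : ℕ} {S : Finset (Fin K)} {T : RTree K} {i j : Fin K}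
    (hT : IsTreeOn S T) (hij : T.2 i = j) (hji : j ≠ i) : T.1 ≠ i := by
  intro h
  exact hji (by rw [← hij, ← h, hT.2.1, h])

lemma rmLeaf_tree {K : ℕ} {S : Finset (Fin K)} {T : RTree K} {i j : Fin K}
    (hi : i ∈ S) (hj : j ∈ S.erase i) (hT : IsTreeOn S T) (hij : T.2 i = j)
    (hleaf : ∀ k ∈ S.erase i, T.2 k ≠ i) : IsTreeOn (S.erase i) (rmLeaf T i) := by
  have hji : j ≠ i := (Finset.mem_erase.1 hj).1
  have hri : T.1 ≠ i := root_ne hT hij hji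
  have hinto : ∀ k ∈ S.erase i, T.2 k ∈ S.erase i := fun k hk =>
    Finset.mem_erase.2 ⟨hleaf k hk, hT.2.2.2.1 k (Finset.mem_of_mem_erase hk)⟩
  have hfg : ∀ x ∈ S.erase i, T.2 x = (rmLeaf T i).2 x := fun x hx =>
    (rmLeaf_agree T (Finset.mem_erase.1 hx).1).symm
  refine ⟨Finset.mem_erase.2 ⟨hri, hT.1⟩, ?_, ?_, ?_, ?_⟩
  · show (rmLeaf T i).2 T.1 = T.1
    rw [rmLeaf_agree T hri]; exact hT.2.1
  · intro k hk
    rcases eq_or_ne k i with hk' | hk'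
    · subst hk'; exact if_pos rfl
    · rw [rmLeaf_agree T hk']
      exact hT.2.2.1 k (fun h => hk (Finset.mem_erase.2 ⟨hk', h⟩))
  · intro k hk
    rw [rmLeaf_agree T (Finset.mem_erase.1 hk).1]
    exact hinto k hk
  · intro k hk
    obtain ⟨t, htr, ht⟩ := hT.2.2.2.2 k (Finset.mem_of_mem_erase hk)
    exact ⟨t, htr, by rw [← (iterate_agree hfg hinto hk t).1]; exact ht⟩

lemma fP_factor {K : ℕ} (P : Fin K → Fin K → ℚ) (pI : Fin K → ℚ) {S : Finset (Fin K)}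
    {T : RTree K} {i j : Fin K} (hT : IsTreeOn S T) (hij : T.2 i = j)
    (hj : j ∈ S.erase i) (hi : i ∈ S) :
    fP P pI S T = P j i * fP P pI (S.erase i) (rmLeaf T i) := by
  have hji : j ≠ i := (Finset.mem_erase.1 hj).1
  have hri : T.1 ≠ i := root_ne hT hij hji
  have hiS : i ∈ S.erase T.1 := Finset.mem_erase.2 ⟨fun h => hri h.symm, hi⟩
  unfold fP
  rw [← Finset.mul_prod_erase _ _ hiS, hij]
  have : (S.erase T.1).erase i = (S.erase i).erase (rmLeaf T i).1 := by
    rw [Finset.erase_right_comm]; rfl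
  rw [this]
  have : ∏ k ∈ (S.erase i).erase (rmLeaf T i).1, P (T.2 k) k =
      ∏ k ∈ (S.erase i).erase (rmLeaf T i).1, P ((rmLeaf T i).2 k) k := by
    refine Finset.prod_congr rfl fun k hk => ?_
    rw [rmLeaf_agree T (Finset.mem_erase.1 (Finset.mem_of_mem_erase hk)).1]
  rw [this]
  have hroot : (rmLeaf T i).1 = T.1 := rfl
  rw [hroot]
  ring

-- ### the leaf bijection sum identity

lemma leaf_bij_sum {K : ℕ} (P : Fin K → Fin K → ℚ) (pI : Fin K → ℚ)
    (S : Finset (Fin K)) (i j : Fin K) (hi : i ∈ S) (hj : j ∈ S.erase i)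
    (Q : RTree K → ℚ) (hQ : ∀ T', ¬ IsTreeOn (S.erase i) T' → Q T' = 0) :
    ∑ T : RTree K, (if IsTreeOn S T then
        (if T.2 i = j then Q (rmLeaf T i) else 0) * fP P pI S T else 0)
      = P j i * ∑ T' : RTree K,
        (if IsTreeOn (S.erase i) T' then Q T' * fP P pI (S.erase i) T' else 0) := by
  classical
  have hji : j ≠ i := (Finset.mem_erase.1 hj).1
  have hL : ∑ T : RTree K, (if IsTreeOn S T then
      (if T.2 i = j then Q (rmLeaf T i) else 0) * fP P pI S T else 0)
      = ∑ T ∈ Finset.univ.filter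
          (fun T : RTree K => IsTreeOn S T ∧ T.2 i = j ∧ ∀ k ∈ S.erase i, T.2 k ≠ i),
          Q (rmLeaf T i) * fP P pI S T := by
    refine ((Finset.sum_subset (Finset.filter_subset _ _) ?_).symm).trans
      (Finset.sum_congr rfl ?_)
    · intro T _ hTA
      by_cases h1 : IsTreeOn S T
      · rw [if_pos h1]
        by_cases h2 : T.2 i = j
        · rw [if_pos h2]
          have h3 : ¬ ∀ k ∈ S.erase i, T.2 k ≠ i := by
            intro h3
            exact hTA (Finset.mem_filter.2 ⟨Finset.mem_univ _, h1, h2, h3⟩)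
          push_neg at h3
          obtain ⟨k, hk, hki⟩ := h3
          have : ¬ IsTreeOn (S.erase i) (rmLeaf T i) := by
            intro htree
            have := htree.2.2.2.1 k hk
            rw [rmLeaf_agree T (Finset.mem_erase.1 hk).1, hki] at this
            exact (Finset.mem_erase.1 this).1 rfl
          rw [hQ _ this, zero_mul]
        · rw [if_neg h2, zero_mul]
      · rw [if_neg h1]
    · intro T hT
      obtain ⟨h1, h2, _⟩ := (Finset.mem_filter.1 hT).2
      rw [if_pos h1, if_pos h2]
  have hR : ∑ T' : RTree K, (if IsTreeOn (S.erase i) T' then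
      Q T' * fP P pI (S.erase i) T' else 0)
      = ∑ T' ∈ Finset.univ.filter (fun T' : RTree K => IsTreeOn (S.erase i) T'),
          Q T' * fP P pI (S.erase i) T' := by
    refine ((Finset.sum_subset (Finset.filter_subset _ _) ?_).symm).trans
      (Finset.sum_congr rfl ?_)
    · intro T' _ hT'B
      rw [if_neg (fun h => hT'B (Finset.mem_filter.2 ⟨Finset.mem_univ _, h⟩))]
    · exact fun T' hT' => if_pos (Finset.mem_filter.1 hT').2
  rw [hL, hR, Finset.mul_sum]
  refine Finset.sum_nbij' (fun T => rmLeaf T i) (fun T' => addLeaf T' i j) ?_ ?_ ?_ ?_ ?_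
  · intro T hT
    obtain ⟨h1, h2, h3⟩ := (Finset.mem_filter.1 hT).2
    exact Finset.mem_filter.2 ⟨Finset.mem_univ _, rmLeaf_tree hi hj h1 h2 h3⟩
  · intro T' hT'
    have h1 : IsTreeOn (S.erase i) T' := (Finset.mem_filter.1 hT').2
    have hfixi : T'.2 i = i := h1.2.2.1 i (fun h => (Finset.mem_erase.1 h).1 rfl)
    have h2 : (addLeaf T' i j).2 i = j := if_pos rfl
    have h3 : ∀ k ∈ S.erase i, (addLeaf T' i j).2 k ≠ i := by
      intro k hk
      rw [addLeaf_agree T' j (Finset.mem_erase.1 hk).1]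
      exact (Finset.mem_erase.1 (h1.2.2.2.1 k hk)).1
    have h4 : IsTreeOn S (addLeaf T' i j) := by
      refine tree_of_rmLeaf hi hj h2 ?_
      rw [rmLeaf_addLeaf T' i j hfixi]
      exact h1
    exact Finset.mem_filter.2 ⟨Finset.mem_univ _, h4, h2, h3⟩
  · intro T hT
    exact addLeaf_rmLeaf T i j (Finset.mem_filter.1 hT).2.2.1
  · intro T' hT'
    exact rmLeaf_addLeaf T' i j
      (((Finset.mem_filter.1 hT').2).2.2.1 i (fun h => (Finset.mem_erase.1 h).1 rfl))
  · intro T hT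
    obtain ⟨h1, h2, _⟩ := (Finset.mem_filter.1 hT).2
    rw [fP_factor P pI h1 h2 hj hi]
    ring

-- ### the hypergeometric weight

def W {K : ℕ} (n m : Fin K → ℕ) : ℚ :=
  (∏ k, (Nat.choose (n k) (m k) : ℚ)) / (Nat.choose (∑ k, n k) (∑ k, m k) : ℚ)

def Cnd {K : ℕ} (n : Fin K → ℕ) (i : Fin K) (m : Fin K → ℕ) : Prop :=
  (∀ k, m k ≤ n k) ∧ (∀ k, (0 < m k ↔ 0 < n k)) ∧ m i = 1

lemma W_self {K : ℕ} (n : Fin K → ℕ) : W n n = 1 := by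
  unfold W
  rw [Nat.choose_self]
  simp [Nat.choose_self]

lemma nat_key {a b : ℕ} (h : b < a) : a * Nat.choose (a - 1) b = (a - b) * Nat.choose a b := by
  have h1 : a - 1 + 1 = a := by omega
  have h2 := Nat.add_one_mul_choose_eq (a - 1) b
  simp only [Nat.succ_eq_add_one, h1] at h2
  rw [h2, Nat.choose_succ_right_eq]
  exact mul_comm _ _

lemma W_decomp {K : ℕ} (n m : Fin K → ℕ) (hle : ∀ k, m k ≤ n k)
    (hlt : ∑ k, m k < ∑ k, n k) :
    W n m = ∑ i' : Fin K, (if m i' < n i' then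
      ((n i' : ℚ) / ((∑ k, n k : ℕ) : ℚ)) * W (rm n i') m else 0) := by
  classical
  set N := ∑ k, n k with hN
  set M := ∑ k, m k with hM
  have hMN : M ≤ N := Finset.sum_le_sum (fun k _ => hle k)
  have hN1 : 1 ≤ N := by omega
  have hMN1 : M ≤ N - 1 := by omega
  -- rewrite each summand
  have hsum_rm : ∀ i', m i' < n i' → ∑ k, rm n i' k = N - 1 := fun i' h =>
    sum_rm n i' (by omega)
  have key : ∀ i', (if m i' < n i' then
      ((n i' : ℚ) / ((N : ℕ) : ℚ)) * W (rm n i') m else 0)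
      = (((n i' : ℚ) - (m i' : ℚ)) * ∏ k, (Nat.choose (n k) (m k) : ℚ)) /
          (((N : ℕ) : ℚ) * ((Nat.choose (N - 1) M : ℕ) : ℚ)) := by
    intro i'
    by_cases h : m i' < n i'
    · rw [if_pos h]
      unfold W
      rw [hsum_rm i' h, ← hM]
      have hprod : (n i' : ℚ) * ∏ k, (Nat.choose (rm n i' k) (m k) : ℚ)
          = ((n i' : ℚ) - (m i' : ℚ)) * ∏ k, (Nat.choose (n k) (m k) : ℚ) := by
        rw [← Finset.mul_prod_erase Finset.univ _ (Finset.mem_univ i'),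
            ← Finset.mul_prod_erase Finset.univ (fun k => (Nat.choose (n k) (m k) : ℚ))
              (Finset.mem_univ i')]
        have h1 : ∏ k ∈ Finset.univ.erase i', (Nat.choose (rm n i' k) (m k) : ℚ)
            = ∏ k ∈ Finset.univ.erase i', (Nat.choose (n k) (m k) : ℚ) := by
          refine Finset.prod_congr rfl fun k hk => ?_
          have : rm n i' k = n k := by simp [rm, Finset.ne_of_mem_erase hk]
          rw [this]
        rw [h1, ← mul_assoc, ← mul_assoc]
        congr 1
        have hrm : rm n i' i' = n i' - 1 := by simp [rm]
        rw [hrm]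
        have := nat_key h
        have hc : ((n i' * Nat.choose (n i' - 1) (m i') : ℕ) : ℚ)
            = (((n i' - m i') * Nat.choose (n i') (m i') : ℕ) : ℚ) := by
          exact_mod_cast congrArg (Nat.cast : ℕ → ℚ) this
        push_cast [Nat.cast_sub (le_of_lt h)] at hc
        linarith [hc]
      rw [div_mul_div_comm, hprod]
    · rw [if_neg h]
      have : m i' = n i' := le_antisymm (hle i') (by omega)
      rw [this]
      simp
  rw [Finset.sum_congr rfl (fun i' _ => key i'), ← Finset.sum_div, ← Finset.sum_mul]
  have hsub : ∑ i', ((n i' : ℚ) - (m i' : ℚ)) = ((N : ℕ) : ℚ) - ((M : ℕ) : ℚ) := by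
    rw [Finset.sum_sub_distrib, hN, hM, Nat.cast_sum, Nat.cast_sum]
  rw [hsub]
  unfold W
  rw [← hN, ← hM]
  have hCN : ((Nat.choose N M : ℕ) : ℚ) ≠ 0 := Nat.cast_ne_zero.2 (Nat.choose_pos hMN).ne'
  have hC' : ((Nat.choose (N - 1) M : ℕ) : ℚ) ≠ 0 := Nat.cast_ne_zero.2 (Nat.choose_pos hMN1).ne'
  have hNQ : ((N : ℕ) : ℚ) ≠ 0 := Nat.cast_ne_zero.2 (by omega)
  rw [div_eq_div_iff hCN (mul_ne_zero hNQ hC')]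
  have hid : ((N : ℕ) : ℚ) * ((Nat.choose (N - 1) M : ℕ) : ℚ)
      = (((N : ℕ) : ℚ) - ((M : ℕ) : ℚ)) * ((Nat.choose N M : ℕ) : ℚ) := by
    have hnat := nat_key hlt
    have hc : ((N * Nat.choose (N - 1) M : ℕ) : ℚ) = (((N - M) * Nat.choose N M : ℕ) : ℚ) :=
      congrArg (Nat.cast : ℕ → ℚ) hnat
    push_cast [Nat.cast_sub hMN] at hc
    linarith [hc]
  linear_combination (∏ k, (Nat.choose (n k) (m k) : ℚ)) * hid

-- ### sum conversion and condition lemmas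

lemma sum_fin_pi {K : ℕ} (n : Fin K → ℕ) (ψ : (Fin K → ℕ) → ℚ) :
    ∑ g : (∀ k : Fin K, Fin (n k + 1)), ψ (fun k => (g k : ℕ))
      = ∑ m ∈ Fintype.piFinset (fun k => Finset.range (n k + 1)), ψ m := by
  classical
  refine Finset.sum_nbij' (fun g => fun k => (g k : ℕ))
    (fun m => fun k => (⟨min (m k) (n k), by omega⟩ : Fin (n k + 1))) ?_ ?_ ?_ ?_ ?_
  · intro g _
    exact Fintype.mem_piFinset.2 fun k => Finset.mem_range.2 (g k).isLt
  · intro m _; exact Finset.mem_univ _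
  · intro g _
    funext k
    have := (g k).isLt
    exact Fin.ext (by simp; omega)
  · intro m hm
    funext k
    have := Finset.mem_range.1 (Fintype.mem_piFinset.1 hm k)
    simp; omega
  · intro g _; rfl

lemma Cnd_self {K : ℕ} (n : Fin K → ℕ) (i : Fin K) : Cnd n i n ↔ n i = 1 :=
  ⟨fun h => h.2.2, fun h => ⟨fun k => le_rfl, fun k => Iff.rfl, h⟩⟩

lemma rm_self {K : ℕ} (n : Fin K → ℕ) (i' : Fin K) : rm n i' i' = n i' - 1 := by
  simp [rm]

lemma rm_other {K : ℕ} (n : Fin K → ℕ) (i' : Fin K) {k : Fin K} (h : k ≠ i') :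
    rm n i' k = n k := by simp [rm, h]

lemma Cnd_rm {K : ℕ} (n m : Fin K → ℕ) (i i' : Fin K) (h2 : 2 ≤ n i') :
    Cnd (rm n i') i m ↔ Cnd n i m ∧ m i' < n i' := by
  unfold Cnd
  constructor
  · rintro ⟨hle, hsupp, hi⟩
    have hlei' := hle i'
    rw [rm_self] at hlei'
    refine ⟨⟨fun k => ?_, fun k => ?_, hi⟩, by omega⟩
    · rcases eq_or_ne k i' with hk | hk
      · rw [hk]; have := hle i'; rw [rm_self] at this; omega
      · have := hle k; rwa [rm_other n i' hk] at this
    · rcases eq_or_ne k i' with hk | hk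
      · rw [hk]
        have := hsupp i'
        rw [rm_self] at this
        omega
      · have := hsupp k; rwa [rm_other n i' hk] at this
  · rintro ⟨⟨hle, hsupp, hi⟩, hlt⟩
    refine ⟨fun k => ?_, fun k => ?_, hi⟩
    · rcases eq_or_ne k i' with hk | hk
      · rw [hk, rm_self]; have := hle i'; omega
      · rw [rm_other n i' hk]; exact hle k
    · rcases eq_or_ne k i' with hk | hk
      · rw [hk, rm_self]
        have := hsupp i'
        omega
      · rw [rm_other n i' hk]; exact hsupp k

lemma Cnd_supp {K : ℕ} {n m : Fin K → ℕ} (h : ∀ k, (0 < m k ↔ 0 < n k)) :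
    supp m = supp n := by
  ext k; simp only [mem_supp]; exact h k

lemma sum_lt_of_le_ne {K : ℕ} {n m : Fin K → ℕ} (hle : ∀ k, m k ≤ n k) (hne : m ≠ n) :
    ∑ k, m k < ∑ k, n k := by
  obtain ⟨k0, hk0⟩ : ∃ k0, m k0 ≠ n k0 := by
    by_contra h; push_neg at h; exact hne (funext h)
  have h1 : m k0 < n k0 := lt_of_le_of_ne (hle k0) hk0
  calc ∑ k, m k = m k0 + ∑ k ∈ Finset.univ.erase k0, m k :=
        (Finset.add_sum_erase _ _ (Finset.mem_univ k0)).symm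
    _ < n k0 + ∑ k ∈ Finset.univ.erase k0, n k := by
        have : ∑ k ∈ Finset.univ.erase k0, m k ≤ ∑ k ∈ Finset.univ.erase k0, n k :=
          Finset.sum_le_sum fun k _ => hle k
        omega
    _ = ∑ k, n k := Finset.add_sum_erase _ _ (Finset.mem_univ k0)

lemma two_le_sum {K : ℕ} {n : Fin K → ℕ} (h2 : 2 ≤ (supp n).card) : 2 ≤ ∑ k, n k := by
  obtain ⟨a, ha, b, hb, hab⟩ := Finset.one_lt_card.1 h2
  have ha' : 0 < n a := mem_supp.1 ha
  have hb' : 0 < n b := mem_supp.1 hb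
  have : n a + n b ≤ ∑ k, n k := by
    have : ({a, b} : Finset (Fin K)) ⊆ Finset.univ := Finset.subset_univ _
    calc n a + n b = ∑ k ∈ ({a, b} : Finset (Fin K)), n k := by
          rw [Finset.sum_pair hab]
      _ ≤ ∑ k, n k := Finset.sum_le_sum_of_subset (Finset.subset_univ _)
  omega

-- ### the recursion functional

def DD {K : ℕ} (m : Fin K → ℕ) : ℚ :=
  ((∑ k, m k : ℕ) : ℚ) * (((∑ k, m k : ℕ) : ℚ) - 1)

def AA {K : ℕ} (n : Fin K → ℕ) : Finset (Fin K → ℕ) :=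
  Fintype.piFinset fun k => Finset.range (n k + 1)

def Body {K : ℕ} (F : (Fin K → ℕ) → ℚ) (n' : Fin K → ℕ) (i j : Fin K)
    (m : Fin K → ℕ) : ℚ :=
  W n' m * ((m j : ℕ) : ℚ) * F (mv m i j) / DD m

noncomputable def TT {K : ℕ} (P : Fin K → Fin K → ℚ) (F : (Fin K → ℕ) → ℚ) (n : Fin K → ℕ) : ℚ :=
  ∑ i ∈ supp n, ∑ j ∈ (supp n).erase i, P j i *
    ∑ m ∈ AA n, (if Cnd n i m then Body F n i j m else 0)

lemma hrec_convert {K : ℕ} (P : Fin K → Fin K → ℚ) (F G : (Fin K → ℕ) → ℚ)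
    (n : Fin K → ℕ)
    (hFG : ∀ i ∈ supp n, ∀ j ∈ (supp n).erase i, ∀ m : Fin K → ℕ,
      (∀ k, m k ≤ n k) → (∀ k, (0 < m k ↔ 0 < n k)) → m i = 1 →
      G (mv m i j) = F (mv m i j)) :
    (∑ i ∈ supp n, ∑ j ∈ (supp n).erase i, P j i *
      ∑ g : (∀ k : Fin K, Fin (n k + 1)),
        if (∀ k, (0 < (g k : ℕ) ↔ 0 < n k)) ∧ ((g i : ℕ) = 1) then
          ((∏ k, (Nat.choose (n k) (g k : ℕ) : ℚ)) /
              (Nat.choose (∑ k, n k) (∑ k, (g k : ℕ)) : ℚ)) *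
            ((g j : ℕ) : ℚ) * G (mv (fun k => (g k : ℕ)) i j) /
            (((∑ k, (g k : ℕ) : ℕ) : ℚ) * (((∑ k, (g k : ℕ) : ℕ) : ℚ) - 1))
        else 0)
    = TT P F n := by
  classical
  unfold TT
  refine Finset.sum_congr rfl fun i hi => Finset.sum_congr rfl fun j hj => ?_
  congr 1
  have h1 : (∑ g : (∀ k : Fin K, Fin (n k + 1)),
      if (∀ k, (0 < (g k : ℕ) ↔ 0 < n k)) ∧ ((g i : ℕ) = 1) then
        ((∏ k, (Nat.choose (n k) (g k : ℕ) : ℚ)) /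
            (Nat.choose (∑ k, n k) (∑ k, (g k : ℕ)) : ℚ)) *
          ((g j : ℕ) : ℚ) * G (mv (fun k => (g k : ℕ)) i j) /
          (((∑ k, (g k : ℕ) : ℕ) : ℚ) * (((∑ k, (g k : ℕ) : ℕ) : ℚ) - 1))
      else 0)
      = ∑ g : (∀ k : Fin K, Fin (n k + 1)),
        (fun m : Fin K → ℕ =>
          if (∀ k, (0 < m k ↔ 0 < n k)) ∧ (m i = 1) then
            W n m * ((m j : ℕ) : ℚ) * G (mv m i j) / DD m
          else 0) (fun k => ((g k : ℕ))) := by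
    refine Finset.sum_congr rfl fun g _ => ?_
    rfl
  rw [h1, sum_fin_pi n (fun m : Fin K → ℕ =>
    if (∀ k, (0 < m k ↔ 0 < n k)) ∧ (m i = 1) then
      W n m * ((m j : ℕ) : ℚ) * G (mv m i j) / DD m
    else 0)]
  refine Finset.sum_congr rfl fun m hm => ?_
  have hle : ∀ k, m k ≤ n k := fun k => by
    have := Finset.mem_range.1 (Fintype.mem_piFinset.1 hm k); omega
  by_cases h : (∀ k, (0 < m k ↔ 0 < n k)) ∧ (m i = 1)
  · rw [if_pos h, if_pos ⟨hle, h.1, h.2⟩, hFG i hi j hj m hle h.1 h.2]; rfl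
  · rw [if_neg h, if_neg (fun hc => h ⟨hc.2.1, hc.2.2⟩)]

noncomputable def Quad {K : ℕ} (P : Fin K → Fin K → ℚ) (F : (Fin K → ℕ) → ℚ)
    (n : Fin K → ℕ) : ℚ :=
  ∑ i' : Fin K, ∑ i ∈ supp n, ∑ j ∈ (supp n).erase i, ∑ m ∈ AA n,
    (if Cnd n i m ∧ m i' < n i' then
      ((n i' : ℚ) / ((∑ k, n k : ℕ) : ℚ)) * (P j i * Body F (rm n i') i j m)
    else 0)

noncomputable def Dir {K : ℕ} (P : Fin K → Fin K → ℚ) (F : (Fin K → ℕ) → ℚ)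
    (n : Fin K → ℕ) : ℚ :=
  ∑ i ∈ supp n, (if 2 ≤ n i then 0 else
    ((n i : ℚ) / ((∑ k, n k : ℕ) : ℚ)) * ∑ j ∈ (supp n).erase i,
      ((n j : ℚ) / (((∑ k, n k : ℕ) : ℚ) - 1)) * (P j i * F (mv n i j)))

lemma AA_rm_subset {K : ℕ} (n : Fin K → ℕ) (i' : Fin K) : AA (rm n i') ⊆ AA n := by
  intro m hm
  refine Fintype.mem_piFinset.2 fun k => Finset.mem_range.2 ?_
  have h1 := Finset.mem_range.1 (Fintype.mem_piFinset.1 hm k)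
  have h2 : rm n i' k ≤ n k := by simp [rm]
  omega

lemma RHS_eq_quad {K : ℕ} (P : Fin K → Fin K → ℚ) (F : (Fin K → ℕ) → ℚ)
    (n : Fin K → ℕ) :
    ∑ i ∈ supp n, ((n i : ℚ) / ((∑ k, n k : ℕ) : ℚ)) *
      (if 2 ≤ n i then TT P F (rm n i)
       else ∑ j ∈ (supp n).erase i, ((n j : ℚ) / (((∑ k, n k : ℕ) : ℚ) - 1)) *
         (P j i * F (mv n i j)))
    = Quad P F n + Dir P F n := by
  classical
  have hsplit : ∀ i ∈ supp n, ((n i : ℚ) / ((∑ k, n k : ℕ) : ℚ)) *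
      (if 2 ≤ n i then TT P F (rm n i)
       else ∑ j ∈ (supp n).erase i, ((n j : ℚ) / (((∑ k, n k : ℕ) : ℚ) - 1)) *
         (P j i * F (mv n i j)))
      = (if 2 ≤ n i then ((n i : ℚ) / ((∑ k, n k : ℕ) : ℚ)) * TT P F (rm n i) else 0)
        + (if 2 ≤ n i then 0 else ((n i : ℚ) / ((∑ k, n k : ℕ) : ℚ)) *
            ∑ j ∈ (supp n).erase i, ((n j : ℚ) / (((∑ k, n k : ℕ) : ℚ) - 1)) *
              (P j i * F (mv n i j))) := by
    intro i _
    by_cases h : 2 ≤ n i <;> simp [h]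
  rw [Finset.sum_congr rfl hsplit, Finset.sum_add_distrib]
  congr 1
  rw [Finset.sum_subset (Finset.subset_univ (supp n)) (by
    intro i' _ hi'
    rw [mem_supp] at hi'
    rw [if_neg (by omega)])]
  unfold Quad
  refine Finset.sum_congr rfl fun i' _ => ?_
  by_cases h : 2 ≤ n i'
  · rw [if_pos h]
    unfold TT
    rw [supp_rm n i' h, Finset.mul_sum]
    refine Finset.sum_congr rfl fun i _ => ?_
    rw [Finset.mul_sum]
    refine Finset.sum_congr rfl fun j _ => ?_
    have hdom : ∑ m ∈ AA (rm n i'), (if Cnd (rm n i') i m then Body F (rm n i') i j m else 0)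
        = ∑ m ∈ AA n, (if Cnd n i m ∧ m i' < n i' then Body F (rm n i') i j m else 0) := by
      rw [Finset.sum_subset (AA_rm_subset n i') (by
        intro m _ hm
        rw [if_neg]
        intro hc
        exact hm (Fintype.mem_piFinset.2 fun k =>
          Finset.mem_range.2 (by have := hc.1 k; omega)))]
      exact Finset.sum_congr rfl fun m _ => if_congr (Cnd_rm n m i i' h) rfl rfl
    rw [hdom, Finset.mul_sum, Finset.mul_sum]
    refine Finset.sum_congr rfl fun m _ => ?_
    by_cases hc : Cnd n i m ∧ m i' < n i'
    · rw [if_pos hc, if_pos hc]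
    · rw [if_neg hc, if_neg hc]; ring
  · rw [if_neg h]
    symm
    refine Finset.sum_eq_zero fun i _ => Finset.sum_eq_zero fun j _ =>
      Finset.sum_eq_zero fun m _ => ?_
    rw [if_neg]
    rintro ⟨hC, hlt⟩
    have h5 : n i' = 0 ∨ n i' = 1 := by omega
    rcases h5 with h5 | h5
    · rw [h5] at hlt; omega
    · have : 0 < m i' := (hC.2.1 i').2 (by omega)
      have := hC.1 i'
      omega

lemma TT_eq_quad {K : ℕ} (P : Fin K → Fin K → ℚ) (F : (Fin K → ℕ) → ℚ)
    (n : Fin K → ℕ) (h2 : 2 ≤ (supp n).card) :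
    TT P F n = Quad P F n + Dir P F n := by
  classical
  have hN2 : 2 ≤ ∑ k, n k := two_le_sum h2
  have hNQ : ((∑ k, n k : ℕ) : ℚ) ≠ 0 := Nat.cast_ne_zero.2 (by omega)
  have hN2Q : (2 : ℚ) ≤ ((∑ k, n k : ℕ) : ℚ) := by exact_mod_cast hN2
  have hN1Q : ((∑ k, n k : ℕ) : ℚ) - 1 ≠ 0 := by
    intro h
    rw [sub_eq_zero] at h
    rw [h] at hN2Q
    norm_num at hN2Q
  have hnA : n ∈ AA n :=
    Fintype.mem_piFinset.2 fun k => Finset.mem_range.2 (by omega)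
  unfold TT
  rw [Finset.sum_congr rfl (fun i _ => Finset.sum_congr rfl (fun j _ => by
    rw [← Finset.add_sum_erase _ _ hnA, mul_add]))]
  rw [Finset.sum_congr rfl (fun i _ => Finset.sum_add_distrib), Finset.sum_add_distrib]
  rw [add_comm]
  congr 1
  · -- recursive part equals Quad
    unfold Quad
    have inner : ∀ i ∈ supp n, ∀ j ∈ (supp n).erase i,
        P j i * ∑ m ∈ (AA n).erase n, (if Cnd n i m then Body F n i j m else 0)
        = ∑ m ∈ AA n, ∑ i' : Fin K,
            (if Cnd n i m ∧ m i' < n i' then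
              ((n i' : ℚ) / ((∑ k, n k : ℕ) : ℚ)) * (P j i * Body F (rm n i') i j m)
            else 0) := by
      intro i hi j hj
      have hm : ∀ m ∈ (AA n).erase n, (if Cnd n i m then Body F n i j m else 0)
          = ∑ i' : Fin K, (if Cnd n i m ∧ m i' < n i' then
              ((n i' : ℚ) / ((∑ k, n k : ℕ) : ℚ)) * Body F (rm n i') i j m
            else 0) := by
        intro m hmm
        by_cases hC : Cnd n i m
        · rw [if_pos hC]
          have hlt := sum_lt_of_le_ne hC.1 (Finset.ne_of_mem_erase hmm)
          unfold Body
          rw [W_decomp n m hC.1 hlt, Finset.sum_mul, Finset.sum_mul, Finset.sum_div]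
          refine Finset.sum_congr rfl fun i' _ => ?_
          by_cases h : m i' < n i'
          · rw [if_pos h, if_pos ⟨hC, h⟩]
            ring
          · rw [if_neg h, if_neg (fun hh => h hh.2)]
            simp
        · rw [if_neg hC]
          symm
          exact Finset.sum_eq_zero fun i' _ => if_neg (fun hh => hC hh.1)
      rw [Finset.sum_congr rfl hm]
      have hzero : (∑ i' : Fin K, (if Cnd n i n ∧ n i' < n i' then
          ((n i' : ℚ) / ((∑ k, n k : ℕ) : ℚ)) * Body F (rm n i') i j n
        else 0)) = 0 :=
        Finset.sum_eq_zero fun i' _ => if_neg (fun hh => lt_irrefl _ hh.2)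
      rw [Finset.sum_erase (AA n) hzero, Finset.mul_sum]
      refine Finset.sum_congr rfl fun m _ => ?_
      rw [Finset.mul_sum]
      refine Finset.sum_congr rfl fun i' _ => ?_
      by_cases hc : Cnd n i m ∧ m i' < n i'
      · rw [if_pos hc, if_pos hc]
        ring
      · rw [if_neg hc, if_neg hc, mul_zero]
    rw [Finset.sum_congr rfl (fun i hi => Finset.sum_congr rfl (inner i hi))]
    rw [Finset.sum_congr rfl (fun i _ => Finset.sum_congr rfl (fun j _ => Finset.sum_comm))]
    rw [Finset.sum_congr rfl (fun i _ => Finset.sum_comm)]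
    rw [Finset.sum_comm]
  · -- direct part equals Dir
    unfold Dir
    refine Finset.sum_congr rfl fun i hi => ?_
    have hni : 0 < n i := mem_supp.1 hi
    by_cases h : 2 ≤ n i
    · rw [if_pos h]
      exact Finset.sum_eq_zero fun j hj => by
        rw [if_neg (fun hc => by have := (Cnd_self n i).1 hc; omega), mul_zero]
    · have hni1 : n i = 1 := by omega
      rw [if_neg h, Finset.mul_sum]
      refine Finset.sum_congr rfl fun j hj => ?_
      rw [if_pos ((Cnd_self n i).2 hni1)]
      unfold Body DD
      rw [W_self]
      have hcast : ((n i : ℕ) : ℚ) = 1 := by rw [hni1]; norm_num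
      rw [hcast]
      field_simp

-- ### expansion of the expectation via one urn step

lemma sum_ite_sum_mul {κ ι : Type*} [Fintype κ] {c : κ → Prop} [DecidablePred c]
    (s : Finset ι) (t : ι → κ → ℚ) (b : κ → ℚ) :
    (∑ T : κ, if c T then (∑ i ∈ s, t i T) * b T else 0)
      = ∑ i ∈ s, ∑ T : κ, (if c T then t i T * b T else 0) := by
  calc (∑ T : κ, if c T then (∑ i ∈ s, t i T) * b T else 0)
      = ∑ T : κ, ∑ i ∈ s, (if c T then t i T * b T else 0) := by
        refine Finset.sum_congr rfl fun T _ => ?_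
        by_cases h : c T
        · rw [if_pos h, Finset.sum_mul]
          exact Finset.sum_congr rfl fun i _ => (if_pos h).symm
        · rw [if_neg h]
          exact (Finset.sum_eq_zero fun i _ => if_neg h).symm
    _ = ∑ i ∈ s, ∑ T : κ, (if c T then t i T * b T else 0) := Finset.sum_comm

lemma sum_ite_mul_const {κ : Type*} [Fintype κ] {c : κ → Prop} [DecidablePred c]
    (a : ℚ) (x b : κ → ℚ) :
    (∑ T : κ, if c T then (a * x T) * b T else 0)
      = a * ∑ T : κ, (if c T then x T * b T else 0) := by
  rw [Finset.mul_sum]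
  refine Finset.sum_congr rfl fun T _ => ?_
  by_cases h : c T
  · rw [if_pos h, if_pos h]; ring
  · rw [if_neg h, if_neg h, mul_zero]

lemma F_step {K : ℕ} (P : Fin K → Fin K → ℚ) (pI : Fin K → ℚ)
    (Pn : (Fin K → ℕ) → RTree K → ℚ)
    (hstep : ∀ n : Fin K → ℕ, 2 ≤ (supp n).card → ∀ T : RTree K,
      Pn n T = ∑ i ∈ supp n, ((n i : ℚ) / ((∑ k, n k : ℕ) : ℚ)) *
        (if 2 ≤ n i then Pn (rm n i) T
         else ∑ j ∈ (supp n).erase i, ((n j : ℚ) / (((∑ k, n k : ℕ) : ℚ) - 1)) *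
           (if T.2 i = j then Pn (mv n i j) (rmLeaf T i) else 0)))
    (hPv : ∀ n : Fin K → ℕ, (supp n).Nonempty → ∀ T : RTree K,
      ¬ IsTreeOn (supp n) T → Pn n T = 0)
    (Fn : (Fin K → ℕ) → ℚ)
    (hFd : ∀ nn : Fin K → ℕ, Fn nn = ∑ T : RTree K,
      if IsTreeOn (supp nn) T then Pn nn T * fP P pI (supp nn) T else 0)
    (n : Fin K → ℕ) (h2 : 2 ≤ (supp n).card) :
    Fn n = ∑ i ∈ supp n, ((n i : ℚ) / ((∑ k, n k : ℕ) : ℚ)) *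
      (if 2 ≤ n i then Fn (rm n i)
       else ∑ j ∈ (supp n).erase i, ((n j : ℚ) / (((∑ k, n k : ℕ) : ℚ) - 1)) *
         (P j i * Fn (mv n i j))) := by
  classical
  rw [hFd n]
  simp only [hstep n h2]
  rw [sum_ite_sum_mul (supp n) _ _]
  refine Finset.sum_congr rfl fun i hi => ?_
  rw [sum_ite_mul_const ((n i : ℚ) / ((∑ k, n k : ℕ) : ℚ)) _ _]
  congr 1
  by_cases h : 2 ≤ n i
  · simp only [if_pos h]
    rw [hFd (rm n i), supp_rm n i h]
  · simp only [if_neg h]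
    rw [sum_ite_sum_mul ((supp n).erase i) _ _]
    refine Finset.sum_congr rfl fun j hj => ?_
    rw [sum_ite_mul_const ((n j : ℚ) / (((∑ k, n k : ℕ) : ℚ) - 1)) _ _]
    congr 1
    have hni1 : n i = 1 := by have := mem_supp.1 hi; omega
    have hj' : 0 < n j := mem_supp.1 (Finset.mem_of_mem_erase hj)
    have hji : j ≠ i := (Finset.mem_erase.1 hj).1
    have hsm : supp (mv n i j) = (supp n).erase i := supp_mv n i j hni1 hj' hji
    have hQ : ∀ T', ¬ IsTreeOn ((supp n).erase i) T' → Pn (mv n i j) T' = 0 := by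
      intro T' hT'
      refine hPv (mv n i j) ?_ T' (by rw [hsm]; exact hT')
      rw [hsm]
      refine Finset.card_pos.1 ?_
      rw [Finset.card_erase_of_mem (mem_supp.2 (by omega))]
      omega
    rw [leaf_bij_sum P pI (supp n) i j (mem_supp.2 (by omega)) hj (Pn (mv n i j)) hQ]
    rw [hFd (mv n i j), hsm]


/-- If `R` satisfies `R(n) = Σ_{i ≠ j ∈ O_n} P_{ji} Σ_{0 ≺ m ⪯ n, m_i = 1}
[Π_k C(n_k, m_k)/C(n,|m|)] · m_j R(m - e_i + e_j) / (|m|(|m|-1))` with boundary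
`R(n) = π_a` for single-color configurations, and `Pn` is the distribution over rooted
trees generated by the urn process (characterized by its one-step dynamics `hbase`,
`hstep`), then `R(n) = E_n[f_P(T)] = Σ_T Pn(T) f_P(T)`. -/
theorem stmt10 (K : ℕ) (P : Fin K → Fin K → ℚ) (pI : Fin K → ℚ)
    (R : (Fin K → ℕ) → ℚ) (Pn : (Fin K → ℕ) → RTree K → ℚ)
    (hRbase : ∀ (a : Fin K) (c : ℕ), 0 < c → R (fun k => if k = a then c else 0) = pI a)
    (hRrec : ∀ n : Fin K → ℕ, 2 ≤ (supp n).card →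
      R n = ∑ i ∈ supp n, ∑ j ∈ (supp n).erase i, P j i *
        ∑ g : (∀ k : Fin K, Fin (n k + 1)),
          if (∀ k, (0 < (g k : ℕ) ↔ 0 < n k)) ∧ ((g i : ℕ) = 1) then
            ((∏ k, (Nat.choose (n k) (g k : ℕ) : ℚ)) /
                (Nat.choose (∑ k, n k) (∑ k, (g k : ℕ)) : ℚ)) *
              ((g j : ℕ) : ℚ) * R (mv (fun k => (g k : ℕ)) i j) /
              (((∑ k, (g k : ℕ) : ℕ) : ℚ) * (((∑ k, (g k : ℕ) : ℕ) : ℚ) - 1))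
          else 0)
    (hbase : ∀ (n : Fin K → ℕ) (a : Fin K), supp n = {a} →
      ∀ T : RTree K, Pn n T = if T = (a, fun k => k) then 1 else 0)
    (hstep : ∀ n : Fin K → ℕ, 2 ≤ (supp n).card → ∀ T : RTree K,
      Pn n T = ∑ i ∈ supp n, ((n i : ℚ) / ((∑ k, n k : ℕ) : ℚ)) *
        (if 2 ≤ n i then Pn (rm n i) T
         else ∑ j ∈ (supp n).erase i, ((n j : ℚ) / (((∑ k, n k : ℕ) : ℚ) - 1)) *
           (if T.2 i = j then Pn (mv n i j) (rmLeaf T i) else 0)))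
    (n : Fin K → ℕ) (hn : (supp n).Nonempty) :
    R n = ∑ T : RTree K,
      if IsTreeOn (supp n) T then Pn n T * fP P pI (supp n) T else 0 := by
  classical
  have hPv := Pn_vanish Pn hbase hstep
  set F : (Fin K → ℕ) → ℚ := fun nn => ∑ T : RTree K,
    if IsTreeOn (supp nn) T then Pn nn T * fP P pI (supp nn) T else 0 with hFdef
  have hFd : ∀ nn : Fin K → ℕ, F nn = ∑ T : RTree K,
      if IsTreeOn (supp nn) T then Pn nn T * fP P pI (supp nn) T else 0 := fun nn => rfl
  suffices H : ∀ c (n' : Fin K → ℕ), (supp n').card ≤ c → (supp n').Nonempty → R n' = F n' by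
    exact (H (supp n).card n le_rfl hn).trans (hFd n)
  intro c
  induction c with
  | zero =>
    intro n' hc hne
    exact absurd (Finset.card_pos.2 hne) (by omega)
  | succ c ihc =>
    intro n' hc hne
    by_cases h1 : (supp n').card ≤ 1
    · -- single color
      have hcard : (supp n').card = 1 := le_antisymm h1 (Finset.card_pos.2 hne)
      obtain ⟨a, ha⟩ := Finset.card_eq_one.1 hcard
      have hn'a : 0 < n' a := mem_supp.1 (by rw [ha]; exact Finset.mem_singleton_self a)
      have hRb : R n' = pI a := by
        conv_lhs => rw [supp_single ha]
        exact hRbase a (n' a) hn'a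
      have hFb : F n' = pI a := by
        rw [hFd n', ha]
        rw [Finset.sum_congr rfl (fun T (_ : T ∈ Finset.univ) => by
          rw [hbase n' a ha T])]
        rw [Fintype.sum_eq_single ((a, fun k => k) : RTree K)
          (fun T hT => by rw [if_neg hT, zero_mul, ite_self])]
        rw [if_pos (treeOn_singleton a), if_pos rfl, one_mul]
        unfold fP
        rw [Finset.erase_singleton, Finset.prod_empty, mul_one]
      rw [hRb, hFb]
    · have h2 : 2 ≤ (supp n').card := by omega
      -- convert the R-recursion into the TT functional with F inside
      have hR : R n' = TT P F n' := by
        rw [hRrec n' h2]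
        refine hrec_convert P F R n' ?_
        intro i hi j hj m hle hsp hmi
        have hsuppm : supp m = supp n' := Cnd_supp hsp
        have hj' : 0 < m j := by
          rw [hsp j]
          exact mem_supp.1 (Finset.mem_of_mem_erase hj)
        have hji : j ≠ i := (Finset.mem_erase.1 hj).1
        have hsm : supp (mv m i j) = (supp n').erase i := by
          rw [supp_mv m i j hmi hj' hji, hsuppm]
        have hcm : (supp (mv m i j)).card ≤ c := by
          rw [hsm, Finset.card_erase_of_mem hi]
          omega
        have hnem : (supp (mv m i j)).Nonempty := by
          rw [hsm]
          refine Finset.card_pos.1 ?_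
          rw [Finset.card_erase_of_mem hi]
          omega
        exact ihc (mv m i j) hcm hnem
      -- the expectation satisfies the same recursion, by induction on total size
      have hkey : ∀ N (n'' : Fin K → ℕ), (∑ k, n'' k) ≤ N → supp n'' = supp n' →
          F n'' = TT P F n'' := by
        intro N
        induction N with
        | zero =>
          intro n'' hN hs
          have h2'' : 2 ≤ (supp n'').card := by rw [hs]; exact h2
          have := two_le_sum h2''
          omega
        | succ N ihN =>
          intro n'' hN hs
          have h2'' : 2 ≤ (supp n'').card := by rw [hs]; exact h2
          rw [F_step P pI Pn hstep hPv F hFd n'' h2'']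
          rw [TT_eq_quad P F n'' h2'', ← RHS_eq_quad P F n'']
          refine Finset.sum_congr rfl fun i hi => ?_
          congr 1
          by_cases h : 2 ≤ n'' i
          · rw [if_pos h, if_pos h]
            exact ihN (rm n'' i)
              (by rw [sum_rm n'' i (by omega)]; omega)
              (by rw [supp_rm n'' i h]; exact hs)
          · rw [if_neg h, if_neg h]
      rw [hR]
      exact (hkey (∑ k, n' k) n' le_rfl rfl).symm
end

section
/- For a sample configuration n with exactly two observed alleles (O_n = {a, b}) and P irreducible on O_n, the leading-order coefficient Q(n) of θ^1 in the Taylor expansion of the sampling probability q(n|θ,P) about θ = 0 equals Λ(n) · [(n_a/n)·π_a P_{ab} + (n_b/n)·π_b P_{ba}], where Λ(n) = (n_a - 1)!(n_b - 1)!/(n-1)!. -/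
open PowerSeries Finset

section Aux
variable {K : ℕ}

/-- sum of a function vanishing outside two points -/
lemma stmt14_sum_two {M : Type*} [AddCommMonoid M] {a b : Fin K} (hab : a ≠ b)
    (f : Fin K → M) (hf : ∀ i, i ≠ a → i ≠ b → f i = 0) :
    ∑ i, f i = f a + f b := by
  rw [← Finset.sum_pair hab]
  refine (Finset.sum_subset (Finset.subset_univ _) ?_).symm
  intro x _ hx
  simp only [Finset.mem_insert, Finset.mem_singleton] at hx
  push_neg at hx
  exact hf x hx.1 hx.2

lemma stmt14_sum_sub_e (n : Fin K → ℕ) (i : Fin K) (hi : 1 ≤ n i) :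
    ∑ k, (n k - if k = i then 1 else 0) = (∑ k, n k) - 1 := by
  rw [← Finset.add_sum_erase _ _ (Finset.mem_univ i),
      ← Finset.add_sum_erase _ n (Finset.mem_univ i)]
  simp only [if_pos rfl]
  have h : ∑ k ∈ Finset.univ.erase i, (n k - if k = i then 1 else 0)
      = ∑ k ∈ Finset.univ.erase i, n k := by
    refine Finset.sum_congr rfl fun k hk => ?_
    rw [if_neg (Finset.mem_erase.1 hk).1, Nat.sub_zero]
  rw [h]; simp only [if_true]
  omega

end Aux

/-- two-allele configuration -/
def stmt14_cfg {K : ℕ} (a b : Fin K) (x y : ℕ) : Fin K → ℕ :=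
  fun k => if k = a then x else if k = b then y else 0

lemma stmt14_cfg_swap {K : ℕ} (a b : Fin K) (hab : a ≠ b) (x y : ℕ) :
    stmt14_cfg a b x y = stmt14_cfg b a y x := by
  funext k
  by_cases h1 : k = a <;> by_cases h2 : k = b <;>
    simp_all [stmt14_cfg]

section Main
variable {K : ℕ} (P : Fin K → Fin K → ℚ) (pI : Fin K → ℚ)
  (q : (Fin K → ℕ) → PowerSeries ℚ)
  (hbound : ∀ a : Fin K, q (fun k => if k = a then 1 else 0) = PowerSeries.C (pI a))
  (hrec : ∀ n : Fin K → ℕ, 2 ≤ ∑ i, n i →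
      (PowerSeries.C (((∑ i, n i : ℕ) : ℚ) * (((∑ i, n i : ℕ) : ℚ) - 1)) +
          PowerSeries.C (((∑ i, n i : ℕ) : ℚ)) * PowerSeries.X) * q n =
        (∑ i, PowerSeries.C ((n i : ℚ) * ((n i : ℚ) - 1)) *
            q (fun k => n k - if k = i then 1 else 0)) +
          PowerSeries.X * ∑ i, ∑ j, PowerSeries.C (P j i * (n i : ℚ)) *
            q (fun k => n k - (if k = i then 1 else 0) + if k = j then 1 else 0))

include hrec in
lemma stmt14_rec0 (n : Fin K → ℕ) (h2 : 2 ≤ ∑ i, n i) :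
    ((∑ i, n i : ℕ) : ℚ) * (((∑ i, n i : ℕ) : ℚ) - 1) * constantCoeff (q n) =
      ∑ i, (n i : ℚ) * ((n i : ℚ) - 1) *
        constantCoeff (q (fun k => n k - if k = i then 1 else 0)) := by
  have h := congrArg (constantCoeff) (hrec n h2)
  simpa [map_sum, mul_assoc] using h

include hrec in
lemma stmt14_rec1 (n : Fin K → ℕ) (h2 : 2 ≤ ∑ i, n i) :
    ((∑ i, n i : ℕ) : ℚ) * (((∑ i, n i : ℕ) : ℚ) - 1) * PowerSeries.coeff 1 (q n) +
      ((∑ i, n i : ℕ) : ℚ) * constantCoeff (q n) =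
      (∑ i, (n i : ℚ) * ((n i : ℚ) - 1) *
        PowerSeries.coeff 1 (q (fun k => n k - if k = i then 1 else 0))) +
      ∑ i, ∑ j, P j i * (n i : ℚ) *
        constantCoeff (q (fun k => n k - (if k = i then 1 else 0) + if k = j then 1 else 0)) := by
  have coeff1X : ∀ f : PowerSeries ℚ, PowerSeries.coeff 1 (PowerSeries.X * f)
      = constantCoeff f := fun f => by
    simpa using PowerSeries.coeff_succ_X_mul 0 f
  have h := congrArg (PowerSeries.coeff 1) (hrec n h2)
  rw [add_mul, mul_assoc, map_add, map_add, PowerSeries.coeff_C_mul, PowerSeries.coeff_C_mul,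
    coeff1X, coeff1X, map_sum, map_sum] at h
  simp only [PowerSeries.coeff_C_mul, map_sum, mul_assoc] at h ⊢
  convert h using 2
  exact Finset.sum_congr rfl fun i _ => Finset.sum_congr rfl fun j _ => by
    rw [map_mul, constantCoeff_C, mul_assoc]

include hbound hrec in
lemma stmt14_pure_c0 (a : Fin K) : ∀ x : ℕ, 1 ≤ x →
    constantCoeff (q (fun k => if k = a then x else 0)) = pI a := by
  intro x
  induction x with
  | zero => omega
  | succ x IH =>
    intro _
    rcases Nat.eq_zero_or_pos x with rfl | hx
    · rw [show (0:ℕ) + 1 = 1 from rfl, hbound a, PowerSeries.constantCoeff_C]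
    · -- x + 1 ≥ 2
      set n : Fin K → ℕ := fun k => if k = a then x + 1 else 0 with hn
      have hsum : ∑ i, n i = x + 1 := by simp [hn]
      have h2 : 2 ≤ ∑ i, n i := by omega
      have hr := stmt14_rec0 P q hrec n h2
      rw [hsum] at hr
      have hRHS : ∑ i, (n i : ℚ) * ((n i : ℚ) - 1) *
          constantCoeff (q (fun k => n k - if k = i then 1 else 0))
          = ((x+1 : ℕ) : ℚ) * (((x+1 : ℕ) : ℚ) - 1) * pI a := by
        rw [Finset.sum_eq_single a]
        · have hfun : (fun k => n k - if k = a then 1 else 0)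
              = (fun k => if k = a then x else 0) := by
            funext k
            by_cases hk : k = a <;> simp [hn, hk]
          rw [hfun, IH hx]
          simp [hn]
        · intro i _ hia
          simp [hn, hia]
        · intro h; exact absurd (Finset.mem_univ a) h
      rw [hRHS] at hr
      have hne : ((x+1 : ℕ) : ℚ) * (((x+1 : ℕ) : ℚ) - 1) ≠ 0 := by
        have : (1:ℚ) ≤ (x:ℚ) := by exact_mod_cast hx
        push_cast
        nlinarith
      exact mul_left_cancel₀ hne hr

include hrec in
lemma stmt14_mixed_c0 : ∀ m : ℕ, ∀ n : Fin K → ℕ, ∑ i, n i = m →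
    ∀ i j, i ≠ j → 0 < n i → 0 < n j → constantCoeff (q n) = 0 := by
  intro m
  induction m using Nat.strong_induction_on with
  | _ m IH =>
    intro n hm i j hij hi hj
    have h2 : 2 ≤ ∑ k, n k := by
      have hsub : ({i, j} : Finset (Fin K)) ⊆ Finset.univ := Finset.subset_univ _
      have := Finset.sum_le_sum_of_subset hsub (f := n)
      rw [Finset.sum_pair hij] at this
      omega
    have hr := stmt14_rec0 P q hrec n h2
    have hRHS : ∑ k, (n k : ℚ) * ((n k : ℚ) - 1) *
        constantCoeff (q (fun l => n l - if l = k then 1 else 0)) = 0 := by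
      refine Finset.sum_eq_zero fun k _ => ?_
      rcases Nat.lt_or_ge (n k) 2 with hk | hk
      · have : (n k : ℚ) * ((n k : ℚ) - 1) = 0 := by
          interval_cases h : (n k) <;> norm_num
        rw [this, zero_mul]
      · have hsum' : ∑ l, (n l - if l = k then 1 else 0) = (∑ l, n l) - 1 :=
          stmt14_sum_sub_e n k (by omega)
        have hlt : (∑ l, n l) - 1 < m := by omega
        have hzero : constantCoeff (q (fun l => n l - if l = k then 1 else 0)) = 0 := by
          by_cases hki : k = i
          · subst hki
            refine IH _ (hm ▸ hlt) _ hsum' k j hij ?_ ?_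
            · show 0 < n k - if k = k then 1 else 0
              have h1 : (if k = k then 1 else 0) = 1 := if_pos rfl
              omega
            · show 0 < n j - if j = k then 1 else 0
              have h1 : (if j = k then 1 else 0) = 0 := if_neg (fun h => hij h.symm)
              omega
          · refine IH _ (hm ▸ hlt) _ hsum' i k (fun h => hki h.symm) ?_ ?_
            · show 0 < n i - if i = k then 1 else 0
              have h1 : (if i = k then 1 else 0) = 0 := if_neg (fun h => hki h.symm)
              omega
            · show 0 < n k - if k = k then 1 else 0
              have h1 : (if k = k then 1 else 0) = 1 := if_pos rfl
              omega
        rw [hzero, mul_zero]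
    rw [hm, hRHS] at hr
    have hne : ((m : ℕ) : ℚ) * (((m : ℕ) : ℚ) - 1) ≠ 0 := by
      have : (2:ℚ) ≤ (m:ℚ) := by exact_mod_cast hm ▸ h2
      nlinarith
    exact (mul_eq_zero.mp hr).resolve_left hne

include hbound hrec in
lemma stmt14_inner (a b : Fin K) (hab : a ≠ b) (x y : ℕ) (hx : 1 ≤ x) (hy : 1 ≤ y) :
    ∑ j, P j a * ((stmt14_cfg a b x y a : ℕ) : ℚ) *
      constantCoeff (q (fun k =>
        stmt14_cfg a b x y k - (if k = a then 1 else 0) + if k = j then 1 else 0))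
    = if x = 1 then P b a * pI b else 0 := by
  have hba : ¬ b = a := fun h => hab h.symm
  have ea : stmt14_cfg a b x y a = x := by simp [stmt14_cfg]
  rcases Nat.lt_or_ge x 2 with hx2 | hx2
  · -- x = 1
    have hx1 : x = 1 := by omega
    subst hx1
    rw [if_pos rfl, Finset.sum_eq_single b]
    · have hg : (fun k => stmt14_cfg a b 1 y k - (if k = a then 1 else 0) + if k = b then 1 else 0)
          = (fun k => if k = b then y + 1 else 0) := by
        funext k
        by_cases h1 : k = a <;> by_cases h2 : k = b <;>
          simp_all [stmt14_cfg]
      rw [hg, stmt14_pure_c0 P pI q hbound hrec b (y+1) (by omega), ea]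
      push_cast; ring
    · intro j _ hjb
      have h0 : constantCoeff (q (fun k =>
          stmt14_cfg a b 1 y k - (if k = a then 1 else 0) + if k = j then 1 else 0)) = 0 := by
        by_cases hja : j = a
        · have hg : (fun k => stmt14_cfg a b 1 y k - (if k = a then 1 else 0) + if k = j then 1 else 0)
              = stmt14_cfg a b 1 y := by
            funext k
            by_cases h1 : k = a <;> simp_all [stmt14_cfg]
          rw [hg]
          refine stmt14_mixed_c0 P q hrec _ _ rfl a b hab ?_ ?_ <;>
            simp [stmt14_cfg, hba] <;> omega
        · refine stmt14_mixed_c0 P q hrec _ _ rfl b j (fun h => hjb h.symm) ?_ ?_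
          · show 0 < stmt14_cfg a b 1 y b - (if b = a then 1 else 0) + if b = j then 1 else 0
            have e1 : stmt14_cfg a b 1 y b = y := by simp [stmt14_cfg, hba]
            have e2 : (if b = a then 1 else 0) = 0 := if_neg hba
            omega
          · show 0 < stmt14_cfg a b 1 y j - (if j = a then 1 else 0) + if j = j then 1 else 0
            have e2 : (if j = j then 1 else 0) = 1 := if_pos rfl
            omega
      rw [h0, mul_zero]
    · intro h; exact absurd (Finset.mem_univ b) h
  · -- 2 ≤ x
    rw [if_neg (by omega)]
    refine Finset.sum_eq_zero fun j _ => ?_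
    have h0 : constantCoeff (q (fun k =>
        stmt14_cfg a b x y k - (if k = a then 1 else 0) + if k = j then 1 else 0)) = 0 := by
      refine stmt14_mixed_c0 P q hrec _ _ rfl a b hab ?_ ?_
      · show 0 < stmt14_cfg a b x y a - (if a = a then 1 else 0) + if a = j then 1 else 0
        have e2 : (if a = a then 1 else 0) = 1 := if_pos rfl
        omega
      · show 0 < stmt14_cfg a b x y b - (if b = a then 1 else 0) + if b = j then 1 else 0
        have e1 : stmt14_cfg a b x y b = y := by simp [stmt14_cfg, hba]
        have e2 : (if b = a then 1 else 0) = 0 := if_neg hba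
        omega
    rw [h0, mul_zero]

include hbound hrec in
lemma stmt14_c1 (a b : Fin K) (hab : a ≠ b) : ∀ m x y : ℕ, x + y = m → 1 ≤ x → 1 ≤ y →
    PowerSeries.coeff 1 (q (stmt14_cfg a b x y)) =
      (Nat.factorial (x-1) : ℚ) * (Nat.factorial (y-1) : ℚ) *
        ((x : ℚ) * (pI a * P a b) + (y : ℚ) * (pI b * P b a)) /
        (Nat.factorial (x+y) : ℚ) := by
  have hba : ¬ b = a := fun h => hab h.symm
  intro m
  induction m using Nat.strong_induction_on with
  | _ m IH =>
  intro x y hm hx hy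
  have ea : stmt14_cfg a b x y a = x := by simp [stmt14_cfg]
  have eb : stmt14_cfg a b x y b = y := by simp [stmt14_cfg, hba]
  have hvan : ∀ i, i ≠ a → i ≠ b → stmt14_cfg a b x y i = 0 := by
    intro i hia hib; simp [stmt14_cfg, hia, hib]
  have hsumn : ∑ i, stmt14_cfg a b x y i = x + y := by
    rw [stmt14_sum_two hab _ hvan, ea, eb]
  have h2 : 2 ≤ ∑ i, stmt14_cfg a b x y i := by omega
  have hr := stmt14_rec1 P q hrec _ h2
  rw [hsumn] at hr
  have hc0 : constantCoeff (q (stmt14_cfg a b x y)) = 0 :=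
    stmt14_mixed_c0 P q hrec _ _ rfl a b hab (by omega) (by omega)
  -- first sum
  have efa : (fun k => stmt14_cfg a b x y k - if k = a then 1 else 0)
      = stmt14_cfg a b (x-1) y := by
    funext k
    by_cases h1 : k = a
    · simp only [stmt14_cfg, h1, if_pos rfl, if_true]
    · simp only [stmt14_cfg, if_neg h1, Nat.sub_zero]
  have efb : (fun k => stmt14_cfg a b x y k - if k = b then 1 else 0)
      = stmt14_cfg a b x (y-1) := by
    funext k
    by_cases h1 : k = a
    · simp only [stmt14_cfg, h1, if_pos rfl, if_true, if_neg hab, Nat.sub_zero]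
    · by_cases h2 : k = b
      · simp only [stmt14_cfg, h2, if_neg hba, if_pos rfl, if_true]
      · simp only [stmt14_cfg, if_neg h1, if_neg h2, Nat.sub_zero]
  have hS1 : ∑ i, (stmt14_cfg a b x y i : ℚ) * ((stmt14_cfg a b x y i : ℚ) - 1) *
      PowerSeries.coeff 1 (q (fun k => stmt14_cfg a b x y k - if k = i then 1 else 0))
      = (x : ℚ) * ((x : ℚ) - 1) * PowerSeries.coeff 1 (q (stmt14_cfg a b (x-1) y)) +
        (y : ℚ) * ((y : ℚ) - 1) * PowerSeries.coeff 1 (q (stmt14_cfg a b x (y-1))) := by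
    rw [stmt14_sum_two hab _ (fun i hia hib => by
      rw [hvan i hia hib]; norm_num)]
    rw [ea, eb, efa, efb]
  -- second sum
  have hS2 : ∑ i, ∑ j, P j i * (stmt14_cfg a b x y i : ℚ) *
      constantCoeff (q (fun k =>
        stmt14_cfg a b x y k - (if k = i then 1 else 0) + if k = j then 1 else 0))
      = (if x = 1 then P b a * pI b else 0) + (if y = 1 then P a b * pI a else 0) := by
    rw [stmt14_sum_two hab _ (fun i hia hib => Finset.sum_eq_zero fun j _ => by
      rw [hvan i hia hib]; norm_num)]
    congr 1
    · exact stmt14_inner P pI q hbound hrec a b hab x y hx hy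
    · have := stmt14_inner P pI q hbound hrec b a (fun h => hab h.symm) y x hy hx
      rw [stmt14_cfg_swap b a (fun h => hab h.symm) y x] at this
      exact this
  rw [hc0, mul_zero, add_zero, hS1, hS2] at hr
  -- now case analysis
  obtain ⟨p, rfl⟩ : ∃ p, x = p + 1 := ⟨x - 1, by omega⟩
  obtain ⟨s, rfl⟩ : ∃ s, y = s + 1 := ⟨y - 1, by omega⟩
  simp only [Nat.add_sub_cancel] at hr ⊢
  have hCne : ((p + 1 + (s + 1) : ℕ) : ℚ) * (((p + 1 + (s + 1) : ℕ) : ℚ) - 1) ≠ 0 := by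
    push_cast; nlinarith [Nat.cast_nonneg (α := ℚ) p, Nat.cast_nonneg (α := ℚ) s]
  refine mul_left_cancel₀ hCne (hr.trans ?_)
  have hfne : ∀ k : ℕ, ((Nat.factorial k : ℕ) : ℚ) ≠ 0 := fun k => by
    exact_mod_cast (Nat.factorial_pos k).ne'
  rcases Nat.eq_zero_or_pos p with rfl | hp <;> rcases Nat.eq_zero_or_pos s with rfl | hs
  · -- x = 1, y = 1
    norm_num [Nat.factorial]
    ring
  · -- x = 1, y = s + 1 ≥ 2
    obtain ⟨u, rfl⟩ : ∃ u, s = u + 1 := ⟨s - 1, by omega⟩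
    have hB := IH (0 + 1 + (u + 1)) (by omega) (0 + 1) (u + 1) rfl (by omega) (by omega)
    simp only [Nat.add_sub_cancel] at hB
    rw [hB, if_pos rfl, if_neg (by omega)]
    have f1 : ((Nat.factorial (u + 1) : ℕ) : ℚ) = ((u : ℚ) + 1) * (Nat.factorial u : ℕ) := by
      rw [Nat.factorial_succ]; push_cast; ring
    have f2 : ((Nat.factorial (0 + 1 + (u + 1)) : ℕ) : ℚ)
        = ((u : ℚ) + 2) * (Nat.factorial (u + 1) : ℕ) := by
      rw [show 0 + 1 + (u + 1) = (u + 1) + 1 by ring, Nat.factorial_succ]; push_cast; ring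
    have f3 : ((Nat.factorial (0 + 1 + (u + 1 + 1)) : ℕ) : ℚ)
        = ((u : ℚ) + 3) * ((u : ℚ) + 2) * (Nat.factorial (u + 1) : ℕ) := by
      rw [show 0 + 1 + (u + 1 + 1) = ((u + 1) + 1) + 1 by ring, Nat.factorial_succ,
        Nat.factorial_succ]; push_cast; ring
    rw [f2, f3, f1]
    have h0 : ((Nat.factorial u : ℕ) : ℚ) ≠ 0 := hfne u
    field_simp
    push_cast
    ring
  · -- x = p + 1 ≥ 2, y = 1
    obtain ⟨t, rfl⟩ : ∃ t, p = t + 1 := ⟨p - 1, by omega⟩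
    have hA := IH (t + 1 + (0 + 1)) (by omega) (t + 1) (0 + 1) rfl (by omega) (by omega)
    simp only [Nat.add_sub_cancel] at hA
    rw [hA, if_neg (by omega), if_pos rfl]
    have f1 : ((Nat.factorial (t + 1) : ℕ) : ℚ) = ((t : ℚ) + 1) * (Nat.factorial t : ℕ) := by
      rw [Nat.factorial_succ]; push_cast; ring
    have f2 : ((Nat.factorial (t + 1 + (0 + 1)) : ℕ) : ℚ)
        = ((t : ℚ) + 2) * (Nat.factorial (t + 1) : ℕ) := by
      rw [show t + 1 + (0 + 1) = (t + 1) + 1 by ring, Nat.factorial_succ]; push_cast; ring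
    have f3 : ((Nat.factorial (t + 1 + 1 + (0 + 1)) : ℕ) : ℚ)
        = ((t : ℚ) + 3) * ((t : ℚ) + 2) * (Nat.factorial (t + 1) : ℕ) := by
      rw [show t + 1 + 1 + (0 + 1) = ((t + 1) + 1) + 1 by ring, Nat.factorial_succ,
        Nat.factorial_succ]; push_cast; ring
    rw [f2, f3, f1]
    have h0 : ((Nat.factorial t : ℕ) : ℚ) ≠ 0 := hfne t
    field_simp
    push_cast
    ring
  · -- x = p + 1 ≥ 2, y = s + 1 ≥ 2
    obtain ⟨t, rfl⟩ : ∃ t, p = t + 1 := ⟨p - 1, by omega⟩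
    obtain ⟨u, rfl⟩ : ∃ u, s = u + 1 := ⟨s - 1, by omega⟩
    have hA := IH (t + 1 + (u + 1 + 1)) (by omega) (t + 1) (u + 1 + 1) rfl (by omega) (by omega)
    have hB := IH (t + 1 + 1 + (u + 1)) (by omega) (t + 1 + 1) (u + 1) rfl (by omega) (by omega)
    simp only [Nat.add_sub_cancel] at hA hB
    rw [hA, hB, if_neg (by omega), if_neg (by omega)]
    have f1 : ((Nat.factorial (t + 1) : ℕ) : ℚ) = ((t : ℚ) + 1) * (Nat.factorial t : ℕ) := by
      rw [Nat.factorial_succ]; push_cast; ring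
    have f2 : ((Nat.factorial (u + 1) : ℕ) : ℚ) = ((u : ℚ) + 1) * (Nat.factorial u : ℕ) := by
      rw [Nat.factorial_succ]; push_cast; ring
    have f3 : ((Nat.factorial (t + 1 + (u + 1 + 1)) : ℕ) : ℚ)
        = ((Nat.factorial (t + 1 + 1 + (u + 1)) : ℕ) : ℚ) := by
      norm_num [show t + 1 + (u + 1 + 1) = t + 1 + 1 + (u + 1) by ring]
    have f4 : ((Nat.factorial (t + 1 + 1 + (u + 1)) : ℕ) : ℚ)
        = ((t : ℚ) + (u : ℚ) + 3) * (Nat.factorial (t + u + 2) : ℕ) := by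
      rw [show t + 1 + 1 + (u + 1) = (t + u + 2) + 1 by ring, Nat.factorial_succ]
      push_cast; ring
    have f5 : ((Nat.factorial (t + 1 + 1 + (u + 1 + 1)) : ℕ) : ℚ)
        = ((t : ℚ) + (u : ℚ) + 4) * ((t : ℚ) + (u : ℚ) + 3) * (Nat.factorial (t + u + 2) : ℕ) := by
      rw [show t + 1 + 1 + (u + 1 + 1) = ((t + u + 2) + 1) + 1 by ring, Nat.factorial_succ,
        Nat.factorial_succ]
      push_cast; ring
    rw [f3, f4, f5, f1, f2]
    have h0 : ((Nat.factorial (t + u + 2) : ℕ) : ℚ) ≠ 0 := hfne _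
    have h1 : ((Nat.factorial t : ℕ) : ℚ) ≠ 0 := hfne t
    have h2 : ((Nat.factorial u : ℕ) : ℚ) ≠ 0 := hfne u
    field_simp
    push_cast
    ring

end Main

/-- For a sample configuration `n` with exactly two observed alleles `a, b` and mutation
transition matrix `P` irreducible on `{a, b}`, the coefficient of `θ¹` in the Taylor
expansion of the sampling probability `q(n | θ, P)` about `θ = 0` equals
`Λ(n) · [(n_a/n) π_a P_{ab} + (n_b/n) π_b P_{ba}]` with
`Λ(n) = (n_a - 1)! (n_b - 1)! / (n - 1)!`.  The family of sampling probabilities is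
represented by its formal Taylor expansion `q : configurations → ℚ[[θ]]` satisfying the
coalescent recursion and the boundary conditions `q(e_i) = π_i`. -/
theorem stmt14 (K : ℕ) (P : Fin K → Fin K → ℚ) (pI : Fin K → ℚ)
    (q : (Fin K → ℕ) → PowerSeries ℚ)
    (hbound : ∀ a : Fin K, q (fun k => if k = a then 1 else 0) = PowerSeries.C (pI a))
    (hrec : ∀ n : Fin K → ℕ, 2 ≤ ∑ i, n i →
      (PowerSeries.C (((∑ i, n i : ℕ) : ℚ) * (((∑ i, n i : ℕ) : ℚ) - 1)) +
          PowerSeries.C (((∑ i, n i : ℕ) : ℚ)) * PowerSeries.X) * q n =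
        (∑ i, PowerSeries.C ((n i : ℚ) * ((n i : ℚ) - 1)) *
            q (fun k => n k - if k = i then 1 else 0)) +
          PowerSeries.X * ∑ i, ∑ j, PowerSeries.C (P j i * (n i : ℚ)) *
            q (fun k => n k - (if k = i then 1 else 0) + if k = j then 1 else 0))
    (n : Fin K → ℕ) (a b : Fin K) (hab : a ≠ b)
    (hsupp : Finset.univ.filter (fun i => 0 < n i) = {a, b})
    (hirr : P a b ≠ 0 ∧ P b a ≠ 0) :
    PowerSeries.coeff 1 (q n) =
      ((Nat.factorial (n a - 1) : ℚ) * (Nat.factorial (n b - 1) : ℚ) /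
          (Nat.factorial ((∑ i, n i) - 1) : ℚ)) *
        (((n a : ℚ) / ((∑ i, n i : ℕ) : ℚ)) * pI a * P a b +
          ((n b : ℚ) / ((∑ i, n i : ℕ) : ℚ)) * pI b * P b a) := by
  have hba : ¬ b = a := fun h => hab h.symm
  have ha : 0 < n a := by
    have h : a ∈ Finset.univ.filter (fun i => 0 < n i) := by rw [hsupp]; simp
    exact (Finset.mem_filter.mp h).2
  have hb : 0 < n b := by
    have h : b ∈ Finset.univ.filter (fun i => 0 < n i) := by rw [hsupp]; simp
    exact (Finset.mem_filter.mp h).2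
  have hz : ∀ i, i ≠ a → i ≠ b → n i = 0 := by
    intro i hia hib
    by_contra h
    have hmem : i ∈ Finset.univ.filter (fun i => 0 < n i) :=
      Finset.mem_filter.mpr ⟨Finset.mem_univ i, Nat.pos_of_ne_zero h⟩
    rw [hsupp] at hmem
    simp only [Finset.mem_insert, Finset.mem_singleton] at hmem
    tauto
  have hsum : ∑ i, n i = n a + n b := stmt14_sum_two hab n hz
  have hn : n = stmt14_cfg a b (n a) (n b) := by
    funext k
    by_cases h1 : k = a
    · simp [stmt14_cfg, h1]
    · by_cases h2 : k = b
      · simp [stmt14_cfg, h2, hba]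
      · simp [stmt14_cfg, h1, h2, hz k h1 h2]
  conv_lhs => rw [hn]
  rw [stmt14_c1 P pI q hbound hrec a b hab (n a + n b) (n a) (n b) rfl ha hb, hsum]
  have hfac : ((Nat.factorial (n a + n b) : ℕ) : ℚ)
      = ((n a + n b : ℕ) : ℚ) * ((Nat.factorial (n a + n b - 1) : ℕ) : ℚ) := by
    rw [← Nat.mul_factorial_pred (by omega : n a + n b ≠ 0)]
    push_cast
    ring
  rw [hfac]
  have h1 : ((Nat.factorial (n a + n b - 1) : ℕ) : ℚ) ≠ 0 := by
    exact_mod_cast (Nat.factorial_pos _).ne'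
  have h2 : ((n a + n b : ℕ) : ℚ) ≠ 0 := by
    exact_mod_cast (by omega : n a + n b ≠ 0)
  field_simp
end

section
/- For a sample configuration n = n_a e_a + n_b e_b + n_c e_c with three distinct observed alleles, if P restricted to {a,b,c} is irreducible and reversible (π_i P_{ij} = π_j P_{ji} for i,j ∈ {a,b,c}), then the leading-order coefficient Q(n) equals Λ(n)·[(n_a/n)π_a P_{ab}P_{ac} + (n_b/n)π_b P_{ba}P_{bc} + (n_c/n)π_c P_{ca}P_{cb}], where Λ(n) = (n_a-1)!(n_b-1)!(n_c-1)!/(n-1)! and n = n_a + n_b + n_c. -/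
namespace S15
variable {K : ℕ} {P : Fin K → Fin K → ℚ} {pI : Fin K → ℚ} {q : (Fin K → ℕ) → PowerSeries ℚ}

lemma sum1' {M : Type*} [AddCommMonoid M] {f : Fin K → M} (a : Fin K)
    (h0 : ∀ i, i ≠ a → f i = 0) : ∑ i, f i = f a := by
  rw [Finset.sum_eq_single a (fun i _ hi => h0 i hi) (by simp)]

lemma sum2' {M : Type*} [AddCommMonoid M] {f : Fin K → M} (a b : Fin K) (hab : a ≠ b)
    (h0 : ∀ i, i ≠ a → i ≠ b → f i = 0) : ∑ i, f i = f a + f b := by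
  classical
  rw [← Finset.sum_subset (Finset.subset_univ ({a, b} : Finset (Fin K)))
    (fun x _ hx => h0 x (by simp at hx; tauto) (by simp at hx; tauto))]
  rw [Finset.sum_insert (by simp [hab]), Finset.sum_singleton]

lemma sum3' {M : Type*} [AddCommMonoid M] {f : Fin K → M} (a b c : Fin K)
    (hab : a ≠ b) (hac : a ≠ c) (hbc : b ≠ c)
    (h0 : ∀ i, i ≠ a → i ≠ b → i ≠ c → f i = 0) : ∑ i, f i = f a + f b + f c := by
  classical
  rw [← Finset.sum_subset (Finset.subset_univ ({a, b, c} : Finset (Fin K)))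
    (fun x _ hx => by simp at hx; exact h0 x (by tauto) (by tauto) (by tauto))]
  rw [Finset.sum_insert (by simp [hab, hac]), Finset.sum_insert (by simp [hbc]),
    Finset.sum_singleton, add_assoc]

lemma sum_sub (n : Fin K → ℕ) (u : Fin K) (hu : 0 < n u) :
    ∑ i, n i = (∑ i, (n i - if i = u then 1 else 0)) + 1 := by
  classical
  have h : ∀ k, n k = (n k - if k = u then 1 else 0) + (if k = u then 1 else 0) := by
    intro k; by_cases h : k = u <;> simp [h, Nat.sub_add_cancel hu]
  calc ∑ i, n i = ∑ i, ((n i - if i = u then 1 else 0) + (if i = u then 1 else 0)) :=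
        Finset.sum_congr rfl (fun i _ => h i)
    _ = (∑ i, (n i - if i = u then 1 else 0)) + ∑ i, (if i = u then 1 else 0) :=
        Finset.sum_add_distrib
    _ = _ := by simp

lemma sum_mov (n : Fin K → ℕ) (u j : Fin K) (hu : 0 < n u) :
    ∑ i, ((n i - if i = u then 1 else 0) + if i = j then 1 else 0) = ∑ i, n i := by
  classical
  rw [Finset.sum_add_distrib]
  have h1 : ∑ i : Fin K, (if i = j then 1 else 0) = 1 := by simp
  rw [h1, ← sum_sub n u hu]

section G2sec

/-- two-allele leading coefficient formula -/
def G2 (P : Fin K → Fin K → ℚ) (pI : Fin K → ℚ) (m : Fin K → ℕ) (u v : Fin K) : ℚ :=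
  ((Nat.factorial (m u - 1) : ℚ) * (Nat.factorial (m v - 1) : ℚ) /
      (Nat.factorial (∑ i, m i - 1) : ℚ)) *
    (((m u : ℚ) * pI u * P u v + (m v : ℚ) * pI v * P v u) / ((∑ i, m i : ℕ) : ℚ))

lemma G2symm (P : Fin K → Fin K → ℚ) (pI : Fin K → ℚ) (m : Fin K → ℕ) (u v : Fin K) :
    G2 P pI m u v = G2 P pI m v u := by
  simp only [G2]; ring



/-- three-allele leading coefficient formula -/
def G3 (P : Fin K → Fin K → ℚ) (pI : Fin K → ℚ) (n : Fin K → ℕ) (u v w : Fin K) : ℚ :=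
  ((Nat.factorial (n u - 1) : ℚ) * (Nat.factorial (n v - 1) : ℚ) *
      (Nat.factorial (n w - 1) : ℚ) / (Nat.factorial (∑ i, n i - 1) : ℚ)) *
    (((n u : ℚ) * pI u * P u v * P u w + (n v : ℚ) * pI v * P v u * P v w +
        (n w : ℚ) * pI w * P w u * P w v) / ((∑ i, n i : ℕ) : ℚ))

lemma G3cyc (P : Fin K → Fin K → ℚ) (pI : Fin K → ℚ) (n : Fin K → ℕ) (u v w : Fin K) :
    G3 P pI n u v w = G3 P pI n v w u := by
  simp only [G3]; ring

lemma alg1 (r s Pvu Pwu Pvw Pwv piv piw : ℚ) (hrev : piv * Pvw = piw * Pwv) :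
    Pvu * (r + 1) * ((r + 2) * piv * Pvw + (s + 1) * piw * Pwv)
      + Pwu * (s + 1) * ((r + 1) * piv * Pvw + (s + 2) * piw * Pwv)
    = (r + s + 3) * ((r + 1) * piv * Pvu * Pvw + (s + 1) * piw * Pwu * Pwv) := by
  linear_combination ((r + 1) * (s + 1) * (Pwu - Pvu)) * hrev

end G2sec

section
variable (hbound : ∀ a : Fin K, q (fun k => if k = a then 1 else 0) = PowerSeries.C (pI a))
variable (hrec : ∀ n : Fin K → ℕ, 2 ≤ ∑ i, n i →
      (PowerSeries.C (((∑ i, n i : ℕ) : ℚ) * (((∑ i, n i : ℕ) : ℚ) - 1)) +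
          PowerSeries.C (((∑ i, n i : ℕ) : ℚ)) * PowerSeries.X) * q n =
        (∑ i, PowerSeries.C ((n i : ℚ) * ((n i : ℚ) - 1)) *
            q (fun k => n k - if k = i then 1 else 0)) +
          PowerSeries.X * ∑ i, ∑ j, PowerSeries.C (P j i * (n i : ℚ)) *
            q (fun k => n k - (if k = i then 1 else 0) + if k = j then 1 else 0))

include hrec

lemma rec0 (n : Fin K → ℕ) (h2 : 2 ≤ ∑ i, n i) :
    ((∑ i, n i : ℕ) : ℚ) * (((∑ i, n i : ℕ) : ℚ) - 1) * PowerSeries.coeff 0 (q n)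
      = ∑ i, (n i : ℚ) * ((n i : ℚ) - 1) *
          PowerSeries.coeff 0 (q (fun k => n k - if k = i then 1 else 0)) := by
  have h := congrArg (PowerSeries.coeff 0) (hrec n h2)
  simp only [add_mul, mul_assoc, map_add, map_sum, PowerSeries.coeff_C_mul] at h
  rw [PowerSeries.coeff_zero_eq_constantCoeff] at h
  simp only [map_mul, map_add, map_sum, PowerSeries.constantCoeff_X, mul_zero, zero_mul,
    add_zero, PowerSeries.constantCoeff_C, ← PowerSeries.coeff_zero_eq_constantCoeff] at h
  simpa [mul_assoc] using h

lemma recS (n : Fin K → ℕ) (h2 : 2 ≤ ∑ i, n i) (k : ℕ) :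
    ((∑ i, n i : ℕ) : ℚ) * (((∑ i, n i : ℕ) : ℚ) - 1) * PowerSeries.coeff (k+1) (q n)
      + ((∑ i, n i : ℕ) : ℚ) * PowerSeries.coeff k (q n)
      = (∑ i, (n i : ℚ) * ((n i : ℚ) - 1) *
          PowerSeries.coeff (k+1) (q (fun kk => n kk - if kk = i then 1 else 0)))
        + ∑ i, ∑ j, P j i * (n i : ℚ) *
            PowerSeries.coeff k (q (fun kk => n kk - (if kk = i then 1 else 0) + if kk = j then 1 else 0)) := by
  have h := congrArg (PowerSeries.coeff (k+1)) (hrec n h2)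
  simp only [add_mul, mul_assoc, map_add, map_sum, PowerSeries.coeff_C_mul,
    PowerSeries.coeff_succ_X_mul] at h
  simpa [mul_assoc] using h

lemma L0 : ∀ (S : ℕ) (m : Fin K → ℕ) (u v : Fin K), u ≠ v → 0 < m u → 0 < m v →
    ∑ i, m i = S → PowerSeries.coeff 0 (q m) = 0 := by
  intro S
  induction S using Nat.strong_induction_on with
  | _ S IH =>
    intro m u v huv hu hv hS
    have hle : m u + m v ≤ ∑ i, m i := by
      rw [← Finset.sum_pair huv]
      exact Finset.sum_le_sum_of_subset (Finset.subset_univ _)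
    have h2 : 2 ≤ ∑ i, m i := by omega
    have h := rec0 hrec m h2
    have hz : ∑ i, (m i : ℚ) * ((m i : ℚ) - 1) *
        PowerSeries.coeff 0 (q (fun k => m k - if k = i then 1 else 0)) = 0 := by
      apply Finset.sum_eq_zero
      intro i _
      rcases le_or_gt (m i) 1 with h1 | h1
      · have : m i = 0 ∨ m i = 1 := by omega
        rcases this with h' | h' <;> simp [h']
      · have hsub := sum_sub m i (by omega)
        have hcz : PowerSeries.coeff 0 (q (fun k => m k - if k = i then 1 else 0)) = 0 := by
          apply IH (S - 1) (by omega) _ u v huv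
          · by_cases h' : u = i
            · subst h'; simp; omega
            · simp [h']; omega
          · by_cases h' : v = i
            · subst h'; simp; omega
            · simp [h']; omega
          · omega
        rw [hcz, mul_zero]
    rw [hz] at h
    have hne : ((∑ i, m i : ℕ) : ℚ) * (((∑ i, m i : ℕ) : ℚ) - 1) ≠ 0 := by
      have h2' : (2:ℚ) ≤ ((∑ i, m i : ℕ) : ℚ) := by exact_mod_cast h2
      nlinarith
    exact (mul_eq_zero.mp h).resolve_left hne

lemma L1 : ∀ (S : ℕ) (m : Fin K → ℕ) (u v w : Fin K), u ≠ v → u ≠ w → v ≠ w →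
    0 < m u → 0 < m v → 0 < m w →
    ∑ i, m i = S → PowerSeries.coeff 1 (q m) = 0 := by
  intro S
  induction S using Nat.strong_induction_on with
  | _ S IH =>
    intro m u v w huv huw hvw hu hv hw hS
    have hle : m u + m v ≤ ∑ i, m i := by
      rw [← Finset.sum_pair huv]
      exact Finset.sum_le_sum_of_subset (Finset.subset_univ _)
    have h2 : 2 ≤ ∑ i, m i := by omega
    have h := recS hrec m h2 0
    have hc0 : PowerSeries.coeff 0 (q m) = 0 := L0 hrec _ m u v huv hu hv rfl
    have hz1 : ∑ i, (m i : ℚ) * ((m i : ℚ) - 1) *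
        PowerSeries.coeff (0+1) (q (fun kk => m kk - if kk = i then 1 else 0)) = 0 := by
      apply Finset.sum_eq_zero
      intro i _
      rcases le_or_gt (m i) 1 with h1 | h1
      · have : m i = 0 ∨ m i = 1 := by omega
        rcases this with h' | h' <;> simp [h']
      · have hsub := sum_sub m i (by omega)
        have hcz : PowerSeries.coeff 1 (q (fun kk => m kk - if kk = i then 1 else 0)) = 0 := by
          apply IH (S - 1) (by omega) _ u v w huv huw hvw
          · by_cases h' : u = i
            · subst h'; simp; omega
            · simp [h']; omega
          · by_cases h' : v = i
            · subst h'; simp; omega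
            · simp [h']; omega
          · by_cases h' : w = i
            · subst h'; simp; omega
            · simp [h']; omega
          · omega
        rw [hcz, mul_zero]
    have hz0 : ∑ i, ∑ j, P j i * (m i : ℚ) *
        PowerSeries.coeff 0 (q (fun kk => m kk - (if kk = i then 1 else 0) + if kk = j then 1 else 0)) = 0 := by
      apply Finset.sum_eq_zero
      intro i _
      apply Finset.sum_eq_zero
      intro j _
      have hpos : ∀ x, x ≠ i → 0 < m x →
          0 < m x - (if x = i then 1 else 0) + (if x = j then 1 else 0) := by
        intro x hx hmx
        simp [hx]
        omega
      have hcz : PowerSeries.coeff 0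
          (q (fun kk => m kk - (if kk = i then 1 else 0) + if kk = j then 1 else 0)) = 0 := by
        by_cases hiu : i = u
        · exact L0 hrec _ _ v w hvw (hpos v (by rw [hiu]; exact huv.symm) hv)
            (hpos w (by rw [hiu]; exact huw.symm) hw) rfl
        · by_cases hiv : i = v
          · exact L0 hrec _ _ u w huw (hpos u (fun h => hiu h.symm) hu)
              (hpos w (by rw [hiv]; exact hvw.symm) hw) rfl
          · exact L0 hrec _ _ u v huv (hpos u (fun h => hiu h.symm) hu)
              (hpos v (fun h => hiv h.symm) hv) rfl
      rw [hcz, mul_zero]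
    rw [hc0, hz1, hz0, mul_zero, add_zero, add_zero] at h
    have hne : ((∑ i, m i : ℕ) : ℚ) * (((∑ i, m i : ℕ) : ℚ) - 1) ≠ 0 := by
      have h2' : (2:ℚ) ≤ ((∑ i, m i : ℕ) : ℚ) := by exact_mod_cast h2
      nlinarith
    exact (mul_eq_zero.mp h).resolve_left hne

include hbound in
lemma Lsingle : ∀ (N : ℕ) (m : Fin K → ℕ) (v : Fin K), (∀ k, k ≠ v → m k = 0) →
    m v = N + 1 → PowerSeries.coeff 0 (q m) = pI v := by
  intro N
  induction N with
  | zero =>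
    intro m v h0 hv
    have hm : m = fun k => if k = v then 1 else 0 := by
      funext k; by_cases h : k = v <;> simp [h, hv, h0 k]
    rw [hm, hbound v, PowerSeries.coeff_zero_C]
  | succ N IH =>
    intro m v h0 hv
    have hsum : ∑ i, m i = m v := sum1' v (fun i hi => h0 i hi)
    have h2 : 2 ≤ ∑ i, m i := by omega
    have h := rec0 hrec m h2
    have hred : ∑ i, (m i : ℚ) * ((m i : ℚ) - 1) *
        PowerSeries.coeff 0 (q (fun k => m k - if k = i then 1 else 0))
        = (m v : ℚ) * ((m v : ℚ) - 1) * pI v := by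
      rw [sum1' v (fun i hi => by simp [h0 i hi])]
      congr 1
      exact IH _ v (fun k hk => by simp [h0 k hk]) (by simp [hv])
    rw [hred, hsum] at h
    have hne : (m v : ℚ) * ((m v : ℚ) - 1) ≠ 0 := by
      have h2' : (2:ℚ) ≤ (m v : ℚ) := by exact_mod_cast (by omega : 2 ≤ m v)
      nlinarith
    exact mul_left_cancel₀ hne h



include hbound in
lemma contrib1 (m : Fin K → ℕ) (u v : Fin K) (huv : u ≠ v)
    (h0 : ∀ k, k ≠ u → k ≠ v → m k = 0) (hu : 0 < m u) (hv : 0 < m v)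
    (hq : 2 ≤ m u → PowerSeries.coeff 1 (q (fun kk => m kk - if kk = u then 1 else 0))
      = G2 P pI (fun kk => m kk - if kk = u then 1 else 0) u v) :
    (m u : ℚ) * ((m u : ℚ) - 1) *
        PowerSeries.coeff 1 (q (fun kk => m kk - if kk = u then 1 else 0))
      + ∑ j, P j u * (m u : ℚ) *
          PowerSeries.coeff 0 (q (fun kk => m kk - (if kk = u then 1 else 0) + if kk = j then 1 else 0))
    = (m u : ℚ) * ((Nat.factorial (m u - 1) : ℚ) * (Nat.factorial (m v - 1) : ℚ) /
        (Nat.factorial (∑ i, m i - 1) : ℚ)) *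
      (((m u : ℚ) - 1) * pI u * P u v + (m v : ℚ) * pI v * P v u) := by
  have hsum : ∑ i, m i = m u + m v := sum2' u v huv h0
  have hpos : ∀ j x, x ≠ u → 0 < m x →
      0 < m x - (if x = u then 1 else 0) + (if x = j then 1 else 0) := by
    intro j x hx hmx; simp [hx]; omega
  rcases lt_or_ge (m u) 2 with h1 | h1
  · -- m u = 1
    have hmu : m u = 1 := by omega
    obtain ⟨r, hr⟩ : ∃ r, m v = r + 1 := ⟨m v - 1, by omega⟩
    have hred : ∑ j, P j u * (m u : ℚ) *
        PowerSeries.coeff 0 (q (fun kk => m kk - (if kk = u then 1 else 0) + if kk = j then 1 else 0))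
        = P v u * (m u : ℚ) * pI v := by
      rw [sum1' v ?_]
      · congr 1
        apply Lsingle hbound hrec (m v)
        · intro k hk
          by_cases hku : k = u
          · simp [hku, huv, hmu]
          · simp [hku, hk, h0 k hku hk]
        · simp [Ne.symm huv]
      · intro j hj
        have hcz : PowerSeries.coeff 0
            (q (fun kk => m kk - (if kk = u then 1 else 0) + if kk = j then 1 else 0)) = 0 := by
          by_cases hju : j = u
          · apply L0 hrec _ _ u v huv _ (hpos j v (Ne.symm huv) hv) rfl
            simp only [hju, if_pos rfl]
            omega
          · apply L0 hrec _ _ v j (fun h => hj h.symm) (hpos j v (Ne.symm huv) hv) _ rfl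
            have : 0 < m j - (if j = u then 1 else 0) + (if j = j then 1 else 0) := by
              simp [hju]
            exact this
        rw [hcz, mul_zero]
    have e4 : ∑ i, m i = r + 2 := by omega
    rw [hred, e4, hmu, hr]
    have hf : (Nat.factorial (r + 2 - 1) : ℚ) = (r + 1) * (Nat.factorial r : ℚ) := by
      rw [show r + 2 - 1 = r + 1 from rfl]
      push_cast [Nat.factorial_succ]; ring
    have hfv : (Nat.factorial (r + 1 - 1) : ℚ) = (Nat.factorial r : ℚ) := by norm_num
    have hfz : (Nat.factorial r : ℚ) ≠ 0 := Nat.cast_ne_zero.mpr (Nat.factorial_ne_zero r)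
    rw [hf, hfv, show (1:ℕ) - 1 = 0 from rfl, Nat.factorial_zero]
    push_cast
    field_simp
    ring
  · -- m u ≥ 2
    have hzero : ∑ j, P j u * (m u : ℚ) *
        PowerSeries.coeff 0 (q (fun kk => m kk - (if kk = u then 1 else 0) + if kk = j then 1 else 0))
        = 0 := by
      apply Finset.sum_eq_zero
      intro j _
      have hcz : PowerSeries.coeff 0
          (q (fun kk => m kk - (if kk = u then 1 else 0) + if kk = j then 1 else 0)) = 0 := by
        apply L0 hrec _ _ u v huv _ (hpos j v (Ne.symm huv) hv) rfl
        simp; omega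
      rw [hcz, mul_zero]
    rw [hzero, add_zero, hq h1]
    obtain ⟨t, ht⟩ : ∃ t, m u = t + 2 := ⟨m u - 2, by omega⟩
    obtain ⟨r, hr⟩ : ∃ r, m v = r + 1 := ⟨m v - 1, by omega⟩
    have hsub : ∑ i, m i = (∑ i, (m i - if i = u then 1 else 0)) + 1 := sum_sub m u hu
    have e3 : ∑ i, (m i - if i = u then 1 else 0) = t + r + 2 := by omega
    have e4 : ∑ i, m i = t + r + 3 := by omega
    simp only [G2, if_true, if_neg (Ne.symm huv), Nat.sub_zero]
    rw [e3, e4, ht, hr]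
    rw [show t + 2 - 1 - 1 = t from by omega, show t + 2 - 1 = t + 1 from by omega,
      show r + 1 - 1 = r from by omega, show t + r + 2 - 1 = t + r + 1 from by omega,
      show t + r + 3 - 1 = (t + r + 1) + 1 from by omega,
      Nat.factorial_succ (t + r + 1), Nat.factorial_succ t]
    have hfz1 : (Nat.factorial (t + r + 1) : ℚ) ≠ 0 :=
      Nat.cast_ne_zero.mpr (Nat.factorial_ne_zero _)
    have hfz2 : (Nat.factorial t : ℚ) ≠ 0 := Nat.cast_ne_zero.mpr (Nat.factorial_ne_zero _)
    push_cast
    field_simp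
    ring

include hbound in
lemma F1 : ∀ (S : ℕ) (m : Fin K → ℕ) (u v : Fin K), u ≠ v →
    (∀ k, k ≠ u → k ≠ v → m k = 0) → 0 < m u → 0 < m v → ∑ i, m i = S →
    PowerSeries.coeff 1 (q m) = G2 P pI m u v := by
  intro S
  induction S using Nat.strong_induction_on with
  | _ S IH =>
  intro m u v huv h0 hu hv hS
  have hsum : ∑ i, m i = m u + m v := sum2' u v huv h0
  have h2 : 2 ≤ ∑ i, m i := by omega
  have h := recS hrec m h2 0
  have hc0 : PowerSeries.coeff 0 (q m) = 0 := L0 hrec _ m u v huv hu hv rfl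
  rw [hc0, mul_zero, add_zero] at h
  rw [sum2' (f := fun i => (m i : ℚ) * ((m i : ℚ) - 1) * PowerSeries.coeff (0+1)
      (q (fun kk => m kk - if kk = i then 1 else 0)))
    u v huv (fun i hiu hiv => by simp [h0 i hiu hiv])] at h
  rw [sum2' (f := fun i => ∑ j, P j i * (m i : ℚ) * PowerSeries.coeff 0
      (q (fun kk => m kk - (if kk = i then 1 else 0) + if kk = j then 1 else 0)))
    u v huv (fun i hiu hiv => Finset.sum_eq_zero (fun j _ => by simp [h0 i hiu hiv]))] at h
  have hqu : 2 ≤ m u → PowerSeries.coeff 1 (q (fun kk => m kk - if kk = u then 1 else 0))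
      = G2 P pI (fun kk => m kk - if kk = u then 1 else 0) u v := by
    intro hmu2
    have hsub := sum_sub m u hu
    apply IH (S - 1) (by omega) _ u v huv
    · intro k hku hkv; simp [h0 k hku hkv]
    · simp; omega
    · have : ¬ v = u := Ne.symm huv
      simp [this]; exact hv
    · omega
  have hqv : 2 ≤ m v → PowerSeries.coeff 1 (q (fun kk => m kk - if kk = v then 1 else 0))
      = G2 P pI (fun kk => m kk - if kk = v then 1 else 0) v u := by
    intro hmv2
    have hsub := sum_sub m v hv
    have h' : PowerSeries.coeff 1 (q (fun kk => m kk - if kk = v then 1 else 0))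
        = G2 P pI (fun kk => m kk - if kk = v then 1 else 0) u v := by
      apply IH (S - 1) (by omega) _ u v huv
      · intro k hku hkv; simp [h0 k hku hkv]
      · have : ¬ u = v := huv
        simp [this]; exact hu
      · simp; omega
      · omega
    rw [h', G2symm]
  have cu := contrib1 hbound hrec m u v huv h0 hu hv hqu
  have cv := contrib1 hbound hrec m v u (Ne.symm huv) (fun k h1 h2 => h0 k h2 h1) hv hu hqv
  simp only [zero_add] at h
  have hN1 : ((∑ i, m i : ℕ) : ℚ) * (((∑ i, m i : ℕ) : ℚ) - 1) ≠ 0 := by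
    have : (2:ℚ) ≤ ((∑ i, m i : ℕ) : ℚ) := by exact_mod_cast h2
    nlinarith
  have hfz : (Nat.factorial (∑ i, m i - 1) : ℚ) ≠ 0 :=
    Nat.cast_ne_zero.mpr (Nat.factorial_ne_zero _)
  have hMcast : ((∑ i, m i : ℕ) : ℚ) = (m u : ℚ) + (m v : ℚ) := by
    rw [hsum]; push_cast; ring
  have hu1 : (1:ℚ) ≤ (m u : ℚ) := by exact_mod_cast hu
  have hv1 : (1:ℚ) ≤ (m v : ℚ) := by exact_mod_cast hv
  have key : (m u : ℚ) * ((Nat.factorial (m u - 1) : ℚ) * (Nat.factorial (m v - 1) : ℚ) /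
        (Nat.factorial (∑ i, m i - 1) : ℚ)) *
        (((m u : ℚ) - 1) * pI u * P u v + (m v : ℚ) * pI v * P v u)
      + (m v : ℚ) * ((Nat.factorial (m v - 1) : ℚ) * (Nat.factorial (m u - 1) : ℚ) /
        (Nat.factorial (∑ i, m i - 1) : ℚ)) *
        (((m v : ℚ) - 1) * pI v * P v u + (m u : ℚ) * pI u * P u v)
      = ((∑ i, m i : ℕ) : ℚ) * (((∑ i, m i : ℕ) : ℚ) - 1) * G2 P pI m u v := by
    simp only [G2]
    rw [hMcast]
    have hNuv : (m u : ℚ) + (m v : ℚ) ≠ 0 := by linarith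
    field_simp
    ring
  apply mul_left_cancel₀ hN1
  rw [h, ← key]
  linarith [cu, cv]

include hbound in
lemma contrib2 (n : Fin K → ℕ) (u v w : Fin K) (huv : u ≠ v) (huw : u ≠ w) (hvw : v ≠ w)
    (h0 : ∀ k, k ≠ u → k ≠ v → k ≠ w → n k = 0)
    (hu : 0 < n u) (hv : 0 < n v) (hw : 0 < n w)
    (hrev3 : pI v * P v w = pI w * P w v)
    (hq : 2 ≤ n u → PowerSeries.coeff 2 (q (fun kk => n kk - if kk = u then 1 else 0))
      = G3 P pI (fun kk => n kk - if kk = u then 1 else 0) u v w) :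
    (n u : ℚ) * ((n u : ℚ) - 1) *
        PowerSeries.coeff 2 (q (fun kk => n kk - if kk = u then 1 else 0))
      + ∑ j, P j u * (n u : ℚ) *
          PowerSeries.coeff 1 (q (fun kk => n kk - (if kk = u then 1 else 0) + if kk = j then 1 else 0))
    = (n u : ℚ) * ((Nat.factorial (n u - 1) : ℚ) * (Nat.factorial (n v - 1) : ℚ) *
        (Nat.factorial (n w - 1) : ℚ) / (Nat.factorial (∑ i, n i - 1) : ℚ)) *
      (((n u : ℚ) - 1) * pI u * P u v * P u w + (n v : ℚ) * pI v * P v u * P v w +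
        (n w : ℚ) * pI w * P w u * P w v) := by
  have hsum : ∑ i, n i = n u + n v + n w := sum3' u v w huv huw hvw h0
  have hpos : ∀ j x, x ≠ u → 0 < n x →
      0 < n x - (if x = u then 1 else 0) + (if x = j then 1 else 0) := by
    intro j x hx hmx; simp [hx]; omega
  obtain ⟨r, hr⟩ : ∃ r, n v = r + 1 := ⟨n v - 1, by omega⟩
  obtain ⟨sn, hs⟩ : ∃ sn, n w = sn + 1 := ⟨n w - 1, by omega⟩
  rcases lt_or_ge (n u) 2 with h1 | h1
  · -- n u = 1
    have hmu : n u = 1 := by omega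
    have hmov : ∀ j, ∑ i, ((n i - if i = u then 1 else 0) + if i = j then 1 else 0)
        = ∑ i, n i := fun j => sum_mov n u j hu
    have hredsum : ∑ j, P j u * (n u : ℚ) *
        PowerSeries.coeff 1 (q (fun kk => n kk - (if kk = u then 1 else 0) + if kk = j then 1 else 0))
        = P v u * (n u : ℚ) *
            PowerSeries.coeff 1 (q (fun kk => n kk - (if kk = u then 1 else 0) + if kk = v then 1 else 0))
          + P w u * (n u : ℚ) *
            PowerSeries.coeff 1 (q (fun kk => n kk - (if kk = u then 1 else 0) + if kk = w then 1 else 0)) := by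
      apply sum2' v w hvw
      intro j hjv hjw
      have hcz : PowerSeries.coeff 1
          (q (fun kk => n kk - (if kk = u then 1 else 0) + if kk = j then 1 else 0)) = 0 := by
        by_cases hju : j = u
        · apply L1 hrec _ _ u v w huv huw hvw _ (hpos j v (Ne.symm huv) hv)
            (hpos j w (Ne.symm huw) hw) rfl
          simp only [hju, if_pos rfl]
          omega
        · apply L1 hrec _ _ v w j hvw (fun h => hjv h.symm) (fun h => hjw h.symm)
            (hpos j v (Ne.symm huv) hv) (hpos j w (Ne.symm huw) hw) _ rfl
          have : 0 < n j - (if j = u then 1 else 0) + (if j = j then 1 else 0) := by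
            simp [hju]
          exact this
      rw [hcz, mul_zero]
    have hF1v : PowerSeries.coeff 1
        (q (fun kk => n kk - (if kk = u then 1 else 0) + if kk = v then 1 else 0))
        = G2 P pI (fun kk => n kk - (if kk = u then 1 else 0) + if kk = v then 1 else 0) v w := by
      apply F1 hbound hrec _ _ v w hvw _ _ _ rfl
      · intro k hkv hkw
        by_cases hku : k = u
        · simp [hku, huv, hmu]
        · simp [hku, hkv, h0 k hku hkv hkw]
      · exact hpos v v (Ne.symm huv) hv
      · have : 0 < n w - (if w = u then 1 else 0) + (if w = v then 1 else 0) := by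
          simp [Ne.symm huw, Ne.symm hvw]; omega
        exact this
    have hF1w : PowerSeries.coeff 1
        (q (fun kk => n kk - (if kk = u then 1 else 0) + if kk = w then 1 else 0))
        = G2 P pI (fun kk => n kk - (if kk = u then 1 else 0) + if kk = w then 1 else 0) v w := by
      apply F1 hbound hrec _ _ v w hvw _ _ _ rfl
      · intro k hkv hkw
        by_cases hku : k = u
        · simp [hku, huw, hmu]
        · simp [hku, hkw, h0 k hku hkv hkw]
      · have : 0 < n v - (if v = u then 1 else 0) + (if v = w then 1 else 0) := by
          simp [Ne.symm huv]; omega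
        exact this
      · exact hpos w w (Ne.symm huw) hw
    rw [hredsum, hF1v, hF1w]
    have hGv : G2 P pI (fun kk => n kk - (if kk = u then 1 else 0) + if kk = v then 1 else 0) v w
        = ((Nat.factorial (r + 1) : ℚ) * (Nat.factorial sn : ℚ) /
            (Nat.factorial (r + sn + 2) : ℚ)) *
          (((r : ℚ) + 2) * pI v * P v w + ((sn : ℚ) + 1) * pI w * P w v) / ((r : ℚ) + (sn : ℚ) + 3) := by
      simp only [G2, if_true]
      have ev : (n v - if v = u then 1 else 0) + 1 = r + 2 := by
        simp [Ne.symm huv, hr]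
      have ew : (n w - if w = u then 1 else 0) + (if w = v then 1 else 0) = sn + 1 := by
        simp [Ne.symm huw, Ne.symm hvw, hs]
      rw [hmov v, hsum, ev, ew, hmu, hr, hs]
      rw [show r + 2 - 1 = r + 1 from by omega, show sn + 1 - 1 = sn from by omega,
        show 1 + (r + 1) + (sn + 1) - 1 = r + sn + 2 from by omega]
      push_cast
      ring
    have hGw : G2 P pI (fun kk => n kk - (if kk = u then 1 else 0) + if kk = w then 1 else 0) v w
        = ((Nat.factorial r : ℚ) * (Nat.factorial (sn + 1) : ℚ) /
            (Nat.factorial (r + sn + 2) : ℚ)) *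
          (((r : ℚ) + 1) * pI v * P v w + ((sn : ℚ) + 2) * pI w * P w v) / ((r : ℚ) + (sn : ℚ) + 3) := by
      simp only [G2, if_true]
      have ev : (n v - if v = u then 1 else 0) + (if v = w then 1 else 0) = r + 1 := by
        simp [Ne.symm huv, hvw, hr]
      have ew : (n w - if w = u then 1 else 0) + 1 = sn + 2 := by
        simp [Ne.symm huw, hs]
      rw [hmov w, hsum, ev, ew, hmu, hr, hs]
      rw [show r + 1 - 1 = r from by omega, show sn + 2 - 1 = sn + 1 from by omega,
        show 1 + (r + 1) + (sn + 1) - 1 = r + sn + 2 from by omega]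
      push_cast
      ring
    rw [hGv, hGw, hsum, hmu, hr, hs]
    rw [show 1 + (r + 1) + (sn + 1) - 1 = r + sn + 2 from by omega,
      show (1:ℕ) - 1 = 0 from rfl, Nat.factorial_zero,
      show r + 1 - 1 = r from by omega, show sn + 1 - 1 = sn from by omega,
      Nat.factorial_succ r, Nat.factorial_succ sn]
    have halg := alg1 (r : ℚ) (sn : ℚ) (P v u) (P w u) (P v w) (P w v) (pI v) (pI w) hrev3
    have hfz : (Nat.factorial (r + sn + 2) : ℚ) ≠ 0 :=
      Nat.cast_ne_zero.mpr (Nat.factorial_ne_zero _)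
    have hfr : (Nat.factorial r : ℚ) ≠ 0 := Nat.cast_ne_zero.mpr (Nat.factorial_ne_zero _)
    have hfs : (Nat.factorial sn : ℚ) ≠ 0 := Nat.cast_ne_zero.mpr (Nat.factorial_ne_zero _)
    have hN : ((r : ℚ) + (sn : ℚ) + 3) ≠ 0 := by positivity
    push_cast
    field_simp
    linear_combination ((Nat.factorial r : ℚ) * (Nat.factorial sn : ℚ)) * halg
  · -- n u ≥ 2
    have hzero : ∑ j, P j u * (n u : ℚ) *
        PowerSeries.coeff 1 (q (fun kk => n kk - (if kk = u then 1 else 0) + if kk = j then 1 else 0))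
        = 0 := by
      apply Finset.sum_eq_zero
      intro j _
      have hcz : PowerSeries.coeff 1
          (q (fun kk => n kk - (if kk = u then 1 else 0) + if kk = j then 1 else 0)) = 0 := by
        apply L1 hrec _ _ u v w huv huw hvw _ (hpos j v (Ne.symm huv) hv)
          (hpos j w (Ne.symm huw) hw) rfl
        simp; omega
      rw [hcz, mul_zero]
    rw [hzero, add_zero, hq h1]
    obtain ⟨t, ht⟩ : ∃ t, n u = t + 2 := ⟨n u - 2, by omega⟩
    have hsub : ∑ i, n i = (∑ i, (n i - if i = u then 1 else 0)) + 1 := sum_sub n u hu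
    have e3 : ∑ i, (n i - if i = u then 1 else 0) = t + r + sn + 3 := by omega
    have e4 : ∑ i, n i = t + r + sn + 4 := by omega
    simp only [G3, if_true, if_neg (Ne.symm huv), if_neg (Ne.symm huw), Nat.sub_zero]
    rw [e3, e4, ht, hr, hs]
    rw [show t + 2 - 1 - 1 = t from by omega, show t + 2 - 1 = t + 1 from by omega,
      show r + 1 - 1 = r from by omega, show sn + 1 - 1 = sn from by omega,
      show t + r + sn + 3 - 1 = t + r + sn + 2 from by omega,
      show t + r + sn + 4 - 1 = (t + r + sn + 2) + 1 from by omega,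
      Nat.factorial_succ (t + r + sn + 2), Nat.factorial_succ t]
    have hfz1 : (Nat.factorial (t + r + sn + 2) : ℚ) ≠ 0 :=
      Nat.cast_ne_zero.mpr (Nat.factorial_ne_zero _)
    have hfz2 : (Nat.factorial t : ℚ) ≠ 0 := Nat.cast_ne_zero.mpr (Nat.factorial_ne_zero _)
    push_cast
    field_simp
    ring

include hbound in
lemma F2 : ∀ (S : ℕ) (n : Fin K → ℕ) (u v w : Fin K), u ≠ v → u ≠ w → v ≠ w →
    (∀ k, k ≠ u → k ≠ v → k ≠ w → n k = 0) → 0 < n u → 0 < n v → 0 < n w →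
    pI u * P u v = pI v * P v u → pI u * P u w = pI w * P w u →
    pI v * P v w = pI w * P w v →
    ∑ i, n i = S → PowerSeries.coeff 2 (q n) = G3 P pI n u v w := by
  intro S
  induction S using Nat.strong_induction_on with
  | _ S IH =>
  intro n u v w huv huw hvw h0 hu hv hw hrUV hrUW hrVW hS
  have hsum : ∑ i, n i = n u + n v + n w := sum3' u v w huv huw hvw h0
  have h2 : 2 ≤ ∑ i, n i := by omega
  have h := recS hrec n h2 1
  simp only [show (1:ℕ) + 1 = 2 from rfl] at h
  have hc1 : PowerSeries.coeff 1 (q n) = 0 := L1 hrec _ n u v w huv huw hvw hu hv hw rfl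
  rw [hc1, mul_zero, add_zero] at h
  rw [sum3' (f := fun i => (n i : ℚ) * ((n i : ℚ) - 1) * PowerSeries.coeff 2
      (q (fun kk => n kk - if kk = i then 1 else 0)))
    u v w huv huw hvw (fun i h1 h2 h3 => by simp [h0 i h1 h2 h3])] at h
  rw [sum3' (f := fun i => ∑ j, P j i * (n i : ℚ) * PowerSeries.coeff 1
      (q (fun kk => n kk - (if kk = i then 1 else 0) + if kk = j then 1 else 0)))
    u v w huv huw hvw
    (fun i h1 h2 h3 => Finset.sum_eq_zero (fun j _ => by simp [h0 i h1 h2 h3]))] at h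
  have hsubpos : ∀ i x, 0 < n x → x ≠ i → 0 < n x - (if x = i then 1 else 0) := by
    intro i x hx hxi; simp [hxi]; exact hx
  have hqu : 2 ≤ n u → PowerSeries.coeff 2 (q (fun kk => n kk - if kk = u then 1 else 0))
      = G3 P pI (fun kk => n kk - if kk = u then 1 else 0) u v w := by
    intro hn2
    have hsub := sum_sub n u hu
    apply IH (S - 1) (by omega) _ u v w huv huw hvw _ _
      (hsubpos u v hv (Ne.symm huv)) (hsubpos u w hw (Ne.symm huw)) hrUV hrUW hrVW (by omega)
    · intro k h1 h2 h3; simp [h0 k h1 h2 h3]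
    · simp; omega
  have hqv : 2 ≤ n v → PowerSeries.coeff 2 (q (fun kk => n kk - if kk = v then 1 else 0))
      = G3 P pI (fun kk => n kk - if kk = v then 1 else 0) v w u := by
    intro hn2
    have hsub := sum_sub n v hv
    have h' : PowerSeries.coeff 2 (q (fun kk => n kk - if kk = v then 1 else 0))
        = G3 P pI (fun kk => n kk - if kk = v then 1 else 0) u v w := by
      apply IH (S - 1) (by omega) _ u v w huv huw hvw _
        (hsubpos v u hu huv) _ (hsubpos v w hw (Ne.symm hvw)) hrUV hrUW hrVW (by omega)
      · intro k h1 h2 h3; simp [h0 k h1 h2 h3]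
      · simp; omega
    rw [h', G3cyc]
  have hqw : 2 ≤ n w → PowerSeries.coeff 2 (q (fun kk => n kk - if kk = w then 1 else 0))
      = G3 P pI (fun kk => n kk - if kk = w then 1 else 0) w u v := by
    intro hn2
    have hsub := sum_sub n w hw
    have h' : PowerSeries.coeff 2 (q (fun kk => n kk - if kk = w then 1 else 0))
        = G3 P pI (fun kk => n kk - if kk = w then 1 else 0) u v w := by
      apply IH (S - 1) (by omega) _ u v w huv huw hvw _
        (hsubpos w u hu huw) (hsubpos w v hv hvw) _ hrUV hrUW hrVW (by omega)
      · intro k h1 h2 h3; simp [h0 k h1 h2 h3]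
      · simp; omega
    rw [h', G3cyc, G3cyc]
  have cu := contrib2 hbound hrec n u v w huv huw hvw h0 hu hv hw hrVW hqu
  have cv := contrib2 hbound hrec n v w u hvw (Ne.symm huv) (Ne.symm huw)
    (fun k h1 h2 h3 => h0 k h3 h1 h2) hv hw hu hrUW.symm hqv
  have cw := contrib2 hbound hrec n w u v (Ne.symm huw) (Ne.symm hvw) huv
    (fun k h1 h2 h3 => h0 k h2 h3 h1) hw hu hv hrUV hqw
  have hN1 : ((∑ i, n i : ℕ) : ℚ) * (((∑ i, n i : ℕ) : ℚ) - 1) ≠ 0 := by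
    have : (2:ℚ) ≤ ((∑ i, n i : ℕ) : ℚ) := by exact_mod_cast h2
    nlinarith
  have hfz : (Nat.factorial (∑ i, n i - 1) : ℚ) ≠ 0 :=
    Nat.cast_ne_zero.mpr (Nat.factorial_ne_zero _)
  have hMcast : ((∑ i, n i : ℕ) : ℚ) = (n u : ℚ) + (n v : ℚ) + (n w : ℚ) := by
    rw [hsum]; push_cast; ring
  have hu1 : (1:ℚ) ≤ (n u : ℚ) := by exact_mod_cast hu
  have hv1 : (1:ℚ) ≤ (n v : ℚ) := by exact_mod_cast hv
  have hw1 : (1:ℚ) ≤ (n w : ℚ) := by exact_mod_cast hw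
  have key : (n u : ℚ) * ((Nat.factorial (n u - 1) : ℚ) * (Nat.factorial (n v - 1) : ℚ) *
        (Nat.factorial (n w - 1) : ℚ) / (Nat.factorial (∑ i, n i - 1) : ℚ)) *
        (((n u : ℚ) - 1) * pI u * P u v * P u w + (n v : ℚ) * pI v * P v u * P v w +
          (n w : ℚ) * pI w * P w u * P w v)
      + (n v : ℚ) * ((Nat.factorial (n v - 1) : ℚ) * (Nat.factorial (n w - 1) : ℚ) *
        (Nat.factorial (n u - 1) : ℚ) / (Nat.factorial (∑ i, n i - 1) : ℚ)) *
        (((n v : ℚ) - 1) * pI v * P v w * P v u + (n w : ℚ) * pI w * P w v * P w u +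
          (n u : ℚ) * pI u * P u v * P u w)
      + (n w : ℚ) * ((Nat.factorial (n w - 1) : ℚ) * (Nat.factorial (n u - 1) : ℚ) *
        (Nat.factorial (n v - 1) : ℚ) / (Nat.factorial (∑ i, n i - 1) : ℚ)) *
        (((n w : ℚ) - 1) * pI w * P w u * P w v + (n u : ℚ) * pI u * P u w * P u v +
          (n v : ℚ) * pI v * P v w * P v u)
      = ((∑ i, n i : ℕ) : ℚ) * (((∑ i, n i : ℕ) : ℚ) - 1) * G3 P pI n u v w := by
    simp only [G3]
    rw [hMcast]
    have hNuvw : (n u : ℚ) + (n v : ℚ) + (n w : ℚ) ≠ 0 := by linarith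
    field_simp
    ring
  apply mul_left_cancel₀ hN1
  rw [h, ← key]
  linarith [cu, cv, cw]

end
end S15


/-- For a sample configuration `n = n_a e_a + n_b e_b + n_c e_c` with three distinct
observed alleles, if `P` restricted to `{a, b, c}` is irreducible and reversible, then
the coefficient of `θ²` in the Taylor expansion of the sampling probability about `θ = 0`
equals `Λ(n) · [(n_a/n) π_a P_{ab} P_{ac} + (n_b/n) π_b P_{ba} P_{bc}
+ (n_c/n) π_c P_{ca} P_{cb}]` with `Λ(n) = (n_a-1)!(n_b-1)!(n_c-1)!/(n-1)!`. -/
theorem stmt15 (K : ℕ) (P : Fin K → Fin K → ℚ) (pI : Fin K → ℚ)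
    (q : (Fin K → ℕ) → PowerSeries ℚ)
    (hbound : ∀ a : Fin K, q (fun k => if k = a then 1 else 0) = PowerSeries.C (pI a))
    (hrec : ∀ n : Fin K → ℕ, 2 ≤ ∑ i, n i →
      (PowerSeries.C (((∑ i, n i : ℕ) : ℚ) * (((∑ i, n i : ℕ) : ℚ) - 1)) +
          PowerSeries.C (((∑ i, n i : ℕ) : ℚ)) * PowerSeries.X) * q n =
        (∑ i, PowerSeries.C ((n i : ℚ) * ((n i : ℚ) - 1)) *
            q (fun k => n k - if k = i then 1 else 0)) +
          PowerSeries.X * ∑ i, ∑ j, PowerSeries.C (P j i * (n i : ℚ)) *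
            q (fun k => n k - (if k = i then 1 else 0) + if k = j then 1 else 0))
    (n : Fin K → ℕ) (a b c : Fin K) (hab : a ≠ b) (hac : a ≠ c) (hbc : b ≠ c)
    (hsupp : Finset.univ.filter (fun i => 0 < n i) = {a, b, c})
    (hrev : ∀ i ∈ ({a, b, c} : Finset (Fin K)), ∀ j ∈ ({a, b, c} : Finset (Fin K)),
      pI i * P i j = pI j * P j i)
    (hirr : ∀ i ∈ ({a, b, c} : Finset (Fin K)), ∀ j ∈ ({a, b, c} : Finset (Fin K)),
      i ≠ j → ∃ l : List (Fin K), (∀ x ∈ l, x ∈ ({a, b, c} : Finset (Fin K))) ∧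
        List.Chain (fun u v => P u v ≠ 0) i (l ++ [j])) :
    PowerSeries.coeff 2 (q n) =
      ((Nat.factorial (n a - 1) : ℚ) * (Nat.factorial (n b - 1) : ℚ) *
          (Nat.factorial (n c - 1) : ℚ) / (Nat.factorial ((∑ i, n i) - 1) : ℚ)) *
        (((n a : ℚ) / ((∑ i, n i : ℕ) : ℚ)) * pI a * P a b * P a c +
          ((n b : ℚ) / ((∑ i, n i : ℕ) : ℚ)) * pI b * P b a * P b c +
          ((n c : ℚ) / ((∑ i, n i : ℕ) : ℚ)) * pI c * P c a * P c b) := by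
  have hmem : ∀ x : Fin K, 0 < n x ↔ (x = a ∨ x = b ∨ x = c) := by
    intro x
    have hx := Finset.ext_iff.mp hsupp x
    simpa using hx
  have h0 : ∀ k, k ≠ a → k ≠ b → k ≠ c → n k = 0 := by
    intro k h1 h2 h3
    by_contra hne
    have := (hmem k).mp (Nat.pos_of_ne_zero hne)
    tauto
  have ha : 0 < n a := (hmem a).mpr (Or.inl rfl)
  have hb : 0 < n b := (hmem b).mpr (Or.inr (Or.inl rfl))
  have hc : 0 < n c := (hmem c).mpr (Or.inr (Or.inr rfl))
  have hrAB := hrev a (by simp) b (by simp)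
  have hrAC := hrev a (by simp) c (by simp)
  have hrBC := hrev b (by simp) c (by simp)
  have h := S15.F2 hbound hrec (∑ i, n i) n a b c hab hac hbc h0 ha hb hc hrAB hrAC hrBC rfl
  rw [h]
  simp only [S15.G3]
  ring
end
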